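/- arXiv:1512.01781 — 7 statements merged into one kernel-verified Lean document; each statement's English description precedes it below -/
import Mathlib

section
/- Let G = (V, E) be a multigraph that is the homomorphic image of a connected multigraph H = (W, F) of maximum degree at most k by an onto function φ : W → V. Then there exist a tree H' = (W', F') of maximum degree at most k and an onto function ψ : W' → V such that G is the homomorphic image of H' by ψ and, for every v ∈ V, the ψ-multiplicity |ψ⁻¹(v)| is at least the φ-multiplicity |φ⁻¹(v)|. In particular, every k-trail is the homomorphic image of a k-tree. -/
/-- A multigraph on vertex type `V`: a finite multiset of unordered pairs of
vertices (loops and parallel edges allowed). -/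
structure Multigraph (V : Type) where
  edges : Multiset (Sym2 V)

namespace Multigraph

open Classical in
/-- The degree of a vertex: number of edge-endpoints at `v`, a loop counting twice. -/
noncomputable def deg {V : Type} (G : Multigraph V) (v : V) : ℕ :=
  (G.edges.map fun e => if e = Sym2.diag v then 2 else if v ∈ e then 1 else 0).sum

/-- Adjacency in a multigraph. -/
def Adj {V : Type} (G : Multigraph V) (u v : V) : Prop := s(u, v) ∈ G.edges

/-- A multigraph is connected if it has a vertex and any two vertices are joined by a walk. -/
def Connected {V : Type} (G : Multigraph V) : Prop :=
  Nonempty V ∧ ∀ u v : V, Relation.ReflTransGen G.Adj u v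

open Classical in
/-- `G` is the homomorphic image of `H` by the onto function `φ`: for all `u v`,
the number of edges of `G` between `u` and `v` equals the number of edges of `H`
whose endpoints are mapped by `φ` to `{u, v}`. -/
def IsHomImage {V W : Type} (G : Multigraph V) (H : Multigraph W) (φ : W → V) : Prop :=
  Function.Surjective φ ∧
    ∀ u v : V, G.edges.count s(u, v) = (H.edges.map (Sym2.map φ)).count s(u, v)

/-- A tree: a connected multigraph with `|F| = |W| - 1`. -/
def IsTree {W : Type} (H : Multigraph W) : Prop :=
  Connected H ∧ Multiset.card H.edges + 1 = Nat.card W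

/-- A multigraph is a `k`-trail if it is the homomorphic image of a (finite)
connected multigraph of maximum degree at most `k`. -/
def IsKTrail {V : Type} (G : Multigraph V) (k : ℕ) : Prop :=
  ∃ (W : Type) (_ : Finite W) (H : Multigraph W) (φ : W → V),
    Connected H ∧ (∀ w, H.deg w ≤ k) ∧ IsHomImage G H φ

/-- `G` contains a `k`-trail if some submultiset `U` of its edges gives a `k`-trail `(V, U)`. -/
def ContainsKTrail {V : Type} (G : Multigraph V) (k : ℕ) : Prop :=
  ∃ U : Multiset (Sym2 V), U ≤ G.edges ∧ IsKTrail (Multigraph.mk U) k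

/-- `lam` is a feasible multiplicity vector for `G`. -/
def FeasibleMult {V : Type} (G : Multigraph V) (lam : V → ℕ) : Prop :=
  ∃ (W : Type) (_ : Finite W) (H : Multigraph W) (φ : W → V),
    Connected H ∧ IsHomImage G H φ ∧ ∀ v : V, Nat.card (φ ⁻¹' {v}) = lam v

end Multigraph

open Multigraph


section Aux

open Classical in
/-- weight used in the degree definition -/
noncomputable def KT.wt {V : Type} (v : V) (e : Sym2 V) : ℕ :=
  if e = Sym2.diag v then 2 else if v ∈ e then 1 else 0

lemma KT.deg_eq {V : Type} (G : Multigraph V) (v : V) :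
    G.deg v = (G.edges.map (KT.wt v)).sum := rfl

lemma KT.reflTransGen_of_le {α : Type} {r s : α → α → Prop}
    (h : ∀ a b, r a b → Relation.ReflTransGen s a b) {a b : α}
    (hr : Relation.ReflTransGen r a b) : Relation.ReflTransGen s a b := by
  induction hr with
  | refl => exact Relation.ReflTransGen.refl
  | tail _ h2 ih => exact ih.trans (h _ _ h2)

/-- deleting a non-bridge edge of a connected simple graph keeps it connected -/
lemma KT.delete_nonbridge_connected {X : Type} {G : SimpleGraph X} (hG : G.Connected)
    {a b : X} (hab : G.Adj a b)
    (hr : (G \ SimpleGraph.fromEdgeSet {s(a, b)}).Reachable a b) :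
    (G \ SimpleGraph.fromEdgeSet {s(a, b)}).Connected := by
  haveI : Nonempty X := hG.nonempty
  set G' := G \ SimpleGraph.fromEdgeSet {s(a, b)} with hG'
  have hstep : ∀ x y : X, G.Adj x y → G'.Reachable x y := by
    intro x y hxy
    by_cases hxe : s(x, y) = s(a, b)
    · rw [Sym2.eq_iff] at hxe
      rcases hxe with ⟨rfl, rfl⟩ | ⟨rfl, rfl⟩
      · exact hr
      · exact hr.symm
    · refine SimpleGraph.Adj.reachable ?_
      rw [hG', SimpleGraph.sdiff_adj, SimpleGraph.fromEdgeSet_adj]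
      refine ⟨hxy, ?_⟩
      rw [Set.mem_singleton_iff]
      tauto
  refine SimpleGraph.Connected.mk ?_
  intro u v
  have h0 := hG.preconnected u v
  rw [SimpleGraph.reachable_iff_reflTransGen] at h0
  induction h0 with
  | refl => exact SimpleGraph.Reachable.refl _
  | tail _ h2 ih => exact ih.trans (hstep _ _ h2)

lemma KT.connected_card_le {X : Type} [Fintype X] (G : SimpleGraph X)
    [Fintype G.edgeSet] (hG : G.Connected) :
    Fintype.card X ≤ G.edgeFinset.card + 1 := by
  classical
  haveI : Fintype (SimpleGraph X) := Fintype.ofFinite _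
  obtain ⟨T, hT, hmin⟩ :=
    (Finset.univ.filter fun G' : SimpleGraph X => G' ≤ G ∧ G'.Connected).exists_minimal
      ⟨G, by simp [hG]⟩
  simp only [Finset.mem_filter, Finset.mem_univ, true_and] at hT hmin
  have hac : T.IsAcyclic := by
    rw [SimpleGraph.isAcyclic_iff_forall_adj_isBridge]
    intro a b hab
    by_contra hbr
    have hreach : (T \ SimpleGraph.fromEdgeSet {s(a, b)}).Reachable a b := by
      by_contra hnr
      exact hbr hnr
    have hconn' := KT.delete_nonbridge_connected hT.2 hab hreach
    have hlt : T \ SimpleGraph.fromEdgeSet {s(a, b)} < T := by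
      refine lt_of_le_of_ne sdiff_le ?_
      intro heq
      have : (T \ SimpleGraph.fromEdgeSet {s(a, b)}).Adj a b := by rw [heq]; exact hab
      rw [SimpleGraph.sdiff_adj, SimpleGraph.fromEdgeSet_adj] at this
      exact this.2 ⟨rfl, hab.ne⟩
    exact lt_irrefl _ (lt_of_lt_of_le hlt (hmin ⟨le_trans sdiff_le hT.1, hconn'⟩ hlt.le))
  have htree : T.IsTree := ⟨hT.2, hac⟩
  haveI : Fintype T.edgeSet := Fintype.ofFinite _
  have hcard := htree.card_edgeFinset
  have hsub : T.edgeFinset ⊆ G.edgeFinset := SimpleGraph.edgeFinset_mono hT.1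
  have := Finset.card_le_card hsub
  omega

lemma KT.exists_cycle_edge {X : Type} [Fintype X] (G : SimpleGraph X)
    [Fintype G.edgeSet] (hG : G.Connected) (hcard : Fintype.card X ≤ G.edgeFinset.card) :
    ∃ a b : X, G.Adj a b ∧ (G \ SimpleGraph.fromEdgeSet {s(a, b)}).Connected := by
  classical
  have hnac : ¬ G.IsAcyclic := by
    intro h
    have htree : G.IsTree := ⟨hG, h⟩
    have := htree.card_edgeFinset
    omega
  have : ¬ ∀ (a b : X), G.Adj a b → G.IsBridge s(a, b) := by
    intro hall
    exact hnac (SimpleGraph.isAcyclic_iff_forall_adj_isBridge.2 fun a b hab => hall a b hab)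
  push_neg at this
  obtain ⟨a, b, hab, hbr⟩ := this
  have hreach : (G \ SimpleGraph.fromEdgeSet {s(a, b)}).Reachable a b := by
    by_contra hnr
    exact hbr hnr
  exact ⟨a, b, hab, KT.delete_nonbridge_connected hG hab hreach⟩

/-- the simple graph underlying a multigraph -/
def KT.SG {W : Type} (H : Multigraph W) : SimpleGraph W where
  Adj a b := a ≠ b ∧ s(a, b) ∈ H.edges
  symm := ⟨by
    intro a b ⟨hne, hm⟩
    exact ⟨hne.symm, by rwa [Sym2.eq_swap]⟩⟩
  loopless := ⟨fun a h => h.1 rfl⟩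

lemma KT.sg_connected {W : Type} {H : Multigraph W} (h : Connected H) :
    (KT.SG H).Connected := by
  haveI : Nonempty W := h.1
  refine SimpleGraph.Connected.mk ?_
  · intro u v
    have h0 := h.2 u v
    induction h0 with
    | refl => exact SimpleGraph.Reachable.refl _
    | tail _ h2 ih =>
      rename_i x y _
      by_cases hxy : x = y
      · exact hxy ▸ ih
      · exact ih.trans (SimpleGraph.Adj.reachable ⟨hxy, h2⟩)

lemma KT.mg_card_le {W : Type} [Finite W] (H : Multigraph W) (h : Connected H) :
    Nat.card W ≤ Multiset.card H.edges + 1 := by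
  classical
  haveI : Fintype W := Fintype.ofFinite W
  haveI : Fintype (KT.SG H).edgeSet := Fintype.ofFinite _
  have h1 := KT.connected_card_le (KT.SG H) (KT.sg_connected h)
  have h2 : (KT.SG H).edgeFinset ⊆ H.edges.toFinset := by
    intro e he
    induction e using Sym2.ind with
    | _ a b =>
      rw [SimpleGraph.mem_edgeFinset, SimpleGraph.mem_edgeSet] at he
      exact Multiset.mem_toFinset.2 he.2
  have h3 := Finset.card_le_card h2
  have h4 := Multiset.toFinset_card_le H.edges
  have h5 : Nat.card W = Fintype.card W := Nat.card_eq_fintype_card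
  omega

lemma KT.exists_removable {W : Type} [Finite W] (H : Multigraph W) (hc : Connected H)
    (hcard : Nat.card W ≤ Multiset.card H.edges) :
    ∃ (u w0 : W) (E0 : Multiset (Sym2 W)), H.edges = s(u, w0) ::ₘ E0 ∧
      Connected (Multigraph.mk E0) := by
  classical
  by_cases hloop : ∃ e ∈ H.edges, e.IsDiag
  · obtain ⟨e, he, hd⟩ := hloop
    obtain ⟨u, w0, he, hd⟩ := (Sym2.exists (f := fun e => e ∈ H.edges ∧ e.IsDiag)).mp ⟨e, he, hd⟩
    refine ⟨u, w0, H.edges.erase s(u, w0), (Multiset.cons_erase he).symm, hc.1, fun x y => ?_⟩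
    refine KT.reflTransGen_of_le (fun a b hab => ?_) (hc.2 x y)
    by_cases hxe : s(a, b) = s(u, w0)
    · have : a = b := Sym2.mk_isDiag_iff.1 (hxe ▸ hd : (s(a,b) : Sym2 W).IsDiag)
      exact this ▸ Relation.ReflTransGen.refl
    · exact Relation.ReflTransGen.single ((Multiset.mem_erase_of_ne hxe).2 hab)
  · by_cases hpar : ∃ e : Sym2 W, 2 ≤ H.edges.count e
    · obtain ⟨e, hcnt⟩ := hpar
      obtain ⟨u, w0, hcnt⟩ := (Sym2.exists (f := fun e => 2 ≤ H.edges.count e)).mp ⟨e, hcnt⟩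
      have hmem : s(u, w0) ∈ H.edges := Multiset.count_pos.1 (by omega)
      refine ⟨u, w0, H.edges.erase s(u, w0), (Multiset.cons_erase hmem).symm, hc.1,
        fun x y => ?_⟩
      refine KT.reflTransGen_of_le (fun a b hab => Relation.ReflTransGen.single ?_) (hc.2 x y)
      by_cases hxe : s(a, b) = s(u, w0)
      · rw [Multigraph.Adj]
        rw [hxe]
        rw [← Multiset.count_pos, Multiset.count_erase_self]
        omega
      · exact (Multiset.mem_erase_of_ne hxe).2 hab
    · push_neg at hloop hpar
      have hnodup : H.edges.Nodup := Multiset.nodup_iff_count_le_one.2 fun e => by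
        have := hpar e; omega
      haveI : Fintype W := Fintype.ofFinite W
      haveI : Fintype (KT.SG H).edgeSet := Fintype.ofFinite _
      have hEF : (KT.SG H).edgeFinset = H.edges.toFinset := by
        ext e
        induction e using Sym2.ind with
        | _ a b =>
          rw [SimpleGraph.mem_edgeFinset, SimpleGraph.mem_edgeSet, Multiset.mem_toFinset]
          constructor
          · exact fun h => h.2
          · intro hm
            refine ⟨fun hab => ?_, hm⟩
            exact hloop _ hm (hab ▸ Sym2.mk_isDiag_iff.2 rfl)
      have hcards : (KT.SG H).edgeFinset.card = Multiset.card H.edges := by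
        rw [hEF, Multiset.toFinset_card_eq_card_iff_nodup.2 hnodup]
      have h5 : Nat.card W = Fintype.card W := Nat.card_eq_fintype_card
      obtain ⟨a, b, hab, hconn'⟩ := KT.exists_cycle_edge (KT.SG H) (KT.sg_connected hc)
        (by omega)
      refine ⟨a, b, H.edges.erase s(a, b), (Multiset.cons_erase hab.2).symm, hc.1,
        fun x y => ?_⟩
      have h0 := hconn'.preconnected x y
      rw [SimpleGraph.reachable_iff_reflTransGen] at h0
      refine KT.reflTransGen_of_le (fun c d hcd => Relation.ReflTransGen.single ?_) h0
      rw [SimpleGraph.sdiff_adj, SimpleGraph.fromEdgeSet_adj] at hcd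
      have hne : s(c, d) ≠ s(a, b) := by
        intro hcd2
        exact hcd.2 ⟨Set.mem_singleton_iff.2 hcd2, hcd.1.1⟩
      exact (Multiset.mem_erase_of_ne hne).2 hcd.1.2

end Aux

section Main

lemma KT.wt_map_inl {W : Type} (x : W) (g : Sym2 W) :
    KT.wt (Sum.inl x : W ⊕ Unit) (Sym2.map Sum.inl g) = KT.wt x g := by
  classical
  unfold KT.wt
  have h1 : (Sym2.map (Sum.inl : W → W ⊕ Unit) g = Sym2.diag (Sum.inl x)) ↔ g = Sym2.diag x := by
    constructor
    · intro hh
      refine Sym2.map.injective (f := (Sum.inl : W → W ⊕ Unit)) Sum.inl_injective ?_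
      rw [hh, Sym2.diag, Sym2.diag, Sym2.map_pair_eq]
    · intro hh
      rw [hh, Sym2.diag, Sym2.diag, Sym2.map_pair_eq]
  have h2 : ((Sum.inl x : W ⊕ Unit) ∈ Sym2.map Sum.inl g) ↔ x ∈ g := by
    rw [Sym2.mem_map]
    constructor
    · rintro ⟨a, ha, hax⟩
      rwa [← Sum.inl_injective hax]
    · intro hx
      exact ⟨x, hx, rfl⟩
  by_cases hd : g = Sym2.diag x
  · rw [if_pos (h1.2 hd), if_pos hd]
  · rw [if_neg (fun c => hd (h1.1 c)), if_neg hd]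
    by_cases hm : x ∈ g
    · rw [if_pos (h2.2 hm), if_pos hm]
    · rw [if_neg (fun c => hm (h2.1 c)), if_neg hm]

lemma KT.deg_split_le {W : Type} {H : Multigraph W} {E0 : Multiset (Sym2 W)} {u w0 : W}
    (hE : H.edges = s(u, w0) ::ₘ E0) (x : W) :
    Multigraph.deg
      ⟨E0.map (Sym2.map Sum.inl) + {s(Sum.inl u, Sum.inr ())}⟩
      (Sum.inl x) ≤ H.deg x := by
  classical
  rw [KT.deg_eq, KT.deg_eq, hE]
  show (((E0.map (Sym2.map Sum.inl)
    + {s(Sum.inl u, Sum.inr ())}).map (KT.wt (Sum.inl x))).sum) ≤ _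
  rw [Multiset.map_add, Multiset.sum_add, Multiset.map_map, Multiset.map_singleton,
    Multiset.sum_singleton, Multiset.map_cons, Multiset.sum_cons]
  have hmc : E0.map (KT.wt (Sum.inl x) ∘ Sym2.map Sum.inl) = E0.map (KT.wt x) :=
    Multiset.map_congr rfl (fun g _ => KT.wt_map_inl x g)
  rw [hmc]
  have hnew : KT.wt (Sum.inl x : W ⊕ Unit) s(Sum.inl u, Sum.inr ()) ≤ KT.wt x s(u, w0) := by
    unfold KT.wt
    have hnd : (s(Sum.inl u, Sum.inr ()) : Sym2 (W ⊕ Unit)) ≠ Sym2.diag (Sum.inl x) := by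
      intro hh
      rw [Sym2.diag, Sym2.eq_iff] at hh
      rcases hh with ⟨h1, h2⟩ | ⟨h1, h2⟩ <;> simp at h1 h2
    rw [if_neg hnd]
    by_cases hx : x = u
    · subst hx
      rw [if_pos (Sym2.mem_mk_left _ _)]
      split_ifs with hh1 hh2
      · omega
      · omega
      · exact absurd (Sym2.mem_mk_left x w0) hh2
    · have hm : (Sum.inl x : W ⊕ Unit) ∉ s(Sum.inl u, Sum.inr ()) := by
        rw [Sym2.mem_iff]
        rintro (hh | hh)
        · exact hx (Sum.inl_injective hh)
        · simp at hh
      rw [if_neg hm]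
      omega
  omega

lemma KT.deg_split_inr {W : Type} (E0 : Multiset (Sym2 W)) (u : W) :
    Multigraph.deg
      ⟨E0.map (Sym2.map Sum.inl) + {s(Sum.inl u, Sum.inr ())}⟩
      (Sum.inr ()) = 1 := by
  classical
  rw [KT.deg_eq]
  show (((E0.map (Sym2.map Sum.inl)
    + {s(Sum.inl u, Sum.inr ())}).map (KT.wt (Sum.inr ()))).sum) = 1
  rw [Multiset.map_add, Multiset.sum_add, Multiset.map_map, Multiset.map_singleton,
    Multiset.sum_singleton]
  have h0 : ((E0.map (KT.wt (Sum.inr ()) ∘ Sym2.map Sum.inl))).sum = 0 := by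
    refine Multiset.sum_eq_zero ?_
    intro m hm
    rw [Multiset.mem_map] at hm
    obtain ⟨g, _, rfl⟩ := hm
    show KT.wt (Sum.inr () : W ⊕ Unit) (Sym2.map Sum.inl g) = 0
    unfold KT.wt
    have h1 : Sym2.map (Sum.inl : W → W ⊕ Unit) g ≠ Sym2.diag (Sum.inr ()) := by
      intro hh
      have hmem : (Sum.inr () : W ⊕ Unit) ∈ Sym2.map Sum.inl g := by
        rw [hh, Sym2.diag]
        exact Sym2.mem_mk_left _ _
      rw [Sym2.mem_map] at hmem
      obtain ⟨a, _, ha⟩ := hmem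
      simp at ha
    have h2 : (Sum.inr () : W ⊕ Unit) ∉ Sym2.map Sum.inl g := by
      rw [Sym2.mem_map]
      rintro ⟨a, _, ha⟩
      simp at ha
    rw [if_neg h1, if_neg h2]
  rw [h0]
  have h1 : (s(Sum.inl u, Sum.inr ()) : Sym2 (W ⊕ Unit)) ≠ Sym2.diag (Sum.inr ()) := by
    intro hh
    rw [Sym2.diag, Sym2.eq_iff] at hh
    rcases hh with ⟨hh, _⟩ | ⟨hh, _⟩ <;> simp at hh
  show 0 + KT.wt (Sum.inr () : W ⊕ Unit) s(Sum.inl u, Sum.inr ()) = 1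
  unfold KT.wt
  rw [if_neg h1, if_pos (Sym2.mem_mk_right _ _)]

lemma KT.one_le_deg {W : Type} {H : Multigraph W} {E0 : Multiset (Sym2 W)} {u w0 : W}
    (hE : H.edges = s(u, w0) ::ₘ E0) : 1 ≤ H.deg u := by
  classical
  rw [KT.deg_eq, hE, Multiset.map_cons, Multiset.sum_cons]
  have h1 : 1 ≤ KT.wt u s(u, w0) := by
    unfold KT.wt
    split_ifs with hh1 hh2
    · omega
    · omega
    · exact absurd (Sym2.mem_mk_left u w0) hh2
  omega

end Main

lemma KT.main {V : Type} [Finite V] (k : ℕ) (G : Multigraph V) :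
    ∀ (n : ℕ) (W : Type) (_ : Finite W) (H : Multigraph W) (φ : W → V),
      Connected H → (∀ w, H.deg w ≤ k) → IsHomImage G H φ →
      Multiset.card H.edges + 1 - Nat.card W ≤ n →
      ∃ (W' : Type) (_ : Finite W') (H' : Multigraph W') (ψ : W' → V),
        IsTree H' ∧ (∀ w, H'.deg w ≤ k) ∧ IsHomImage G H' ψ ∧
        ∀ v, Nat.card (φ ⁻¹' {v}) ≤ Nat.card (ψ ⁻¹' {v}) := by
  intro n
  induction n with
  | zero =>
    intro W _ H φ hconn hdeg h hle
    have hub := KT.mg_card_le H hconn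
    have heq : Multiset.card H.edges + 1 = Nat.card W := by omega
    exact ⟨W, ‹Finite W›, H, φ, ⟨hconn, heq⟩, hdeg, h, fun v => le_rfl⟩
  | succ n ih =>
    intro W _ H φ hconn hdeg h hle
    classical
    have hub := KT.mg_card_le H hconn
    by_cases heq : Multiset.card H.edges + 1 = Nat.card W
    · exact ⟨W, ‹Finite W›, H, φ, ⟨hconn, heq⟩, hdeg, h, fun v => le_rfl⟩
    · have hlt : Nat.card W ≤ Multiset.card H.edges := by omega
      obtain ⟨u, w0, E0, hE, hce⟩ := KT.exists_removable H hconn hlt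
      set H' : Multigraph (W ⊕ Unit) :=
        ⟨E0.map (Sym2.map Sum.inl) + {s(Sum.inl u, Sum.inr ())}⟩ with hH'
      set φ' : W ⊕ Unit → V := Sum.elim φ (fun _ => φ w0) with hφ'
      have hadj_inl : ∀ x y : W, Multigraph.Adj (Multigraph.mk E0) x y →
          H'.Adj (Sum.inl x) (Sum.inl y) := by
        intro x y hxy
        show s(Sum.inl x, Sum.inl y) ∈ H'.edges
        rw [hH']
        refine Multiset.mem_add.2 (Or.inl ?_)
        rw [← Sym2.map_pair_eq]
        exact Multiset.mem_map_of_mem _ hxy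
      have hreach_inl : ∀ x y : W, Relation.ReflTransGen H'.Adj (Sum.inl x) (Sum.inl y) :=
        fun x y => Relation.ReflTransGen.lift Sum.inl (hadj_inl) x y (hce.2 x y)
      have hadj_new : H'.Adj (Sum.inl u) (Sum.inr ()) := by
        show s(Sum.inl u, Sum.inr ()) ∈ H'.edges
        rw [hH']
        exact Multiset.mem_add.2 (Or.inr (Multiset.mem_singleton.2 rfl))
      have hadj_new' : H'.Adj (Sum.inr ()) (Sum.inl u) := by
        show s(Sum.inr (), Sum.inl u) ∈ H'.edges
        rw [Sym2.eq_swap]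
        exact hadj_new
      have hconn' : Connected H' := by
        refine ⟨⟨Sum.inr ()⟩, ?_⟩
        have hto : ∀ z : W ⊕ Unit, Relation.ReflTransGen H'.Adj z (Sum.inl u) := by
          rintro (x | ⟨⟩)
          · exact hreach_inl x u
          · exact Relation.ReflTransGen.single hadj_new'
        have hfrom : ∀ z : W ⊕ Unit, Relation.ReflTransGen H'.Adj (Sum.inl u) z := by
          rintro (x | ⟨⟩)
          · exact hreach_inl u x
          · exact Relation.ReflTransGen.single hadj_new
        exact fun a b => (hto a).trans (hfrom b)
      have hdeg' : ∀ z : W ⊕ Unit, H'.deg z ≤ k := by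
        rintro (x | ⟨⟩)
        · exact le_trans (KT.deg_split_le hE x) (hdeg x)
        · rw [hH', KT.deg_split_inr]
          exact le_trans (KT.one_le_deg hE) (hdeg u)
      have hmapeq : H'.edges.map (Sym2.map φ') = H.edges.map (Sym2.map φ) := by
        rw [hH']
        show ((E0.map (Sym2.map Sum.inl) + {s(Sum.inl u, Sum.inr ())}).map (Sym2.map φ')) = _
        rw [Multiset.map_add, Multiset.map_map, Multiset.map_singleton]
        have h1 : (Sym2.map φ') ∘ (Sym2.map (Sum.inl : W → W ⊕ Unit)) = Sym2.map φ := by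
          funext g
          rw [Function.comp_apply, Sym2.map_map]
          congr 1
        have h2 : Sym2.map φ' s(Sum.inl u, Sum.inr ()) = Sym2.map φ s(u, w0) := by
          rw [Sym2.map_pair_eq, Sym2.map_pair_eq, hφ']
          rfl
        rw [h1, h2, add_comm, Multiset.singleton_add, ← Multiset.map_cons, ← hE]
      have hhom' : IsHomImage G H' φ' := by
        refine ⟨?_, fun a b => (h.2 a b).trans (by rw [hmapeq])⟩
        intro v
        obtain ⟨w, hw⟩ := h.1 v
        exact ⟨Sum.inl w, hw⟩
      have hn' : Multiset.card H'.edges + 1 - Nat.card (W ⊕ Unit) ≤ n := by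
        have hc1 : Multiset.card H'.edges = Multiset.card H.edges := by
          rw [hH', hE]
          simp
        have hc2 : Nat.card (W ⊕ Unit) = Nat.card W + 1 := by
          rw [Nat.card_sum]
          simp
        omega
      obtain ⟨W'', fin'', H'', ψ, htree, hdeg'', hhom'', hmul''⟩ :=
        ih (W ⊕ Unit) inferInstance H' φ' hconn' hdeg' hhom' hn'
      refine ⟨W'', fin'', H'', ψ, htree, hdeg'', hhom'', fun v => le_trans ?_ (hmul'' v)⟩
      have hinj : Function.Injective
          (fun x : (φ ⁻¹' {v}) => (⟨Sum.inl x.1, by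
            have := x.2
            simp only [Set.mem_preimage, hφ', Sum.elim_inl]
            exact this⟩ : (φ' ⁻¹' {v}))) := by
        intro a b hab
        apply Subtype.ext
        exact Sum.inl_injective (congrArg Subtype.val hab)
      exact Nat.card_le_card_of_injective _ hinj

/-- Every `k`-trail is the homomorphic image of a `k`-tree: if `G` is the homomorphic
image of a connected multigraph `H` of maximum degree at most `k` by an onto `φ`,
then `G` is the homomorphic image of a tree of maximum degree at most `k` by some onto `ψ`,
with `ψ`-multiplicities at least the `φ`-multiplicities. -/
theorem kTrail_image_of_kTree {V W : Type} [Finite V] [Finite W]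
    (hV : 2 ≤ Nat.card V) (k : ℕ)
    (G : Multigraph V) (H : Multigraph W) (φ : W → V)
    (hconn : Connected H) (hdeg : ∀ w : W, H.deg w ≤ k)
    (h : IsHomImage G H φ) :
    ∃ (W' : Type) (_ : Finite W') (H' : Multigraph W') (ψ : W' → V),
      IsTree H' ∧ (∀ w : W', H'.deg w ≤ k) ∧ IsHomImage G H' ψ ∧
      ∀ v : V, Nat.card (φ ⁻¹' {v}) ≤ Nat.card (ψ ⁻¹' {v}) :=
  KT.main k G (Multiset.card H.edges + 1 - Nat.card W) W ‹Finite W› H φ hconn hdeg h le_rfl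
end

section
/- Let G = (V, E) be a multigraph, H = (W, F) a tree, and φ : W → V an onto function such that G is the homomorphic image of H by φ. Then there exists a tree H' = (W, F') on the same vertex set W such that G is the homomorphic image of H' by the same function φ, and for every v ∈ V and every w ∈ W with φ(w) = v, the degree of w in H' is either ⌊deg_G(v)/|φ⁻¹(v)|⌋ or ⌈deg_G(v)/|φ⁻¹(v)|⌉. -/
open Multigraph



open Multiset

namespace BalanceAux

/-- Reachability in a multiset of edges. -/
def Rea {W : Type} (F : Multiset (Sym2 W)) : W → W → Prop :=
  Relation.ReflTransGen (fun a b => s(a, b) ∈ F)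

variable {W : Type}

lemma rea_mono {F F' : Multiset (Sym2 W)} (h : ∀ a b : W, s(a,b) ∈ F → s(a,b) ∈ F') :
    ∀ {u v : W}, Rea F u v → Rea F' u v := fun h' => Relation.ReflTransGen.mono h _ _ h'

lemma rea_single {F : Multiset (Sym2 W)} {u v : W} (h : s(u,v) ∈ F) : Rea F u v :=
  Relation.ReflTransGen.single h

lemma rea_symm {F : Multiset (Sym2 W)} {u v : W} (h : Rea F u v) : Rea F v u := by
  have hs : Symmetric (fun a b : W => s(a,b) ∈ F) := by
    intro a b hab; rwa [Sym2.eq_swap]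
  exact (@Relation.ReflTransGen.stdSymm _ _ ⟨fun a b hab => hs hab⟩).symm _ _ h

lemma rea_trans {F : Multiset (Sym2 W)} {u v x : W} (h : Rea F u v) (h' : Rea F v x) :
    Rea F u x := Relation.ReflTransGen.trans h h'

open Classical in
/-- Cover lemma: after removing edge `s(w1,x1)`, every vertex F-reachable from `w1`
is reachable from `w1` or from `x1`. -/
lemma rea_erase_cover {F : Multiset (Sym2 W)} (w1 x1 : W) :
    ∀ z, Rea F w1 z →
      Rea (F.erase s(w1,x1)) w1 z ∨ Rea (F.erase s(w1,x1)) x1 z := by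
  intro z hz
  induction hz with
  | refl => exact Or.inl Relation.ReflTransGen.refl
  | @tail b c hb hbc ih =>
    by_cases hg : s(b,c) ∈ F.erase s(w1,x1)
    · rcases ih with h | h
      · exact Or.inl (h.tail hg)
      · exact Or.inr (h.tail hg)
    · have heq : s(b,c) = s(w1,x1) := by
        by_contra hne
        exact hg ((Multiset.mem_erase_of_ne hne).mpr hbc)
      rcases Sym2.eq_iff.mp heq with ⟨_, hc⟩ | ⟨_, hc⟩
      · subst hc; exact Or.inr Relation.ReflTransGen.refl
      · subst hc; exact Or.inl Relation.ReflTransGen.refl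

open Classical in
/-- Avoidance lemma: if `w1` is not reachable from `x1`, then reachability from `x1`
survives removal of an edge incident to `w1`. -/
lemma rea_avoid {F : Multiset (Sym2 W)} {w1 x2 x1 : W}
    (heF : s(w1,x2) ∈ F) (hbad : ¬ Rea F x1 w1) :
    ∀ z, Rea F x1 z → Rea (F.erase s(w1,x2)) x1 z := by
  intro z hz
  induction hz with
  | refl => exact Relation.ReflTransGen.refl
  | @tail b c hb hbc ih =>
    by_cases hg : s(b,c) ∈ F.erase s(w1,x2)
    · exact ih.tail hg
    · have heq : s(b,c) = s(w1,x2) := by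
        by_contra hne
        exact hg ((Multiset.mem_erase_of_ne hne).mpr hbc)
      have hFb : Rea F x1 b := rea_mono (fun a b h => Multiset.mem_of_mem_erase h) ih
      rcases Sym2.eq_iff.mp heq with ⟨hbw, _⟩ | ⟨hbx, hcw⟩
      · exact absurd (hbw ▸ hFb) hbad
      · exfalso
        apply hbad
        exact rea_trans (hbx ▸ hFb) (rea_symm (rea_single (hcw ▸ heF)))

open Classical in
/-- Edge choice lemma: two distinct non-loop edges at `w1` in a connected graph;
one of them can be removed keeping `w1` connected to `w2`. -/
lemma exists_good_edge {F : Multiset (Sym2 W)} (hconn : ∀ u v : W, Rea F u v)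
    {w1 x1 x2 : W} (hmem1 : s(w1,x1) ∈ F) (hmem2 : s(w1,x2) ∈ F)
    (hne : (s(w1,x1) : Sym2 W) ≠ s(w1,x2)) (w2 : W) :
    ∃ x : W, s(w1,x) ∈ F ∧ Rea (F.erase s(w1,x)) w1 w2 ∧ (x1 ≠ w1 → x2 ≠ w1 → x ≠ w1) := by
  by_cases hc : Rea (F.erase s(w1,x1)) w1 w2
  · exact ⟨x1, hmem1, hc, fun h _ => h⟩
  · refine ⟨x2, hmem2, ?_, fun _ h => h⟩
    have hmem2' : s(w1,x2) ∈ F.erase s(w1,x1) :=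
      (Multiset.mem_erase_of_ne (Ne.symm hne)).mpr hmem2
    have hB : Rea (F.erase s(w1,x1)) x1 w2 := by
      rcases rea_erase_cover w1 x1 w2 (hconn w1 w2) with h | h
      · exact absurd h hc
      · exact h
    have hbad : ¬ Rea (F.erase s(w1,x1)) x1 w1 := by
      intro h
      exact hc (rea_trans (rea_symm h) hB)
    have h2 : Rea ((F.erase s(w1,x1)).erase s(w1,x2)) x1 w2 :=
      rea_avoid hmem2' hbad w2 hB
    have h3 : Rea (F.erase s(w1,x2)) x1 w2 := by
      refine rea_mono (fun a b hab => ?_) h2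
      rw [Multiset.erase_comm] at hab
      exact Multiset.mem_of_mem_erase hab
    have h4 : Rea (F.erase s(w1,x2)) w1 x1 :=
      rea_single ((Multiset.mem_erase_of_ne hne).mpr hmem1)
    exact rea_trans h4 h3

end BalanceAux
open Multiset

namespace BalanceAux
open Classical

noncomputable def cdeg {α : Type} (e : Sym2 α) (w : α) : ℕ :=
  if e = Sym2.diag w then 2 else if w ∈ e then 1 else 0

variable {W : Type}

lemma deg_mk (F : Multiset (Sym2 W)) (w : W) :
    (Multigraph.mk F).deg w = (F.map (fun e => cdeg e w)).sum := rfl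

lemma deg_cons (e : Sym2 W) (F : Multiset (Sym2 W)) (w : W) :
    (Multigraph.mk (e ::ₘ F)).deg w = cdeg e w + (Multigraph.mk F).deg w := by
  simp [deg_mk]

lemma cdeg_pair (a b w : W) :
    cdeg s(a,b) w = (if w = a then 1 else 0) + (if w = b then 1 else 0) := by
  have hd : (s(a,b) = Sym2.diag w) = (a = w ∧ b = w) := by
    rw [Sym2.diag]
    simp only [Sym2.eq_iff, eq_iff_iff]
    tauto
  simp only [cdeg, hd, Sym2.mem_iff]
  by_cases ha : w = a <;> by_cases hb : w = b <;> by_cases hab : a = b <;>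
    simp_all <;> tauto

end BalanceAux
namespace BalanceAux
open Classical
variable {W : Type}

lemma rea_erase_loop {F : Multiset (Sym2 W)} (w : W) {u v : W} (h : Rea F u v) :
    Rea (F.erase (Sym2.diag w)) u v := by
  induction h with
  | refl => exact Relation.ReflTransGen.refl
  | @tail b c hb hbc ih =>
    by_cases hg : s(b,c) ∈ F.erase (Sym2.diag w)
    · exact ih.tail hg
    · have heq : s(b,c) = Sym2.diag w := by
        by_contra hne
        exact hg ((Multiset.mem_erase_of_ne hne).mpr hbc)
      rw [Sym2.diag] at heq
      rcases Sym2.eq_iff.mp heq with ⟨h1, h2⟩ | ⟨h1, h2⟩ <;>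
        · subst h1; subst h2; exact ih

lemma rea_erase_of_one_lt_count {F : Multiset (Sym2 W)} {e : Sym2 W}
    (hcnt : e ∈ F.erase e) {u v : W} (h : Rea F u v) : Rea (F.erase e) u v := by
  refine rea_mono (fun a b hab => ?_) h
  by_cases hne : s(a,b) = e
  · rwa [hne]
  · exact (Multiset.mem_erase_of_ne hne).mpr hab

lemma swap_core {V : Type} (φ : W → V) (F : Multiset (Sym2 W))
    (hconn : ∀ u v : W, Rea F u v) (w1 w2 x : W) (hφ : φ w1 = φ w2) (hne : w1 ≠ w2)
    (hmem : s(w1,x) ∈ F) (hrea : Rea (F.erase s(w1,x)) w1 w2) :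
    ∃ F' : Multiset (Sym2 W), (∀ u v : W, Rea F' u v) ∧
      Multiset.card F' = Multiset.card F ∧
      F'.map (Sym2.map φ) = F.map (Sym2.map φ) ∧
      (Multigraph.mk F').deg w1 + 1 = (Multigraph.mk F).deg w1 ∧
      (Multigraph.mk F').deg w2 = (Multigraph.mk F).deg w2 + 1 ∧
      ∀ w : W, w ≠ w1 → w ≠ w2 → (Multigraph.mk F').deg w = (Multigraph.mk F).deg w := by
  classical
  set E := F.erase s(w1,x) with hE
  have hF : s(w1,x) ::ₘ E = F := Multiset.cons_erase hmem
  refine ⟨s(w2,x) ::ₘ E, ?_, ?_, ?_, ?_, ?_, ?_⟩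
  · -- connectivity
    intro u v
    have hEle : ∀ a b : W, s(a,b) ∈ E → s(a,b) ∈ s(w2,x) ::ₘ E :=
      fun a b hab => Multiset.mem_cons_of_mem hab
    have hkey : Rea (s(w2,x) ::ₘ E) w1 x := by
      refine rea_trans (rea_mono hEle hrea) ?_
      exact rea_single (Multiset.mem_cons_self _ _)
    have := hconn u v
    induction this with
    | refl => exact Relation.ReflTransGen.refl
    | @tail b c hb hbc ih =>
      refine rea_trans ih ?_
      by_cases hg : s(b,c) ∈ E
      · exact rea_single (hEle _ _ hg)
      · have heq : s(b,c) = s(w1,x) := by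
          by_contra hne'
          exact hg ((Multiset.mem_erase_of_ne hne').mpr hbc)
        rcases Sym2.eq_iff.mp heq with ⟨h1, h2⟩ | ⟨h1, h2⟩
        · subst h1; subst h2; exact hkey
        · subst h1; subst h2; exact rea_symm hkey
  · rw [← hF]; simp
  · rw [← hF]
    simp only [Multiset.map_cons]
    congr 1
    rw [Sym2.map_pair_eq, Sym2.map_pair_eq, hφ]
  · rw [← hF, deg_cons, deg_cons, cdeg_pair, cdeg_pair]
    rw [if_neg hne, if_pos rfl]
    generalize (if w1 = x then (1:ℕ) else 0) = t
    generalize (Multigraph.mk (F.erase s(w1,x))).deg w1 = d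
    omega
  · rw [← hF, deg_cons, deg_cons, cdeg_pair, cdeg_pair]
    rw [if_pos rfl, if_neg hne.symm]
    generalize (if w2 = x then (1:ℕ) else 0) = t
    generalize (Multigraph.mk (F.erase s(w1,x))).deg w2 = d
    omega
  · intro w hw1 hw2
    rw [← hF, deg_cons, deg_cons, cdeg_pair, cdeg_pair]
    rw [if_neg hw2, if_neg hw1]

lemma deg_le_filter (F : Multiset (Sym2 W)) (w : W) (hloop : Sym2.diag w ∉ F) :
    (Multigraph.mk F).deg w ≤ Multiset.card (F.filter (fun e => w ∈ e)) := by
  classical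
  induction F using Multiset.induction_on with
  | empty => simp [deg_mk]
  | cons e F ih =>
    have hloop' : Sym2.diag w ∉ F := fun h => hloop (Multiset.mem_cons_of_mem h)
    have hne : e ≠ Sym2.diag w := fun h => hloop (h ▸ Multiset.mem_cons_self e F)
    rw [deg_cons, Multiset.filter_cons]
    have hih := ih hloop'
    by_cases hw : w ∈ e
    · rw [if_pos hw]
      have hc : cdeg e w ≤ 1 := by
        simp only [cdeg, if_neg hne, if_pos hw]
        exact le_refl 1
      simp only [Multiset.card_add, Multiset.card_singleton]
      omega
    · rw [if_neg hw]
      have hc : cdeg e w = 0 := by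
        simp only [cdeg, if_neg hne, if_neg hw]
      rw [zero_add]
      omega

lemma swap_step {V : Type} (φ : W → V) (F : Multiset (Sym2 W))
    (hconn : ∀ u v : W, Rea F u v) (w1 w2 : W) (hφ : φ w1 = φ w2) (hne : w1 ≠ w2)
    (hdeg : 2 ≤ (Multigraph.mk F).deg w1) :
    ∃ F' : Multiset (Sym2 W), (∀ u v : W, Rea F' u v) ∧
      Multiset.card F' = Multiset.card F ∧
      F'.map (Sym2.map φ) = F.map (Sym2.map φ) ∧
      (Multigraph.mk F').deg w1 + 1 = (Multigraph.mk F).deg w1 ∧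
      (Multigraph.mk F').deg w2 = (Multigraph.mk F).deg w2 + 1 ∧
      ∀ w : W, w ≠ w1 → w ≠ w2 → (Multigraph.mk F').deg w = (Multigraph.mk F).deg w := by
  classical
  by_cases hloop : Sym2.diag w1 ∈ F
  · -- replace the loop at w1 by an edge w2–w1
    have hmem : s(w1,w1) ∈ F := hloop
    exact swap_core φ F hconn w1 w2 w1 hφ hne hmem
      (rea_erase_loop w1 (hconn w1 w2))
  · -- no loop at w1 : at least two edge slots at w1
    have hT : 2 ≤ Multiset.card (F.filter (fun e => w1 ∈ e)) :=
      le_trans hdeg (deg_le_filter F w1 hloop)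
    set T := F.filter (fun e => w1 ∈ e) with hTdef
    obtain ⟨e1, he1T⟩ : ∃ e1, e1 ∈ T := Multiset.card_pos_iff_exists_mem.mp (by omega)
    obtain ⟨e2, he2T⟩ : ∃ e2, e2 ∈ T.erase e1 := by
      apply Multiset.card_pos_iff_exists_mem.mp
      have h5 : Multiset.card (T.erase e1) + 1 = Multiset.card T :=
        Multiset.card_erase_add_one he1T
      omega
    have he1F : e1 ∈ F := (Multiset.mem_filter.mp he1T).1
    have hw1e1 : w1 ∈ e1 := (Multiset.mem_filter.mp he1T).2
    have he2F : e2 ∈ F.erase e1 :=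
      Multiset.mem_of_le (Multiset.erase_le_erase e1 (Multiset.filter_le _ F)) he2T
    have hw1e2 : w1 ∈ e2 :=
      (Multiset.mem_filter.mp (Multiset.mem_of_le (Multiset.erase_le _ _) he2T)).2
    obtain ⟨x1, hx1⟩ : ∃ b, e1 = s(w1, b) := Sym2.mem_iff_exists.mp hw1e1
    obtain ⟨x2, hx2⟩ : ∃ b, e2 = s(w1, b) := Sym2.mem_iff_exists.mp hw1e2
    have hx1ne : x1 ≠ w1 := by
      intro h; apply hloop
      have he : e1 = Sym2.diag w1 := by rw [hx1, h]; rfl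
      rwa [he] at he1F
    have hx2ne : x2 ≠ w1 := by
      intro h; apply hloop
      have : e2 = Sym2.diag w1 := by rw [hx2, h]; rfl
      rw [← this]; exact Multiset.mem_of_mem_erase he2F
    by_cases hpar : e1 = e2
    · -- parallel edge: removing one copy keeps reachability
      have hcnt : e1 ∈ F.erase e1 := hpar ▸ he2F
      rw [hx1] at hcnt he1F
      exact swap_core φ F hconn w1 w2 x1 hφ hne he1F
        (rea_erase_of_one_lt_count hcnt (hconn w1 w2))
    · obtain ⟨x, hxF, hxrea, hxne⟩ :=
        exists_good_edge hconn (hx1 ▸ he1F) (hx2 ▸ (Multiset.mem_of_mem_erase he2F))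
          (by rw [← hx1, ← hx2]; exact hpar) w2
      exact swap_core φ F hconn w1 w2 x hφ hne hxF hxrea

end BalanceAux
namespace BalanceAux
open Classical
variable {W : Type}

noncomputable def Phi [Fintype W] (F : Multiset (Sym2 W)) : ℕ :=
  ∑ w : W, ((Multigraph.mk F).deg w) ^ 2

lemma phi_decrease [Fintype W] {F F' : Multiset (Sym2 W)} {w1 w2 : W} (hne : w1 ≠ w2)
    (h1 : (Multigraph.mk F').deg w1 + 1 = (Multigraph.mk F).deg w1)
    (h2 : (Multigraph.mk F').deg w2 = (Multigraph.mk F).deg w2 + 1)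
    (h3 : ∀ w : W, w ≠ w1 → w ≠ w2 → (Multigraph.mk F').deg w = (Multigraph.mk F).deg w)
    (hgap : (Multigraph.mk F).deg w2 + 2 ≤ (Multigraph.mk F).deg w1) :
    Phi F' < Phi F := by
  classical
  set f : W → ℕ := fun w => ((Multigraph.mk F).deg w) ^ 2 with hf
  set f' : W → ℕ := fun w => ((Multigraph.mk F').deg w) ^ 2 with hf'
  have hw2mem : w2 ∈ (Finset.univ : Finset W).erase w1 :=
    Finset.mem_erase.mpr ⟨hne.symm, Finset.mem_univ w2⟩
  have split : ∀ g : W → ℕ, ∑ w : W, g w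
      = g w1 + (g w2 + ∑ w ∈ ((Finset.univ : Finset W).erase w1).erase w2, g w) := by
    intro g
    rw [Finset.add_sum_erase _ g hw2mem, Finset.add_sum_erase _ g (Finset.mem_univ w1)]
  have htail : ∑ w ∈ ((Finset.univ : Finset W).erase w1).erase w2, f' w
      = ∑ w ∈ ((Finset.univ : Finset W).erase w1).erase w2, f w := by
    refine Finset.sum_congr rfl (fun w hw => ?_)
    have hne2 : w ≠ w2 := (Finset.mem_erase.mp hw).1
    have hne1 : w ≠ w1 := (Finset.mem_erase.mp (Finset.mem_erase.mp hw).2).1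
    simp only [hf, hf', h3 w hne1 hne2]
  rw [Phi, Phi, split f, split f', htail]
  have hlt : f' w1 + f' w2 < f w1 + f w2 := by
    simp only [hf, hf', h2]
    set d1' := (Multigraph.mk F').deg w1
    set d1 := (Multigraph.mk F).deg w1
    set d2 := (Multigraph.mk F).deg w2
    have hd : d2 < d1' := by omega
    have h1' : d1 = d1' + 1 := by omega
    rw [h1']
    nlinarith [hd]
  omega

lemma balance [Fintype W] {V : Type} (φ : W → V) :
    ∀ (N : ℕ) (F : Multiset (Sym2 W)), Phi F ≤ N → (∀ u v : W, Rea F u v) →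
    ∃ F' : Multiset (Sym2 W), (∀ u v : W, Rea F' u v) ∧
      Multiset.card F' = Multiset.card F ∧
      F'.map (Sym2.map φ) = F.map (Sym2.map φ) ∧
      ∀ a b : W, φ a = φ b →
        (Multigraph.mk F').deg a ≤ (Multigraph.mk F').deg b + 1 := by
  intro N
  induction N with
  | zero =>
    intro F hP hconn
    by_cases hb : ∀ a b : W, φ a = φ b →
        (Multigraph.mk F).deg a ≤ (Multigraph.mk F).deg b + 1
    · exact ⟨F, hconn, rfl, rfl, hb⟩
    · exfalso
      push_neg at hb
      obtain ⟨a, b, hab, hgt⟩ := hb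
      have hne : a ≠ b := by intro h; rw [h] at hgt; omega
      obtain ⟨F1, _, _, _, hd1, hd2, hd3⟩ :=
        swap_step φ F hconn a b hab hne (by omega)
      have := phi_decrease hne hd1 hd2 hd3 (by omega)
      omega
  | succ n ih =>
    intro F hP hconn
    by_cases hb : ∀ a b : W, φ a = φ b →
        (Multigraph.mk F).deg a ≤ (Multigraph.mk F).deg b + 1
    · exact ⟨F, hconn, rfl, rfl, hb⟩
    · push_neg at hb
      obtain ⟨a, b, hab, hgt⟩ := hb
      have hne : a ≠ b := by intro h; rw [h] at hgt; omega
      obtain ⟨F1, hconn1, hcard1, hmap1, hd1, hd2, hd3⟩ :=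
        swap_step φ F hconn a b hab hne (by omega)
      have hdec := phi_decrease hne hd1 hd2 hd3 (by omega)
      obtain ⟨F', hconn', hcard', hmap', hbal'⟩ := ih F1 (by omega) hconn1
      exact ⟨F', hconn', hcard'.trans hcard1, hmap'.trans hmap1, hbal'⟩

variable {V : Type}

lemma cdeg_map (φ : W → V) (v : V) [Fintype W] (e : Sym2 W) :
    cdeg (Sym2.map φ e) v
      = ∑ u ∈ Finset.univ.filter (fun u => φ u = v), cdeg e u := by
  classical
  induction e using Sym2.ind with
  | _ a b =>
    rw [Sym2.map_pair_eq, cdeg_pair]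
    rw [Finset.sum_congr rfl (fun u _ => cdeg_pair a b u)]
    rw [Finset.sum_add_distrib, Finset.sum_ite_eq', Finset.sum_ite_eq']
    simp only [Finset.mem_filter, Finset.mem_univ, true_and]
    have hc : ∀ x y : V, (if x = y then (1:ℕ) else 0) = if y = x then 1 else 0 := by
      intro x y
      by_cases h : x = y
      · simp [h]
      · rw [if_neg h, if_neg (fun hh => h hh.symm)]
    rw [hc v (φ a), hc v (φ b)]

lemma sum_deg_fiber (φ : W → V) (v : V) [Fintype W] (F : Multiset (Sym2 W)) :
    ((F.map (Sym2.map φ)).map (fun e => cdeg e v)).sum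
      = ∑ u ∈ Finset.univ.filter (fun u => φ u = v), (Multigraph.mk F).deg u := by
  classical
  induction F using Multiset.induction_on with
  | empty => simp [deg_mk]
  | cons e F ih =>
    rw [Multiset.map_cons, Multiset.map_cons, Multiset.sum_cons, ih, cdeg_map φ v e]
    rw [Finset.sum_congr rfl (fun u _ => deg_cons e F u), Finset.sum_add_distrib]

end BalanceAux

/-- Degree balancing: if `G` is the homomorphic image of a tree `H = (W, F)` by `φ`,
then there is a tree `H' = (W, F')` on the same vertex set such that `G` is the
homomorphic image of `H'` by the same `φ`, and every `w ∈ φ⁻¹(v)` has degree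
`⌊deg_G(v)/|φ⁻¹(v)|⌋` or `⌈deg_G(v)/|φ⁻¹(v)|⌉` in `H'`. -/
theorem balancing {V W : Type} [Finite V] [Finite W]
    (hV : 2 ≤ Nat.card V)
    (G : Multigraph V) (H : Multigraph W) (φ : W → V)
    (htree : IsTree H) (h : IsHomImage G H φ) :
    ∃ H' : Multigraph W, IsTree H' ∧ IsHomImage G H' φ ∧
      ∀ v : V, ∀ w : W, φ w = v →
        H'.deg w = G.deg v / Nat.card (φ ⁻¹' {v}) ∨
        H'.deg w = (G.deg v + Nat.card (φ ⁻¹' {v}) - 1) / Nat.card (φ ⁻¹' {v}) := by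
  classical
  letI : Fintype W := Fintype.ofFinite W
  obtain ⟨⟨hWne, hconnH⟩, hcardH⟩ := htree
  have hconn0 : ∀ u v : W, BalanceAux.Rea H.edges u v := fun u v => hconnH u v
  obtain ⟨F', hconn', hcard', hmap', hbal'⟩ :=
    BalanceAux.balance φ (BalanceAux.Phi H.edges) H.edges le_rfl hconn0
  have hGE : G.edges = F'.map (Sym2.map φ) := by
    apply Multiset.ext.mpr
    intro e
    induction e using Sym2.ind with
    | _ a b =>
      rw [h.2 a b, hmap']
  refine ⟨Multigraph.mk F', ⟨⟨hWne, fun u v => hconn' u v⟩, by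
      show Multiset.card F' + 1 = Nat.card W
      rw [hcard']; exact hcardH⟩,
    ⟨h.1, fun u v => by
      show Multiset.count s(u,v) G.edges = Multiset.count s(u,v) (F'.map (Sym2.map φ))
      rw [hGE]⟩, ?_⟩
  intro v w hw
  set s : Finset W := Finset.univ.filter (fun u => φ u = v) with hs
  have hws : w ∈ s := Finset.mem_filter.mpr ⟨Finset.mem_univ w, hw⟩
  have hsne : s.Nonempty := ⟨w, hws⟩
  have hncard : Nat.card (φ ⁻¹' {v}) = s.card := by
    have htf : (φ ⁻¹' {v}).toFinset = s := by
      ext u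
      simp [hs, Set.mem_toFinset]
    rw [Nat.card_coe_set_eq, Set.ncard_eq_toFinset_card', htf]
  set n := s.card with hn
  have hn1 : 1 ≤ n := Finset.card_pos.mpr hsne
  obtain ⟨q, hq⟩ : ∃ q, n = q + 1 := ⟨n - 1, by omega⟩
  set S := ∑ u ∈ s, (Multigraph.mk F').deg u with hSdef
  have hdegG : G.deg v = S := by
    have h0 : G.deg v = ((G.edges).map (fun e => BalanceAux.cdeg e v)).sum :=
      BalanceAux.deg_mk G.edges v
    rw [h0, hGE, BalanceAux.sum_deg_fiber φ v F']
  obtain ⟨u₀, hu₀s, hu₀min⟩ :=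
    s.exists_min_image (fun u => (Multigraph.mk F').deg u) hsne
  set m := (Multigraph.mk F').deg u₀ with hm
  have hub : ∀ u ∈ s, (Multigraph.mk F').deg u ≤ m + 1 := by
    intro u hu
    exact hbal' u u₀ (((Finset.mem_filter.mp hu).2).trans
      ((Finset.mem_filter.mp hu₀s).2).symm)
  -- upper bound on S
  have hsplit0 : m + ∑ u ∈ s.erase u₀, (Multigraph.mk F').deg u = S :=
    Finset.add_sum_erase s (fun u => (Multigraph.mk F').deg u) hu₀s
  have hcarde : (s.erase u₀).card = q := by
    rw [Finset.card_erase_of_mem hu₀s]; omega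
  have hXub : ∑ u ∈ s.erase u₀, (Multigraph.mk F').deg u ≤ q * (m + 1) := by
    have := Finset.sum_le_card_nsmul (s.erase u₀) (fun u => (Multigraph.mk F').deg u)
      (m + 1) (fun u hu => hub u (Finset.mem_of_mem_erase hu))
    rwa [smul_eq_mul, hcarde] at this
  have h2 : S < (m + 1) * n := by
    rw [hq]
    have e1 : (m + 1) * (q + 1) = q * (m + 1) + (m + 1) := by ring
    rw [e1]
    generalize hK : q * (m + 1) = K at hXub ⊢
    omega
  have h1 : m * n ≤ S := by
    have := Finset.card_nsmul_le_sum s (fun u => (Multigraph.mk F').deg u) m hu₀min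
    rw [smul_eq_mul] at this
    rw [mul_comm]
    exact this
  have hwub : (Multigraph.mk F').deg w ≤ m + 1 := hub w hws
  have hwlb : m ≤ (Multigraph.mk F').deg w := hu₀min w hws
  by_cases hc : (Multigraph.mk F').deg w = m
  · left
    show (Multigraph.mk F').deg w = G.deg v / Nat.card (φ ⁻¹' {v})
    rw [hc, hdegG, hncard]
    exact (Nat.div_eq_of_lt_le h1 h2).symm
  · right
    have hcw : (Multigraph.mk F').deg w = m + 1 := by omega
    have hsplitw : (Multigraph.mk F').deg w + ∑ u ∈ s.erase w, (Multigraph.mk F').deg u = S :=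
      Finset.add_sum_erase s (fun u => (Multigraph.mk F').deg u) hws
    have hcardew : (s.erase w).card = q := by
      rw [Finset.card_erase_of_mem hws]; omega
    have hXlb : q * m ≤ ∑ u ∈ s.erase w, (Multigraph.mk F').deg u := by
      have := Finset.card_nsmul_le_sum (s.erase w) (fun u => (Multigraph.mk F').deg u)
        m (fun u hu => hu₀min u (Finset.mem_of_mem_erase hu))
      rwa [smul_eq_mul, hcardew] at this
    have h3 : m * n + 1 ≤ S := by
      rw [hq]
      have e2 : m * (q + 1) = q * m + m := by ring
      rw [e2]
      generalize hK : q * m = K at hXlb ⊢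
      rw [hcw] at hsplitw
      omega
    show (Multigraph.mk F').deg w = (G.deg v + Nat.card (φ ⁻¹' {v}) - 1) / Nat.card (φ ⁻¹' {v})
    rw [hcw, hdegG, hncard]
    have hA : (m + 1) * n ≤ S + n - 1 := by
      have e3 : (m + 1) * n = m * n + n := by ring
      rw [e3]
      generalize hK : m * n = K at h3 ⊢
      omega
    have hB : S + n - 1 < (m + 1 + 1) * n := by
      have e4 : (m + 1 + 1) * n = (m + 1) * n + n := by ring
      rw [e4]
      generalize hK : (m + 1) * n = K at h2 ⊢
      omega
    exact (Nat.div_eq_of_lt_le hA hB).symm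
end

section
/- Let G = (V, E) be a multigraph and let λ ∈ ℤ_{>0}^V be a feasible multiplicity vector for G. Then every vector λ' ∈ ℤ_{>0}^V with λ'(v) ≤ λ(v) for all v ∈ V is also a feasible multiplicity vector for G. -/
open Multigraph


open Classical in
lemma step {V : Type} [Finite V] (G : Multigraph V) (lam : V → ℕ) (v₀ : V)
    (h2 : 2 ≤ lam v₀) (h : FeasibleMult G lam) :
    FeasibleMult G (Function.update lam v₀ (lam v₀ - 1)) := by
  classical
  obtain ⟨W, hW, H, φ, hconn, ⟨hsurj, hcount⟩, hfib⟩ := h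
  -- find two distinct vertices in the fiber of v₀
  have hcard : 1 < Nat.card (φ ⁻¹' {v₀}) := by rw [hfib]; omega
  have hnt : Nontrivial (φ ⁻¹' {v₀}) := Finite.one_lt_card_iff_nontrivial.mp hcard
  obtain ⟨⟨w₀, hw₀⟩, ⟨w₁, hw₁⟩, hne'⟩ := hnt
  have hne : w₁ ≠ w₀ := fun h => hne' (by simp [Subtype.ext_iff, h])
  simp only [Set.mem_preimage, Set.mem_singleton_iff] at hw₀ hw₁
  set W' := {x : W // x ≠ w₀} with hW'
  let ψ : W → W' := fun x => if h : x = w₀ then ⟨w₁, hne⟩ else ⟨x, h⟩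
  have hψfix : ∀ x : W', ψ x.val = x := by
    intro x; simp [ψ, x.2]
  have hφψ : ∀ x : W, φ (ψ x).val = φ x := by
    intro x
    by_cases hx : x = w₀
    · simp [ψ, hx, hw₀, hw₁]
    · simp [ψ, hx]
  refine ⟨W', inferInstance, ⟨H.edges.map (Sym2.map ψ)⟩, fun x => φ x.val, ?_, ⟨?_, ?_⟩, ?_⟩
  · constructor
    · exact ⟨⟨w₁, hne⟩⟩
    · intro u v
      have key : ∀ a b : W, Relation.ReflTransGen H.Adj a b →
          Relation.ReflTransGen (Multigraph.Adj ⟨H.edges.map (Sym2.map ψ)⟩) (ψ a) (ψ b) := by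
        intro a b hab
        refine Relation.ReflTransGen.lift ψ ?_ _ _ hab
        intro a b hab
        show s(ψ a, ψ b) ∈ H.edges.map (Sym2.map ψ)
        have : Sym2.map ψ s(a, b) = s(ψ a, ψ b) := by simp
        rw [← this]
        exact Multiset.mem_map_of_mem _ hab
      have := key u.val v.val (hconn.2 u.val v.val)
      rwa [hψfix u, hψfix v] at this
  · intro v
    obtain ⟨w, hw⟩ := hsurj v
    exact ⟨ψ w, by show φ (ψ w).val = v; rw [hφψ w, hw]⟩
  · intro u v
    rw [hcount u v]
    congr 1
    rw [Multiset.map_map]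
    congr 1
    funext e
    simp only [Function.comp_apply, Sym2.map_map]
    congr 1
    funext x
    exact (hφψ x).symm
  · intro v
    have hEquiv : ((fun x : W' => φ x.val) ⁻¹' {v}) ≃ ((φ ⁻¹' {v}) \ {w₀} : Set W) :=
      { toFun := fun x => ⟨x.1.1, x.2, x.1.2⟩
        invFun := fun y => ⟨⟨y.1, y.2.2⟩, y.2.1⟩
        left_inv := fun x => rfl
        right_inv := fun y => rfl }
    have h1 : Nat.card ((fun x : W' => φ x.val) ⁻¹' {v}) = ((φ ⁻¹' {v}) \ {w₀} : Set W).ncard := by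
      rw [Nat.card_congr hEquiv]
      exact Nat.card_coe_set_eq _
    have h2 : (φ ⁻¹' {v}).ncard = lam v := by
      rw [← Nat.card_coe_set_eq, hfib]
    rw [h1]
    by_cases hv : v = v₀
    · rw [Set.ncard_diff_singleton_of_mem (by simp [hw₀, hv] : w₀ ∈ φ ⁻¹' {v}), h2]
      simp [Function.update, hv]
    · rw [Set.diff_singleton_eq_self (by simp [hw₀, Ne.symm hv] : w₀ ∉ φ ⁻¹' {v}), h2]
      simp [Function.update, hv]

open Classical in
lemma aux {V : Type} [Fintype V] (G : Multigraph V) :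
    ∀ n (lam lam' : V → ℕ), (∀ v, 1 ≤ lam' v) → (∀ v, lam' v ≤ lam v) →
      (∑ v, (lam v - lam' v)) = n → FeasibleMult G lam → FeasibleMult G lam' := by
  intro n
  induction n with
  | zero =>
    intro lam lam' hpos hle hsum h
    have heq : lam' = lam := by
      funext v
      have := Finset.sum_eq_zero_iff.mp hsum v (Finset.mem_univ v)
      have := hle v
      omega
    rwa [heq]
  | succ n ih =>
    intro lam lam' hpos hle hsum h
    have hex : ∃ v₀, lam' v₀ < lam v₀ := by
      by_contra hc
      push_neg at hc
      have hz : ∀ v ∈ Finset.univ, lam v - lam' v = 0 := fun v _ => by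
        have := hle v; have := hc v; omega
      rw [Finset.sum_eq_zero hz] at hsum; omega
    obtain ⟨v₀, hv₀⟩ := hex
    have h2 : 2 ≤ lam v₀ := by have := hpos v₀; omega
    have hstep := step G lam v₀ h2 h
    set lam₁ := Function.update lam v₀ (lam v₀ - 1) with hlam₁
    have hupd : lam₁ v₀ = lam v₀ - 1 := Function.update_self _ _ _
    have hupd' : ∀ v, v ≠ v₀ → lam₁ v = lam v := fun v hv => Function.update_of_ne hv _ _
    refine ih lam₁ lam' hpos ?_ ?_ hstep
    · intro v
      by_cases hv : v = v₀
      · subst hv; rw [hupd]; omega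
      · rw [hupd' v hv]; exact hle v
    · have e1 : ∑ v, (lam v - lam' v)
          = (lam v₀ - lam' v₀) + ∑ v ∈ Finset.univ.erase v₀, (lam v - lam' v) :=
        (Finset.add_sum_erase _ _ (Finset.mem_univ _)).symm
      have e2 : ∑ v, (lam₁ v - lam' v)
          = (lam₁ v₀ - lam' v₀) + ∑ v ∈ Finset.univ.erase v₀, (lam₁ v - lam' v) :=
        (Finset.add_sum_erase _ _ (Finset.mem_univ _)).symm
      have e3 : ∑ v ∈ Finset.univ.erase v₀, (lam₁ v - lam' v)
          = ∑ v ∈ Finset.univ.erase v₀, (lam v - lam' v) :=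
        Finset.sum_congr rfl fun v hv => by rw [hupd' v (Finset.ne_of_mem_erase hv)]
      rw [e2, e3, hupd]
      rw [e1] at hsum
      omega


/-- Feasible multiplicity vectors are down-monotone: if `lam` is a feasible
multiplicity vector for `G` and `1 ≤ lam' ≤ lam` componentwise, then `lam'` is also
a feasible multiplicity vector for `G`. -/
theorem feasibleMult_downMonotone {V : Type} [Finite V]
    (hV : 2 ≤ Nat.card V)
    (G : Multigraph V) (lam lam' : V → ℕ)
    (hlam : FeasibleMult G lam)
    (hpos : ∀ v : V, 1 ≤ lam' v) (hle : ∀ v : V, lam' v ≤ lam v) :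
    FeasibleMult G lam' := by
  cases nonempty_fintype V
  exact aux G _ lam lam' hpos hle rfl hlam
end

section
/- Let G = (V, E) be a multigraph and k ∈ ℤ_{>0}. Then G is a k-trail if and only if the vector λ ∈ ℤ_{>0}^V defined by λ(v) = ⌈deg_G(v)/k⌉ for all v ∈ V is a feasible multiplicity vector for G. -/
open Multigraph

/-! ### Auxiliary machinery -/

namespace KTAux

open Classical in
/-- Number of endpoints of the edge `e` at the vertex `w` (a loop counts twice). -/
noncomputable def wf {α : Type} (e : Sym2 α) (w : α) : ℕ :=
  Sym2.lift ⟨fun a b => (if a = w then 1 else 0) + (if b = w then 1 else 0),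
    fun a b => by exact add_comm _ _⟩ e

open Classical in
lemma wf_mk {α : Type} (a b w : α) :
    wf s(a,b) w = (if a = w then 1 else 0) + (if b = w then 1 else 0) := by
  simp [wf]

/-- Degree of an edge multiset at a vertex. -/
noncomputable def degE {α : Type} (E : Multiset (Sym2 α)) (w : α) : ℕ :=
  (E.map (wf · w)).sum

lemma deg_eq {α : Type} (E : Multiset (Sym2 α)) (w : α) :
    (Multigraph.mk E).deg w = degE E w := by
  classical
  unfold Multigraph.deg degE
  congr 1
  apply Multiset.map_congr rfl
  intro e _
  induction e using Sym2.ind with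
  | _ a b =>
    rw [wf_mk]
    by_cases ha : a = w <;> by_cases hb : b = w
    · subst ha; subst hb; simp [Sym2.diag]
    · subst ha; simp [Sym2.diag, Sym2.eq_iff, Sym2.mem_iff, hb, Ne.symm hb]
    · subst hb; simp [Sym2.diag, Sym2.eq_iff, Sym2.mem_iff, ha, Ne.symm ha]
    · simp [Sym2.diag, Sym2.eq_iff, Sym2.mem_iff, ha, hb, Ne.symm ha, Ne.symm hb]

lemma degE_cons {α : Type} (e : Sym2 α) (E : Multiset (Sym2 α)) (w : α) :
    degE (e ::ₘ E) w = wf e w + degE E w := by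
  unfold degE; rw [Multiset.map_cons, Multiset.sum_cons]

section Conn
variable {α : Type} [DecidableEq α]

def Conn (E : Multiset (Sym2 α)) (u v : α) : Prop :=
  Relation.ReflTransGen (fun a b => s(a,b) ∈ E) u v

omit [DecidableEq α] in
lemma conn_mono {E E' : Multiset (Sym2 α)} (h : ∀ e ∈ E, e ∈ E') {u v : α}
    (hc : Conn E u v) : Conn E' u v :=
  Relation.ReflTransGen.mono (fun _ _ hxy => h _ hxy) _ _ hc

omit [DecidableEq α] in
lemma conn_symm {E : Multiset (Sym2 α)} {u v : α} (hc : Conn E u v) : Conn E v u := by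
  have hsym : Symmetric (fun a b => s(a,b) ∈ E) := by
    intro a b h; rwa [Sym2.eq_swap] at h
  haveI : Std.Symm (fun a b => s(a,b) ∈ E) := ⟨hsym⟩
  exact (Relation.ReflTransGen.stdSymm).symm _ _ hc

omit [DecidableEq α] in
lemma conn_step {E : Multiset (Sym2 α)} {u v : α} (h : s(u,v) ∈ E) : Conn E u v :=
  Relation.ReflTransGen.single h

omit [DecidableEq α] in
lemma conn_trans {E : Multiset (Sym2 α)} {u v w : α} (h : Conn E u v) (h' : Conn E v w) :
    Conn E u w := Relation.ReflTransGen.trans h h'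

/-- Removing an edge splits walks to `w0` into reaching `w0` or `x`. -/
lemma conn_erase_split {E : Multiset (Sym2 α)} {w0 x u : α} (hc : Conn E u w0) :
    Conn (E.erase s(w0,x)) u w0 ∨ Conn (E.erase s(w0,x)) u x := by
  induction hc using Relation.ReflTransGen.head_induction_on with
  | refl => exact Or.inl Relation.ReflTransGen.refl
  | head hab _ ih =>
    rename_i a b _
    by_cases hg : s(a,b) = s(w0,x)
    · rw [Sym2.eq_iff] at hg
      rcases hg with ⟨h1, h2⟩ | ⟨h1, h2⟩
      · exact Or.inl (h1 ▸ Relation.ReflTransGen.refl)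
      · exact Or.inr (h1 ▸ Relation.ReflTransGen.refl)
    · have hmem : s(a,b) ∈ E.erase s(w0,x) := (Multiset.mem_erase_of_ne hg).mpr hab
      rcases ih with h | h
      · exact Or.inl (Relation.ReflTransGen.head hmem h)
      · exact Or.inr (Relation.ReflTransGen.head hmem h)

/-- Two distinct edges at `w0`: removing one of them keeps `u` connected to `w0`. -/
lemma conn_erase_two {E : Multiset (Sym2 α)} {w0 u : α} {f f' : Sym2 α}
    (hne : f ≠ f') (hf : f ∈ E) (hf' : f' ∈ E) (hwf : w0 ∈ f) (hwf' : w0 ∈ f')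
    (hc : Conn E u w0) :
    Conn (E.erase f) u w0 ∨ Conn (E.erase f') u w0 := by
  induction hc using Relation.ReflTransGen.head_induction_on with
  | refl => exact Or.inl Relation.ReflTransGen.refl
  | head hab _ ih =>
    rename_i a b _
    by_cases hgf : s(a,b) = f
    · have hw : w0 = a ∨ w0 = b := by rw [← hgf] at hwf; exact Sym2.mem_iff.mp hwf
      rcases hw with h | h
      · exact Or.inl (h ▸ Relation.ReflTransGen.refl)
      · subst h
        refine Or.inr (Relation.ReflTransGen.single ?_)
        rw [hgf]; exact (Multiset.mem_erase_of_ne hne).mpr hf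
    · by_cases hgf' : s(a,b) = f'
      · have hw : w0 = a ∨ w0 = b := by rw [← hgf'] at hwf'; exact Sym2.mem_iff.mp hwf'
        rcases hw with h | h
        · exact Or.inl (h ▸ Relation.ReflTransGen.refl)
        · subst h
          refine Or.inl (Relation.ReflTransGen.single ?_)
          rw [hgf']; exact (Multiset.mem_erase_of_ne (Ne.symm hne)).mpr hf'
      · rcases ih with h | h
        · exact Or.inl (Relation.ReflTransGen.head ((Multiset.mem_erase_of_ne hgf).mpr hab) h)
        · exact Or.inr (Relation.ReflTransGen.head ((Multiset.mem_erase_of_ne hgf').mpr hab) h)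

lemma conn_erase_of_mem {E : Multiset (Sym2 α)} {e : Sym2 α} (he : e ∈ E.erase e)
    {u v : α} (hc : Conn E u v) : Conn (E.erase e) u v := by
  refine Relation.ReflTransGen.mono (fun a b hab => ?_) _ _ hc
  by_cases hg : s(a,b) = e
  · rwa [hg]
  · exact (Multiset.mem_erase_of_ne hg).mpr hab

lemma conn_erase_diag {E : Multiset (Sym2 α)} {w : α} {u v : α} (hc : Conn E u v) :
    Conn (E.erase (Sym2.diag w)) u v := by
  induction hc with
  | refl => exact Relation.ReflTransGen.refl
  | @tail b c _ hbc ih =>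
    by_cases hg : s(b,c) = Sym2.diag w
    · have hbc' : b = c := by
        simp only [Sym2.diag, Sym2.eq_iff] at hg
        rcases hg with ⟨h1, h2⟩ | ⟨h1, h2⟩ <;> rw [h1, h2]
      exact hbc' ▸ ih
    · exact Relation.ReflTransGen.tail ih ((Multiset.mem_erase_of_ne hg).mpr hbc)

/-- Multiset with at least two elements: a repeated element or two distinct ones. -/
lemma two_of_card {s : Multiset α'} [inst : DecidableEq α'] (h : 2 ≤ Multiset.card s) :
    (∃ a, 2 ≤ s.count a) ∨ ∃ a b, a ≠ b ∧ a ∈ s ∧ b ∈ s := by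
  have hne : s ≠ 0 := by intro h0; rw [h0] at h; simp at h
  obtain ⟨a, ha⟩ := Multiset.exists_mem_of_ne_zero hne
  by_cases hall : ∀ b ∈ s, a = b
  · exact Or.inl ⟨a, by rw [Multiset.count_eq_card.mpr hall]; exact h⟩
  · push_neg at hall
    obtain ⟨b, hb, hab⟩ := hall
    exact Or.inr ⟨a, b, hab, ha, hb⟩

/-- If `w0` has no loop, its degree is at most the number of incident edges. -/
lemma degE_le_card_filter {E : Multiset (Sym2 α)} {w0 : α} (h : Sym2.diag w0 ∉ E) :
    degE E w0 ≤ Multiset.card (E.filter (fun e => w0 ∈ e)) := by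
  induction E using Multiset.induction with
  | empty => simp [degE]
  | cons e E ih =>
    have he : e ≠ Sym2.diag w0 := fun hh => h (hh ▸ Multiset.mem_cons_self e E)
    have hE : Sym2.diag w0 ∉ E := fun hh => h (Multiset.mem_cons_of_mem hh)
    have hih := ih hE
    rw [degE_cons, Multiset.filter_cons]
    induction e using Sym2.ind with
    | _ a b =>
      rw [wf_mk]
      by_cases ha : a = w0 <;> by_cases hb : b = w0
      · exact absurd (by rw [ha, hb]; rfl) he
      · have hm : w0 ∈ s(a,b) := Sym2.mem_iff.mpr (Or.inl ha.symm)
        rw [if_pos ha, if_neg hb, if_pos hm, Multiset.card_add, Multiset.card_singleton]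
        omega
      · have hm : w0 ∈ s(a,b) := Sym2.mem_iff.mpr (Or.inr hb.symm)
        rw [if_neg ha, if_pos hb, if_pos hm, Multiset.card_add, Multiset.card_singleton]
        omega
      · have hm : w0 ∉ s(a,b) := by
          rw [Sym2.mem_iff]; push_neg; exact ⟨fun hh => ha hh.symm, fun hh => hb hh.symm⟩
        rw [if_neg ha, if_neg hb, if_neg hm]
        simpa using hih

/-- The key move lemma: a vertex of degree ≥ 2 has an incident edge whose removal
keeps `w1` connected to `w0`. -/
lemma move_exists {E : Multiset (Sym2 α)} (hconn : ∀ u v : α, Conn E u v)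
    {w0 w1 : α} (hdeg : 2 ≤ degE E w0) :
    ∃ x, s(w0,x) ∈ E ∧ Conn (E.erase s(w0,x)) w1 w0 := by
  by_cases hd : Sym2.diag w0 ∈ E
  · exact ⟨w0, hd, conn_erase_diag (hconn w1 w0)⟩
  · have h2 : 2 ≤ Multiset.card (E.filter (fun e => w0 ∈ e)) :=
      le_trans hdeg (degE_le_card_filter hd)
    rcases two_of_card h2 with ⟨e, hce⟩ | ⟨f, f', hne, hf, hf'⟩
    · have hcE : 2 ≤ E.count e :=
        le_trans hce (Multiset.count_le_of_le e (Multiset.filter_le _ E))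
      have heF : e ∈ E.filter (fun e => w0 ∈ e) := by
        rw [← Multiset.count_pos]; omega
      have hw0e : w0 ∈ e := (Multiset.mem_filter.mp heF).2
      have heE : e ∈ E := Multiset.mem_of_mem_filter heF
      obtain ⟨x, hx⟩ := Sym2.mem_iff_exists.mp hw0e
      have he2 : e ∈ E.erase e := by
        rw [← Multiset.count_pos, Multiset.count_erase_self]; omega
      exact ⟨x, hx ▸ heE, hx ▸ conn_erase_of_mem he2 (hconn w1 w0)⟩
    · have hfE : f ∈ E := Multiset.mem_of_mem_filter hf
      have hf'E : f' ∈ E := Multiset.mem_of_mem_filter hf'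
      have hwf : w0 ∈ f := (Multiset.mem_filter.mp hf).2
      have hwf' : w0 ∈ f' := (Multiset.mem_filter.mp hf').2
      rcases conn_erase_two hne hfE hf'E hwf hwf' (hconn w1 w0) with hcc | hcc
      · obtain ⟨x, hx⟩ := Sym2.mem_iff_exists.mp hwf
        exact ⟨x, hx ▸ hfE, hx ▸ hcc⟩
      · obtain ⟨x, hx⟩ := Sym2.mem_iff_exists.mp hwf'
        exact ⟨x, hx ▸ hf'E, hx ▸ hcc⟩

end Conn

section Fiber
variable {W V : Type} [Fintype W] [DecidableEq V] (φ : W → V)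

open Classical in
lemma sum_fiber_ite (a : W) (v : V) :
    ∑ w ∈ Finset.univ.filter (fun w => φ w = v), (if a = w then 1 else 0) =
      if φ a = v then 1 else 0 := by
  by_cases h : φ a = v
  · rw [if_pos h]
    have h1 := Finset.sum_eq_single (s := Finset.univ.filter (fun w => φ w = v))
      (f := fun w => if a = w then 1 else 0) a
      (fun w _ hne => if_neg fun hh => hne hh.symm)
      (fun hnm => absurd (Finset.mem_filter.mpr ⟨Finset.mem_univ a, h⟩) hnm)
    rw [h1]
    simp
  · rw [if_neg h]
    refine Finset.sum_eq_zero fun w hw => ?_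
    exact if_neg fun hh => h (by rw [hh]; exact (Finset.mem_filter.mp hw).2)

lemma sum_fiber_wf (e : Sym2 W) (v : V) :
    ∑ w ∈ Finset.univ.filter (fun w => φ w = v), wf e w = wf (Sym2.map φ e) v := by
  induction e using Sym2.ind with
  | _ a b =>
    rw [Sym2.map_pair_eq, wf_mk]
    simp only [wf_mk]
    rw [Finset.sum_add_distrib, sum_fiber_ite φ a v, sum_fiber_ite φ b v]
    congr!

lemma sum_fiber_degE (E : Multiset (Sym2 W)) (v : V) :
    ∑ w ∈ Finset.univ.filter (fun w => φ w = v), degE E w =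
      degE (E.map (Sym2.map φ)) v := by
  induction E using Multiset.induction with
  | empty => simp [degE]
  | cons e E ih =>
    rw [Multiset.map_cons, degE_cons]
    have : ∀ w, degE (e ::ₘ E) w = wf e w + degE E w := fun w => degE_cons e E w
    rw [Finset.sum_congr rfl (fun w _ => this w), Finset.sum_add_distrib, ih,
      sum_fiber_wf]

lemma ncard_fiber (v : V) :
    Nat.card (φ ⁻¹' {v}) = (Finset.univ.filter (fun w => φ w = v)).card := by
  classical
  have h1 : (φ ⁻¹' {v}) = {w | φ w = v} := by ext w; simp
  rw [h1, Nat.card_coe_set_eq, Set.ncard_eq_toFinset_card']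
  congr 1
  ext w
  simp

end Fiber

lemma ceil_div_mul (d k : ℕ) (hk : 1 ≤ k) : d ≤ k * ((d + k - 1) / k) := by
  rcases Nat.exists_eq_add_of_le hk with ⟨k', rfl⟩
  have h1 : d + (1 + k') - 1 = d + k' := by omega
  rw [h1]
  have hdm := Nat.div_add_mod (d + k') (1 + k')
  have hml : (d + k') % (1 + k') < 1 + k' := Nat.mod_lt _ (by omega)
  linarith [hdm, hml]

lemma count_congr {α : Type} (i1 i2 : DecidableEq α) (a : α) (s : Multiset α) :
    @Multiset.count α i1 a s = @Multiset.count α i2 a s := by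
  rw [Subsingleton.elim i1 i2]

open Classical in
lemma homImage_map_eq {V W : Type} (G : Multigraph V) (E : Multiset (Sym2 W)) (φ : W → V)
    (h : ∀ u v : V, G.edges.count s(u, v) = (E.map (Sym2.map φ)).count s(u, v)) :
    E.map (Sym2.map φ) = G.edges := by
  refine Multiset.ext.mpr fun z => ?_
  induction z using Sym2.ind with
  | _ u v => exact ((h u v).trans (count_congr _ _ _ _)).symm.trans (count_congr _ _ _ _)

open Classical in
lemma homImage_counts {V W : Type} (G : Multigraph V) (E : Multiset (Sym2 W)) (φ : W → V)
    (h : E.map (Sym2.map φ) = G.edges) :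
    ∀ u v : V, G.edges.count s(u, v) = (E.map (Sym2.map φ)).count s(u, v) := by
  intro u v; rw [h]

end KTAux

open KTAux

/-- `G` is a `k`-trail if and only if the vector `λ(v) = ⌈deg_G(v)/k⌉` is a feasible
multiplicity vector for `G`. -/
theorem isKTrail_iff_ceil_feasible {V : Type} [Finite V]
    (hV : 2 ≤ Nat.card V)
    (G : Multigraph V) (k : ℕ) (hk : 1 ≤ k) :
    IsKTrail G k ↔ FeasibleMult G (fun v => (G.deg v + k - 1) / k) := by
  classical
  haveI : Fintype V := Fintype.ofFinite V
  constructor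
  · rintro ⟨W, hWfin, H, φ, hconn, hdegk, hsurj, hcount⟩
    haveI : Fintype W := Fintype.ofFinite W
    have hmap : H.edges.map (Sym2.map φ) = G.edges := homImage_map_eq G H.edges φ hcount
    have hdegsum : ∀ v : V,
        (∑ w ∈ Finset.univ.filter (fun w => φ w = v), degE H.edges w) = G.deg v := by
      intro v
      rw [sum_fiber_degE φ H.edges v, hmap]
      exact (deg_eq G.edges v).symm
    have hW2 : 2 ≤ Nat.card W := le_trans hV (Nat.card_le_card_of_surjective φ hsurj)
    have hdegH1 : ∀ w : W, 1 ≤ degE H.edges w := by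
      intro w
      haveI : Nontrivial W := Finite.one_lt_card_iff_nontrivial.mp (by omega)
      obtain ⟨w', hw'⟩ := exists_ne w
      rcases (hconn.2 w w').cases_head with h | ⟨c, hadj, _⟩
      · exact absurd h.symm hw'
      · have hmem : wf s(w,c) w ∈ H.edges.map (wf · w) :=
          Multiset.mem_map_of_mem _ hadj
        obtain ⟨t', ht'⟩ := Multiset.exists_cons_of_mem hmem
        have hle : wf s(w,c) w ≤ degE H.edges w := by
          unfold degE; rw [ht', Multiset.sum_cons]; exact Nat.le_add_right _ _
        have h1 : 1 ≤ wf s(w,c) w := by rw [wf_mk, if_pos rfl]; omega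
        omega
    have hdegG1 : ∀ v : V, 1 ≤ G.deg v := by
      intro v
      obtain ⟨w, hw⟩ := hsurj v
      have hwmem : w ∈ Finset.univ.filter (fun w => φ w = v) :=
        Finset.mem_filter.mpr ⟨Finset.mem_univ w, hw⟩
      have hle := Finset.single_le_sum (f := fun w => degE H.edges w)
        (fun i _ => Nat.zero_le _) hwmem
      rw [hdegsum v] at hle
      exact le_trans (hdegH1 w) hle
    have ht1 : ∀ v : V, 1 ≤ (G.deg v + k - 1) / k := by
      intro v
      have := hdegG1 v
      rw [Nat.le_div_iff_mul_le (by omega : 0 < k)]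
      omega
    have hfibcard : ∀ v : V,
        (G.deg v + k - 1) / k ≤ (Finset.univ.filter (fun w => φ w = v)).card := by
      intro v
      have hsum := hdegsum v
      have hle : G.deg v ≤ k * (Finset.univ.filter (fun w => φ w = v)).card := by
        rw [← hsum]
        calc (∑ w ∈ Finset.univ.filter (fun w => φ w = v), degE H.edges w)
            ≤ ∑ _w ∈ Finset.univ.filter (fun w => φ w = v), k :=
              Finset.sum_le_sum (fun w _ => by rw [← deg_eq]; exact hdegk w)
          _ = (Finset.univ.filter (fun w => φ w = v)).card * k := by
              rw [Finset.sum_const, smul_eq_mul]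
          _ = k * (Finset.univ.filter (fun w => φ w = v)).card := mul_comm _ _
      rw [Nat.div_le_iff_le_mul_add_pred (by omega : 0 < k)]
      omega
    set t : V → ℕ := fun v => (G.deg v + k - 1) / k with ht
    have hg : ∀ v : V, ∃ g : {w : W // φ w = v} → Fin (t v), Function.Surjective g := by
      intro v
      have hcard : Fintype.card (Fin (t v)) ≤ Fintype.card {w : W // φ w = v} := by
        rw [Fintype.card_fin, Fintype.card_subtype]
        exact hfibcard v
      obtain ⟨em⟩ := Function.Embedding.nonempty_of_card_le hcard
      refine ⟨fun w => if h : ∃ i, em i = w then h.choose else ⟨0, ht1 v⟩, fun i => ?_⟩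
      refine ⟨em i, ?_⟩
      have hex : ∃ j, em j = em i := ⟨i, rfl⟩
      beta_reduce
      rw [dif_pos hex]
      exact em.injective hex.choose_spec
    choose g hgsurj using hg
    set ψ : W → (Σ v : V, Fin (t v)) := fun w => ⟨φ w, g (φ w) ⟨w, rfl⟩⟩ with hψ
    have hψsurj : Function.Surjective ψ := by
      rintro ⟨v, i⟩
      obtain ⟨⟨w, hw⟩, hgw⟩ := hgsurj v i
      refine ⟨w, ?_⟩
      subst hw
      exact congrArg _ hgw
    refine ⟨Σ v : V, Fin (t v), inferInstance,
      Multigraph.mk (H.edges.map (Sym2.map ψ)), Sigma.fst, ?_, ⟨?_, ?_⟩, ?_⟩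
    · constructor
      · obtain ⟨w⟩ := hconn.1; exact ⟨ψ w⟩
      · intro x y
        obtain ⟨a, rfl⟩ := hψsurj x
        obtain ⟨b, rfl⟩ := hψsurj y
        refine Relation.ReflTransGen.lift ψ (fun p q hpq => ?_) _ _ (hconn.2 a b)
        show s(ψ p, ψ q) ∈ H.edges.map (Sym2.map ψ)
        rw [← Sym2.map_pair_eq]
        exact Multiset.mem_map_of_mem _ hpq
    · intro v; exact ⟨⟨v, ⟨0, ht1 v⟩⟩, rfl⟩
    · have hcomp : (H.edges.map (Sym2.map ψ)).map (Sym2.map Sigma.fst) = G.edges := by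
        rw [Multiset.map_map, ← hmap]
        apply Multiset.map_congr rfl
        intro e _
        exact Sym2.map_map e
      exact homImage_counts G _ Sigma.fst hcomp
    · intro v
      rw [← Set.range_sigmaMk, Nat.card_range_of_injective sigma_mk_injective,
        Nat.card_eq_fintype_card, Fintype.card_fin]
  · rintro ⟨W, hWfin, H, φ, hconn, ⟨hsurj, hcount⟩, hfib⟩
    haveI : Fintype W := Fintype.ofFinite W
    have hmap : H.edges.map (Sym2.map φ) = G.edges := homImage_map_eq G H.edges φ hcount
    have hfibcard : ∀ v : V,
        (Finset.univ.filter (fun w => φ w = v)).card = (G.deg v + k - 1) / k := by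
      intro v; rw [← ncard_fiber φ v]; exact hfib v
    have main : ∀ n (E : Multiset (Sym2 W)), (∑ w, degE E w ^ 2) = n →
        E.map (Sym2.map φ) = G.edges → (∀ u v : W, Conn E u v) →
        ∃ E' : Multiset (Sym2 W), E'.map (Sym2.map φ) = G.edges ∧
          (∀ u v : W, Conn E' u v) ∧ ∀ w, degE E' w ≤ k := by
      intro n
      induction n using Nat.strong_induction_on with
      | _ n IH =>
        intro E hn hmapE hconnE
        by_cases hball : ∀ w, degE E w ≤ k
        · exact ⟨E, hmapE, hconnE, hball⟩
        push_neg at hball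
        obtain ⟨w0, hw0⟩ := hball
        set v := φ w0 with hv
        have hsum : (∑ w ∈ Finset.univ.filter (fun w => φ w = v), degE E w) = G.deg v := by
          rw [sum_fiber_degE φ E v, hmapE]; exact (deg_eq G.edges v).symm
        have hdk : G.deg v ≤ k * ((G.deg v + k - 1) / k) := ceil_div_mul _ _ hk
        have hw0mem : w0 ∈ Finset.univ.filter (fun w => φ w = v) :=
          Finset.mem_filter.mpr ⟨Finset.mem_univ _, rfl⟩
        obtain ⟨w1, hw1mem, hw1ne, hw1deg⟩ :
            ∃ w1 ∈ Finset.univ.filter (fun w => φ w = v), w1 ≠ w0 ∧ degE E w1 < k := by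
          by_contra hcon
          push_neg at hcon
          have hge : ∀ w ∈ (Finset.univ.filter (fun w => φ w = v)).erase w0,
              k ≤ degE E w := by
            intro w hw
            obtain ⟨hne, hmem⟩ := Finset.mem_erase.mp hw
            exact hcon w hmem hne
          have hbig := Finset.card_nsmul_le_sum _ _ _ hge
          rw [smul_eq_mul] at hbig
          have hsplit := Finset.add_sum_erase _ (fun w => degE E w) hw0mem
          have hcard := Finset.card_erase_add_one hw0mem
          have h1 := hfibcard v
          have hq : (G.deg v + k - 1) / k =
              ((Finset.univ.filter (fun w => φ w = v)).erase w0).card + 1 := by omega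
          rw [hq] at hdk
          rw [hsum] at hsplit
          nlinarith [hbig, hsplit, hdk, hw0]
        have h2le : 2 ≤ degE E w0 := by omega
        obtain ⟨x, hxE, hcc⟩ := move_exists hconnE (w1 := w1) h2le
        set E0 := E.erase s(w0,x) with hE0
        have hE : E = s(w0,x) ::ₘ E0 := (Multiset.cons_erase hxE).symm
        set E' := s(x,w1) ::ₘ E0 with hE'
        have hφw1 : φ w1 = v := (Finset.mem_filter.mp hw1mem).2
        have hmapE' : E'.map (Sym2.map φ) = G.edges := by
          rw [← hmapE, hE', Multiset.map_cons]
          conv_rhs => rw [hE, Multiset.map_cons]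
          congr 1
          rw [Sym2.map_pair_eq, Sym2.map_pair_eq, hφw1, ← hv]
          exact Sym2.eq_swap
        have hE0sub : ∀ e ∈ E0, e ∈ E' := fun e he => Multiset.mem_cons_of_mem he
        have hxw1' : Conn E' x w1 := conn_step (Multiset.mem_cons_self _ _)
        have hw1w0' : Conn E' w1 w0 := conn_mono hE0sub hcc
        have hconn0 : ∀ u : W, Conn E' u w0 := by
          intro u
          rcases conn_erase_split (x := x) (hconnE u w0) with h | h
          · exact conn_mono hE0sub h
          · exact conn_trans (conn_mono hE0sub h) (conn_trans hxw1' hw1w0')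
        have hconnE' : ∀ u u' : W, Conn E' u u' :=
          fun u u' => conn_trans (hconn0 u) (conn_symm (hconn0 u'))
        have hdeg' : ∀ w, degE E' w =
            degE E w + (if w1 = w then 1 else 0) - (if w0 = w then 1 else 0) := by
          intro w
          rw [hE', degE_cons, hE, degE_cons, wf_mk, wf_mk]
          split_ifs <;> omega
        have hΦ' : (∑ w, degE E' w ^ 2) < n := by
          rw [← hn]
          have hw0u : w0 ∈ (Finset.univ : Finset W) := Finset.mem_univ w0
          have hw1u : w1 ∈ (Finset.univ : Finset W).erase w0 :=
            Finset.mem_erase.mpr ⟨hw1ne, Finset.mem_univ _⟩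
          have hsplit : ∀ f : W → ℕ, (∑ w, f w) =
              f w0 + (f w1 + ∑ w ∈ ((Finset.univ : Finset W).erase w0).erase w1, f w) := by
            intro f
            rw [← Finset.add_sum_erase _ f hw0u, ← Finset.add_sum_erase _ f hw1u]
          rw [hsplit (fun w => degE E' w ^ 2), hsplit (fun w => degE E w ^ 2)]
          have hrest : (∑ w ∈ ((Finset.univ : Finset W).erase w0).erase w1, degE E' w ^ 2)
              = ∑ w ∈ ((Finset.univ : Finset W).erase w0).erase w1, degE E w ^ 2 := by
            apply Finset.sum_congr rfl
            intro w hw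
            have h1 : w ≠ w1 := (Finset.mem_erase.mp hw).1
            have h0 : w ≠ w0 := (Finset.mem_erase.mp (Finset.mem_erase.mp hw).2).1
            rw [hdeg' w, if_neg (fun h => h1 h.symm : ¬ w1 = w),
              if_neg (fun h => h0 h.symm : ¬ w0 = w)]
            norm_num
          rw [hrest]
          have e0 := hdeg' w0
          rw [if_neg (hw1ne : ¬ w1 = w0), if_pos rfl] at e0
          have e1 := hdeg' w1
          rw [if_pos rfl, if_neg (fun h => hw1ne h.symm : ¬ w0 = w1)] at e1
          have h1 : degE E' w0 + 1 = degE E w0 := by omega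
          have h2 : degE E' w1 = degE E w1 + 1 := by omega
          have hblt : degE E' w1 ≤ degE E' w0 := by omega
          nlinarith [h1, h2, hblt]
        exact IH _ hΦ' E' rfl hmapE' hconnE'
    obtain ⟨E', hmapE', hconnE', hdegE'⟩ := main _ H.edges rfl hmap (fun u v => hconn.2 u v)
    exact ⟨W, hWfin, Multigraph.mk E', φ, ⟨hconn.1, hconnE'⟩,
      (fun w => by rw [deg_eq]; exact hdegE' w), hsurj, homImage_counts G E' φ hmapE'⟩
end

section
/- Let G = (V, E) be a multigraph and μ ∈ ℤ_{≥0}^V. The following are equivalent: (i) G is the homomorphic image of a connected multigraph H = (W, F) by an onto function φ : W → V with |φ⁻¹(v)| = μ(v) + 1 for all v ∈ V; (ii) G is the homomorphic image of a tree H = (W, F) by an onto function φ : W → V with |φ⁻¹(v)| ≥ μ(v) + 1 for all v ∈ V. -/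
open Multigraph


private lemma rtg_congr {W : Type} {r r' : W → W → Prop}
    (h : ∀ a b, r a b → Relation.ReflTransGen r' a b) :
    ∀ {u v : W}, Relation.ReflTransGen r u v → Relation.ReflTransGen r' u v := by
  intro u v hr
  induction hr with
  | refl => exact Relation.ReflTransGen.refl
  | tail _ hstep ih => exact ih.trans (h _ _ hstep)

private lemma spanning_tree_multiset {W : Type} [Finite W] (E : Multiset (Sym2 W))
    (h : Multigraph.Connected ⟨E⟩) :
    ∃ T, T ≤ E ∧ Multigraph.Connected (⟨T⟩ : Multigraph W) ∧
      Multiset.card T + 1 = Nat.card W := by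
  classical
  haveI : Fintype W := Fintype.ofFinite W
  obtain ⟨hne, -⟩ := id h
  have hex : ∃ n : ℕ, ∃ T : Multiset (Sym2 W),
      (T ≤ E ∧ Multigraph.Connected (⟨T⟩ : Multigraph W)) ∧ Multiset.card T = n :=
    ⟨Multiset.card E, E, ⟨le_refl _, h⟩, rfl⟩
  obtain ⟨T, ⟨hTle, hTconn⟩, hTcard⟩ := Nat.find_spec hex
  have herase : ∀ e ∈ T, ¬ Multigraph.Connected (⟨T.erase e⟩ : Multigraph W) := by
    intro e he hc
    have h1 : Nat.find hex ≤ Multiset.card (T.erase e) :=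
      Nat.find_min' hex ⟨T.erase e, ⟨le_trans (Multiset.erase_le e T) hTle, hc⟩, rfl⟩
    have h2 : 0 < Multiset.card T := Multiset.card_pos_iff_exists_mem.mpr ⟨e, he⟩
    rw [Multiset.card_erase_of_mem he, Nat.pred_eq_sub_one] at h1
    omega
  -- no loops
  have hnoloop : ∀ x : W, Sym2.diag x ∉ T := by
    intro x hx
    refine herase _ hx ⟨hne, fun u v => ?_⟩
    refine rtg_congr (fun a b hab => ?_) (hTconn.2 u v)
    by_cases habx : s(a, b) = Sym2.diag x
    · have habx' : s(a, b) = s(x, x) := habx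
      have : a = b := by
        rcases Sym2.eq_iff.mp habx' with ⟨rfl, rfl⟩ | ⟨rfl, rfl⟩ <;> rfl
      exact this ▸ Relation.ReflTransGen.refl
    · exact Relation.ReflTransGen.single ((Multiset.mem_erase_of_ne habx).mpr hab)
  -- nodup
  have hnodup : T.Nodup := by
    rw [Multiset.nodup_iff_count_le_one]
    by_contra hcon
    push_neg at hcon
    obtain ⟨e, he2⟩ := hcon
    have heT : e ∈ T := by rw [← Multiset.count_pos]; omega
    refine herase e heT ⟨hne, fun u v => ?_⟩
    refine rtg_congr (fun a b hab => ?_) (hTconn.2 u v)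
    refine Relation.ReflTransGen.single ?_
    show s(a, b) ∈ T.erase e
    rw [← Multiset.count_pos]
    by_cases habe : s(a, b) = e
    · rw [habe, Multiset.count_erase_self]
      omega
    · rw [Multiset.count_erase_of_ne habe]
      exact Multiset.count_pos.mpr hab
  -- simple graph
  set S : SimpleGraph W := SimpleGraph.fromEdgeSet {e | e ∈ T} with hS
  have hadjS : ∀ a b : W, s(a, b) ∈ T → a ≠ b → S.Adj a b := fun a b h1 h2 =>
    (SimpleGraph.fromEdgeSet_adj _).mpr ⟨h1, h2⟩
  have hSconn : S.Connected := by
    rw [SimpleGraph.connected_iff]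
    refine ⟨fun u v => ?_, hne⟩
    rw [SimpleGraph.reachable_iff_reflTransGen]
    refine rtg_congr (fun a b hab => ?_) (hTconn.2 u v)
    by_cases habd : a = b
    · exact habd ▸ Relation.ReflTransGen.refl
    · exact Relation.ReflTransGen.single (hadjS a b hab habd)
  have hSac : S.IsAcyclic := by
    by_contra hnac
    rw [SimpleGraph.isAcyclic_iff_forall_edge_isBridge] at hnac
    push_neg at hnac
    obtain ⟨e, heS, hebr⟩ := hnac
    induction e using Sym2.ind with
    | _ u v =>
    have huv : S.Adj u v := heS
    have hmemuv : s(u, v) ∈ T := ((SimpleGraph.fromEdgeSet_adj _).mp huv).1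
    have hreach : (S \ SimpleGraph.fromEdgeSet {s(u, v)}).Reachable u v := by
      rw [SimpleGraph.isBridge_iff] at hebr
      push_neg at hebr
      exact hebr
    have hdel : ∀ a b : W, (S \ SimpleGraph.fromEdgeSet {s(u, v)}).Adj a b →
        s(a, b) ∈ T.erase s(u, v) := by
      intro a b hab
      rw [SimpleGraph.sdiff_adj] at hab
      obtain ⟨h1, h2⟩ := hab
      have hne' : a ≠ b := h1.ne
      have hmem : s(a, b) ∈ T := ((SimpleGraph.fromEdgeSet_adj _).mp h1).1
      have hneq : s(a, b) ≠ s(u, v) := by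
        intro hh
        exact h2 ((SimpleGraph.fromEdgeSet_adj _).mpr ⟨by rw [hh]; exact Set.mem_singleton _, hne'⟩)
      exact (Multiset.mem_erase_of_ne hneq).mpr hmem
    have hrtg_uv : Relation.ReflTransGen
        (Multigraph.Adj (⟨T.erase s(u, v)⟩ : Multigraph W)) u v :=
      rtg_congr (fun a b hab => Relation.ReflTransGen.single (hdel a b hab))
        ((SimpleGraph.reachable_iff_reflTransGen _ _).mp hreach)
    have hrtg_vu : Relation.ReflTransGen
        (Multigraph.Adj (⟨T.erase s(u, v)⟩ : Multigraph W)) v u :=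
      rtg_congr (fun a b hab => Relation.ReflTransGen.single (hdel a b hab))
        ((SimpleGraph.reachable_iff_reflTransGen _ _).mp hreach.symm)
    refine herase _ hmemuv ⟨hne, fun x y => ?_⟩
    refine rtg_congr (fun a b hab => ?_) (hTconn.2 x y)
    by_cases habe : s(a, b) = s(u, v)
    · rcases Sym2.eq_iff.mp habe with ⟨rfl, rfl⟩ | ⟨rfl, rfl⟩
      · exact hrtg_uv
      · exact hrtg_vu
    · exact Relation.ReflTransGen.single ((Multiset.mem_erase_of_ne habe).mpr hab)
  haveI : Fintype S.edgeSet := Fintype.ofFinite _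
  have hTfin : T.toFinset = S.edgeFinset := by
    ext e
    induction e using Sym2.ind with
    | _ a b =>
      simp only [Multiset.mem_toFinset, SimpleGraph.mem_edgeFinset, SimpleGraph.mem_edgeSet, hS,
        SimpleGraph.fromEdgeSet_adj, Set.mem_setOf_eq]
      constructor
      · intro hmem
        refine ⟨hmem, ?_⟩
        rintro rfl
        exact hnoloop a hmem
      · exact And.left
  have hcardT : Multiset.card T = S.edgeFinset.card := by
    rw [← hTfin, Multiset.toFinset_card_of_nodup hnodup]
  have htree := SimpleGraph.IsTree.card_edgeFinset ⟨hSconn, hSac⟩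
  refine ⟨T, hTle, hTconn, ?_⟩
  rw [hcardT, Nat.card_eq_fintype_card]
  exact htree


/-- `G` is the homomorphic image of a connected multigraph with multiplicities exactly
`μ + 1` iff `G` is the homomorphic image of a tree with multiplicities at least `μ + 1`. -/
theorem connected_exact_iff_tree_ge {V : Type} [Finite V]
    (hV : 2 ≤ Nat.card V)
    (G : Multigraph V) (μ : V → ℕ) :
    (∃ (W : Type) (_ : Finite W) (H : Multigraph W) (φ : W → V),
        Connected H ∧ IsHomImage G H φ ∧ ∀ v : V, Nat.card (φ ⁻¹' {v}) = μ v + 1) ↔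
    (∃ (W : Type) (_ : Finite W) (H : Multigraph W) (φ : W → V),
        IsTree H ∧ IsHomImage G H φ ∧ ∀ v : V, μ v + 1 ≤ Nat.card (φ ⁻¹' {v})) := by
  constructor
  · rintro ⟨W, hWfin, H, φ, hconn, ⟨hsurj, hcount⟩, hfib⟩
    classical
    obtain ⟨T, hTle, hTconn, hTcard⟩ := spanning_tree_multiset H.edges hconn
    set D : Multiset (Sym2 W) := H.edges - T with hD
    set L : List (Sym2 W) := D.toList with hL
    set n : ℕ := L.length with hn
    have hrep : ∀ e : Sym2 W, ∃ p : W × W, e = s(p.1, p.2) := fun e =>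
      Sym2.ind (fun a b => ⟨(a, b), rfl⟩) e
    let p1 : Fin n → W := fun i => (Classical.choose (hrep (L.get i))).1
    let p2 : Fin n → W := fun i => (Classical.choose (hrep (L.get i))).2
    have hp : ∀ i : Fin n, L.get i = s(p1 i, p2 i) := fun i =>
      Classical.choose_spec (hrep (L.get i))
    let φ' : W ⊕ Fin n → V := Sum.elim φ (fun i => φ (p1 i))
    let pend : Fin n → Sym2 (W ⊕ Fin n) := fun i => s(Sum.inr i, Sum.inl (p2 i))
    let E' : Multiset (Sym2 (W ⊕ Fin n)) :=
      T.map (Sym2.map Sum.inl) + (((List.finRange n).map pend : List _) : Multiset _)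
    refine ⟨W ⊕ Fin n, inferInstance, ⟨E'⟩, φ', ⟨⟨?_, ?_⟩, ?_⟩, ⟨?_, ?_⟩, ?_⟩
    · -- connected
      exact ⟨Sum.inl (Classical.choice hconn.1)⟩
    · -- preconnected
      have hinl : ∀ a b : W,
          Relation.ReflTransGen (Multigraph.Adj (⟨E'⟩ : Multigraph (W ⊕ Fin n)))
            (Sum.inl a) (Sum.inl b) := by
        intro a b
        refine Relation.ReflTransGen.lift Sum.inl (fun x y hxy => ?_) _ _ (hTconn.2 a b)
        show s(Sum.inl x, Sum.inl y) ∈ E'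
        rw [show s(Sum.inl x, Sum.inl y) = Sym2.map Sum.inl s(x, y) from
          (Sym2.map_pair_eq Sum.inl x y).symm]
        exact Multiset.mem_add.mpr (Or.inl (Multiset.mem_map_of_mem _ hxy))
      have hpend : ∀ i : Fin n,
          Multigraph.Adj (⟨E'⟩ : Multigraph (W ⊕ Fin n)) (Sum.inr i) (Sum.inl (p2 i)) := by
        intro i
        show pend i ∈ E'
        refine Multiset.mem_add.mpr (Or.inr ?_)
        rw [Multiset.mem_coe]
        exact List.mem_map.mpr ⟨i, List.mem_finRange i, rfl⟩
      have hpend' : ∀ i : Fin n,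
          Multigraph.Adj (⟨E'⟩ : Multigraph (W ⊕ Fin n)) (Sum.inl (p2 i)) (Sum.inr i) := by
        intro i
        show s(Sum.inl (p2 i), Sum.inr i) ∈ E'
        rw [Sym2.eq_swap]
        exact hpend i
      rintro (a | i) (b | j)
      · exact hinl a b
      · exact ((hinl a (p2 j)).tail (hpend' j))
      · exact (Relation.ReflTransGen.single (hpend i)).trans (hinl (p2 i) b)
      · exact ((Relation.ReflTransGen.single (hpend i)).trans
          (hinl (p2 i) (p2 j))).tail (hpend' j)
    · -- tree cardinality
      have hTD : T + D = H.edges := by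
        rw [hD, add_comm]
        exact tsub_add_cancel_of_le hTle
      have hcD : Multiset.card D = n := by rw [hn, hL, Multiset.length_toList]
      show Multiset.card E' + 1 = Nat.card (W ⊕ Fin n)
      rw [Nat.card_sum, Nat.card_eq_fintype_card (α := Fin n), Fintype.card_fin]
      have : Multiset.card E' = Multiset.card T + n := by
        rw [Multiset.card_add, Multiset.card_map, Multiset.coe_card, List.length_map,
          List.length_finRange]
      omega
    · -- surjective
      intro v
      obtain ⟨w, hw⟩ := hsurj v
      exact ⟨Sum.inl w, hw⟩
    · -- counts
      have hcomp : ∀ e : Sym2 W, Sym2.map φ' (Sym2.map Sum.inl e) = Sym2.map φ e := fun e => by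
        rw [Sym2.map_map]; rfl
      have hmap : E'.map (Sym2.map φ') = H.edges.map (Sym2.map φ) := by
        have hTD : T + D = H.edges := by
          rw [hD, add_comm]; exact tsub_add_cancel_of_le hTle
        have h1 : (T.map (Sym2.map Sum.inl)).map (Sym2.map φ') = T.map (Sym2.map φ) := by
          rw [Multiset.map_map]
          exact Multiset.map_congr rfl (fun e _ => hcomp e)
        have h2 : ((((List.finRange n).map pend : List _) : Multiset _)).map (Sym2.map φ')
            = D.map (Sym2.map φ) := by
          rw [Multiset.map_coe, List.map_map]
          have hcg : ∀ i ∈ List.finRange n,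
              (Sym2.map φ' ∘ pend) i = (Sym2.map φ ∘ L.get) i := by
            intro i _
            show Sym2.map φ' (pend i) = Sym2.map φ (L.get i)
            rw [hp i, Sym2.map_pair_eq, Sym2.map_pair_eq]
            rfl
          rw [List.map_congr_left hcg, List.comp_map, List.map_get_finRange,
            ← Multiset.map_coe,
            show ((L : List _) : Multiset _) = D from Multiset.coe_toList D]
        rw [show E'.map (Sym2.map φ') = (T.map (Sym2.map Sum.inl)).map (Sym2.map φ')
            + ((((List.finRange n).map pend : List _) : Multiset _)).map (Sym2.map φ') from
            Multiset.map_add _ _ _, h1, h2, ← Multiset.map_add, hTD]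
      intro u v
      rw [hcount u v, hmap]
    · -- fibers
      intro v
      rw [← hfib v]
      exact Nat.card_le_card_of_injective
        (fun x : (φ ⁻¹' {v}) => (⟨Sum.inl x.1, x.2⟩ : (φ' ⁻¹' {v})))
        (fun x y hxy => Subtype.ext (Sum.inl_injective (congrArg Subtype.val hxy)))
  · rintro ⟨W, hWfin, H, φ, ⟨hconn, -⟩, ⟨hsurj, hcount⟩, hfib⟩
    classical
    have hsub : ∀ v : V, ∃ t ⊆ φ ⁻¹' {v}, t.ncard = μ v + 1 := fun v =>
      Set.exists_subset_card_eq (by rw [← Nat.card_coe_set_eq]; exact hfib v)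
    choose t hts htcard using hsub
    have htne : ∀ v, (t v).Nonempty := fun v =>
      (Set.ncard_pos (Set.toFinite _)).mp (by rw [htcard v]; omega)
    choose c hc using htne
    have hφc : ∀ v, φ (c v) = v := fun v => hts v (hc v)
    set K : Set W := {w | w ∈ t (φ w)} with hK
    have hmemK : ∀ (v : V) (w : W), w ∈ t v → w ∈ K := by
      intro v w hw
      have hwv : φ w = v := hts v hw
      show w ∈ t (φ w)
      rw [hwv]; exact hw
    let r : W → K := fun w =>
      if h : w ∈ t (φ w) then ⟨w, h⟩ else ⟨c (φ w), hmemK _ _ (hc (φ w))⟩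
    let φ' : K → V := fun x => φ x.1
    have hφr : ∀ w, φ' (r w) = φ w := by
      intro w
      by_cases h : w ∈ t (φ w)
      · simp only [r]
        rw [dif_pos h]
      · simp only [r]
        rw [dif_neg h]
        exact hφc (φ w)
    have hrK : ∀ x : K, r x.1 = x := by
      rintro ⟨w, hw⟩
      simp only [r]
      exact dif_pos hw
    refine ⟨K, inferInstance, ⟨H.edges.map (Sym2.map (fun w => (r w : K)))⟩, φ',
      ⟨?_, ?_⟩, ⟨?_, ?_⟩, ?_⟩
    · exact ⟨r (Classical.choice hconn.1)⟩
    · intro x y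
      have h0 := Relation.ReflTransGen.lift
        (p := Multigraph.Adj
          (⟨H.edges.map (Sym2.map (fun w => (r w : K)))⟩ : Multigraph K))
        (fun w => (r w : K))
        (fun a b hab =>
          show s((r a : K), (r b : K)) ∈ H.edges.map (Sym2.map (fun w => (r w : K))) by
            rw [show s((r a : K), (r b : K))
                = Sym2.map (fun w => (r w : K)) s(a, b) from
                (Sym2.map_pair_eq _ a b).symm]
            exact Multiset.mem_map_of_mem _ hab) _ _ (hconn.2 x.1 y.1)
      simpa only [Function.onFun, hrK] using h0
    · exact fun v => ⟨r (c v), by rw [hφr]; exact hφc v⟩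
    · intro u v
      show _ = Multiset.count s(u, v)
        ((H.edges.map (Sym2.map (fun w => (r w : K)))).map (Sym2.map φ'))
      rw [hcount u v, Multiset.map_map]
      have hcg : Sym2.map φ' ∘ Sym2.map (fun w => (r w : K)) = Sym2.map φ := by
        funext e
        rw [Function.comp_apply, Sym2.map_map,
          show φ' ∘ (fun w => (r w : K)) = φ from funext hφr]
      rw [hcg]
    · intro v
      have hequiv : (φ' ⁻¹' {v} : Set K) ≃ (t v) :=
        { toFun := fun x => ⟨x.1.1, by
            have h1 : x.1.1 ∈ t (φ x.1.1) := x.1.2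
            have h2 : φ x.1.1 = v := x.2
            rwa [h2] at h1⟩
          invFun := fun y => ⟨⟨y.1, hmemK v y.1 y.2⟩, hts v y.2⟩
          left_inv := fun x => Subtype.ext (Subtype.ext rfl)
          right_inv := fun y => rfl }
      rw [Nat.card_congr hequiv, Nat.card_coe_set_eq, htcard v]
end

section
/- Let G = (V, E) be a connected multigraph. Then there exists a function f : 2^V → ℤ_{≥0} with f(∅) = 0 that is submodular and monotone, such that a vector μ ∈ ℤ_{≥0}^V is a feasible split vector for G if and only if Σ_{v ∈ S} μ(v) ≤ f(S) for every subset S ⊆ V. (In other words, the feasible split vectors of G are exactly the integral points of a polymatroid.) -/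
open Multigraph


/-- `μ` is a feasible split vector for `G` if `μ + 1` is a feasible multiplicity vector. -/
def FeasibleSplit {V : Type} (G : Multigraph V) (μ : V → ℕ) : Prop :=
  FeasibleMult G (fun v => μ v + 1)


set_option linter.unusedSectionVars false

open Multiset

open Multiset

namespace CC

variable {α : Type} [Finite α]

/-- adjacency from an edge multiset -/
def adj (F : Multiset (Sym2 α)) (a b : α) : Prop := s(a,b) ∈ F

lemma adj_symm {F : Multiset (Sym2 α)} {a b : α} (h : adj F a b) : adj F b a := by
  unfold adj at *; rwa [Sym2.eq_swap]

def conn (F : Multiset (Sym2 α)) (a b : α) : Prop := Relation.ReflTransGen (adj F) a b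

lemma conn_refl (F : Multiset (Sym2 α)) (a : α) : conn F a a := Relation.ReflTransGen.refl

lemma conn_symm {F : Multiset (Sym2 α)} {a b : α} (h : conn F a b) : conn F b a :=
  by haveI : Std.Symm (adj F) := ⟨fun _ _ h => adj_symm h⟩
     exact Std.Symm.symm (r := Relation.ReflTransGen (adj F)) _ _ h

lemma conn_trans {F : Multiset (Sym2 α)} {a b c : α} (h : conn F a b) (h' : conn F b c) :
    conn F a c := Relation.ReflTransGen.trans h h'

lemma conn_equivalence (F : Multiset (Sym2 α)) : Equivalence (conn F) :=
  ⟨conn_refl F, conn_symm, conn_trans⟩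

lemma conn_mono {F F' : Multiset (Sym2 α)} (h : F ≤ F') {a b : α} (hc : conn F a b) :
    conn F' a b :=
  Relation.ReflTransGen.mono (r := adj F) (p := adj F') (fun _ _ hab => mem_of_le h hab) a b hc

lemma conn_of_adj {F : Multiset (Sym2 α)} {a b : α} (h : adj F a b) : conn F a b :=
  Relation.ReflTransGen.single h

/-- number of connected components -/
noncomputable def nc (F : Multiset (Sym2 α)) : ℕ := Nat.card (Quot (conn F))

lemma quot_eq_iff (F : Multiset (Sym2 α)) (a b : α) :
    Quot.mk (conn F) a = Quot.mk (conn F) b ↔ conn F a b := by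
  rw [Quot.eq]
  constructor
  · intro h
    exact (Equivalence.eqvGen_iff (conn_equivalence F)).1 h
  · intro h
    exact Relation.EqvGen.rel _ _ h

lemma nc_congr {F F' : Multiset (Sym2 α)} (h : ∀ a b, conn F a b ↔ conn F' a b) :
    nc F = nc F' := Nat.card_congr (Quot.congrRight h)

lemma nc_le_of_le {F F' : Multiset (Sym2 α)} (h : F ≤ F') : nc F' ≤ nc F := by
  apply Nat.card_le_card_of_surjective (Quot.map id (fun a b hc => conn_mono h hc))
  intro x
  obtain ⟨a, rfl⟩ := Quot.exists_rep x
  exact ⟨Quot.mk _ a, rfl⟩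

/-- path decomposition when adding an edge -/
lemma conn_add_cases {F : Multiset (Sym2 α)} {a b x y : α}
    (h : conn (s(a,b) ::ₘ F) x y) :
    conn F x y ∨ (conn F x a ∧ conn F b y) ∨ (conn F x b ∧ conn F a y) := by
  induction h with
  | refl => exact Or.inl (conn_refl F x)
  | @tail c z _ hadj ih =>
    have hz : s(c,z) ∈ s(a,b) ::ₘ F := hadj
    rcases Multiset.mem_cons.1 hz with hz | hz
    · have hcz : (c = a ∧ z = b) ∨ (c = b ∧ z = a) := by
        rwa [Sym2.eq_iff] at hz
      rcases ih with ih | ⟨h1, h2⟩ | ⟨h1, h2⟩ <;> rcases hcz with ⟨rfl, rfl⟩ | ⟨rfl, rfl⟩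
      · exact Or.inr (Or.inl ⟨ih, conn_refl F _⟩)
      · exact Or.inr (Or.inr ⟨ih, conn_refl F _⟩)
      · exact Or.inr (Or.inl ⟨h1, conn_refl F _⟩)
      · exact Or.inl h1
      · exact Or.inl h1
      · exact Or.inr (Or.inr ⟨h1, conn_refl F _⟩)
    · have : adj F c z := hz
      rcases ih with ih | ⟨h1, h2⟩ | ⟨h1, h2⟩
      · exact Or.inl (conn_trans ih (conn_of_adj this))
      · exact Or.inr (Or.inl ⟨h1, conn_trans h2 (conn_of_adj this)⟩)
      · exact Or.inr (Or.inr ⟨h1, conn_trans h2 (conn_of_adj this)⟩)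

lemma conn_add_of_conn {F : Multiset (Sym2 α)} {a b : α} (hab : conn F a b) (x y : α) :
    conn (s(a,b) ::ₘ F) x y ↔ conn F x y := by
  constructor
  · intro h
    rcases conn_add_cases h with h | ⟨h1, h2⟩ | ⟨h1, h2⟩
    · exact h
    · exact conn_trans h1 (conn_trans hab h2)
    · exact conn_trans h1 (conn_trans (conn_symm hab) h2)
  · exact conn_mono (Multiset.le_cons_self F _)

/-- E3 : adding an edge whose endpoints are connected doesn't change nc -/
lemma nc_add_eq {F : Multiset (Sym2 α)} {a b : α} (hab : conn F a b) :
    nc (s(a,b) ::ₘ F) = nc F :=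
  nc_congr (conn_add_of_conn hab)

/-- E2 : adding an edge decreases nc by at most 1 -/
lemma nc_le_nc_add_one (F : Multiset (Sym2 α)) (a b : α) :
    nc F ≤ nc (s(a,b) ::ₘ F) + 1 := by
  classical
  set F' := s(a,b) ::ₘ F with hF'
  have hmap : ∀ x y : α, conn F x y → conn F' x y := fun x y h => conn_mono (Multiset.le_cons_self F _) h
  -- injection from Quot (conn F) to Quot (conn F') ⊕ Unit
  let g : Quot (conn F) → Quot (conn F') := Quot.map id (fun x y h => hmap x y h)
  let h : Quot (conn F) → Quot (conn F') ⊕ Unit := fun q =>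
    if q = Quot.mk _ a then Sum.inr () else Sum.inl (g q)
  have hg : ∀ x : α, g (Quot.mk _ x) = Quot.mk (conn F') x := fun x => rfl
  have hinj : Function.Injective h := by
    intro q q' hqq'
    obtain ⟨x, rfl⟩ := Quot.exists_rep q
    obtain ⟨y, rfl⟩ := Quot.exists_rep q'
    show Quot.mk (conn F) x = Quot.mk (conn F) y
    simp only [h] at hqq'
    by_cases h1 : Quot.mk (conn F) x = Quot.mk (conn F) a <;>
      by_cases h2 : Quot.mk (conn F) y = Quot.mk (conn F) a
    · rw [h1, h2]
    · rw [if_pos h1, if_neg h2] at hqq'; exact absurd hqq' (by simp)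
    · rw [if_neg h1, if_pos h2] at hqq'; exact absurd hqq' (by simp)
    · rw [if_neg h1, if_neg h2] at hqq'
      have hgg : g (Quot.mk _ x) = g (Quot.mk _ y) := Sum.inl.inj hqq'
      rw [hg, hg, quot_eq_iff] at hgg
      rcases conn_add_cases hgg with hc | ⟨hc1, hc2⟩ | ⟨hc1, hc2⟩
      · rw [quot_eq_iff]; exact hc
      · exact absurd ((quot_eq_iff F x a).2 hc1) h1
      · exact absurd ((quot_eq_iff F y a).2 (conn_symm hc2)) h2
  calc nc F ≤ Nat.card (Quot (conn F') ⊕ Unit) := Nat.card_le_card_of_injective h hinj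
    _ = nc F' + 1 := by simp [nc, Nat.card_sum]

/-- E4 : adding a bridge -/
lemma nc_add_bridge {F : Multiset (Sym2 α)} {a b : α} (hab : ¬ conn F a b) :
    nc (s(a,b) ::ₘ F) + 1 = nc F := by
  classical
  set F' := s(a,b) ::ₘ F with hF'
  refine le_antisymm ?_ (nc_le_nc_add_one F a b)
  -- injection from Quot (conn F') ⊕ Unit into Quot (conn F)
  have hex : ∀ q : Quot (conn F'), ∃ x, Quot.mk _ x = q := fun q => Quot.exists_rep q
  choose rep hrep using hex
  let j : Quot (conn F') → Quot (conn F) := fun q => Quot.mk _ (rep q)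
  have hπ : ∀ x : α, Quot.mk (conn F') (rep (Quot.mk (conn F') x)) = Quot.mk (conn F') x :=
    fun x => hrep _
  have hjinj : Function.Injective j := by
    intro q q' hj
    obtain ⟨x, rfl⟩ := Quot.exists_rep q
    obtain ⟨y, rfl⟩ := Quot.exists_rep q'
    have : conn F (rep (Quot.mk _ x)) (rep (Quot.mk _ y)) := (quot_eq_iff _ _ _).1 hj
    have h2 : conn F' (rep (Quot.mk _ x)) (rep (Quot.mk _ y)) :=
      conn_mono (Multiset.le_cons_self F _) this
    rw [← hπ x, ← hπ y]
    rw [quot_eq_iff]; exact h2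
  have habF' : conn F' a b := conn_of_adj (Multiset.mem_cons_self _ _)
  -- at most one of [a],[b] (in Quot conn F) is in range of j
  have hkey : ¬ (Quot.mk (conn F) a ∈ Set.range j ∧ Quot.mk (conn F) b ∈ Set.range j) := by
    rintro ⟨⟨q1, hq1⟩, ⟨q2, hq2⟩⟩
    obtain ⟨x, rfl⟩ := Quot.exists_rep q1
    obtain ⟨y, rfl⟩ := Quot.exists_rep q2
    -- j q1 = [a] means conn F (rep ..) a,  so [x] = [rep..] = [a] in F'
    have h1 : conn F (rep (Quot.mk _ x)) a := (quot_eq_iff _ _ _).1 hq1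
    have h2 : conn F (rep (Quot.mk _ y)) b := (quot_eq_iff _ _ _).1 hq2
    have e1 : Quot.mk (conn F') x = Quot.mk (conn F') a := by
      rw [← hπ x, quot_eq_iff]; exact conn_mono (Multiset.le_cons_self F _) h1
    have e2 : Quot.mk (conn F') y = Quot.mk (conn F') b := by
      rw [← hπ y, quot_eq_iff]; exact conn_mono (Multiset.le_cons_self F _) h2
    have exy : Quot.mk (conn F') x = Quot.mk (conn F') y := by
      rw [e1, e2, quot_eq_iff]; exact habF'
    -- then q1 = q2, so  j q1 = j q2, so [a] = [b] in F : contradiction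
    have : Quot.mk (conn F) a = Quot.mk (conn F) b := by
      rw [← hq1, ← hq2, exy]
    exact hab ((quot_eq_iff F a b).1 this)
  let k : Quot (conn F') ⊕ Unit → Quot (conn F) := fun q =>
    match q with
    | Sum.inl q => j q
    | Sum.inr _ => if Quot.mk (conn F) a ∈ Set.range j then Quot.mk (conn F) b else Quot.mk (conn F) a
  have hkinj : Function.Injective k := by
    intro q q' hk
    match q, q' with
    | Sum.inl q, Sum.inl q' => exact congrArg Sum.inl (hjinj hk)
    | Sum.inr _, Sum.inr _ => rfl
    | Sum.inl q, Sum.inr _ =>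
      exfalso
      simp only [k] at hk
      by_cases hr : Quot.mk (conn F) a ∈ Set.range j
      · rw [if_pos hr] at hk
        exact hkey ⟨hr, ⟨q, hk⟩⟩
      · rw [if_neg hr] at hk
        exact hr ⟨q, hk⟩
    | Sum.inr _, Sum.inl q =>
      exfalso
      simp only [k] at hk
      by_cases hr : Quot.mk (conn F) a ∈ Set.range j
      · rw [if_pos hr] at hk
        exact hkey ⟨hr, ⟨q, hk.symm⟩⟩
      · rw [if_neg hr] at hk
        exact hr ⟨q, hk.symm⟩
  calc nc F' + 1 = Nat.card (Quot (conn F') ⊕ Unit) := by simp [nc, Nat.card_sum]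
    _ ≤ nc F := Nat.card_le_card_of_injective k hkinj

end CC

namespace CC

open scoped Classical

variable {α : Type} [Finite α]

lemma nc_def (F : Multiset (Sym2 α)) : nc F = Nat.card (Quot (conn F)) := rfl

lemma nc_le_erase (F : Multiset (Sym2 α)) (r : Sym2 α) : nc F ≤ nc (F.erase r) := by
  classical
  exact nc_le_of_le (Multiset.erase_le r F)

lemma nc_erase_le (F : Multiset (Sym2 α)) (r : Sym2 α) : nc (F.erase r) ≤ nc F + 1 := by
  classical
  by_cases hr : r ∈ F
  · induction r with
    | _ a b =>
      conv_rhs => rw [← Multiset.cons_erase hr]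
      exact nc_le_nc_add_one _ a b
  · rw [Multiset.erase_of_notMem hr]; omega

lemma nc_erase_eq_of_conn {F : Multiset (Sym2 α)} {a b : α} (hr : s(a,b) ∈ F)
    (h : conn (F.erase s(a,b)) a b) : nc (F.erase s(a,b)) = nc F := by
  classical
  conv_rhs => rw [← Multiset.cons_erase hr]
  exact (nc_add_eq h).symm

lemma nc_erase_bridge {F : Multiset (Sym2 α)} {a b : α} (hr : s(a,b) ∈ F)
    (h : ¬ conn (F.erase s(a,b)) a b) : nc F + 1 = nc (F.erase s(a,b)) := by
  classical
  conv_lhs => rw [← Multiset.cons_erase hr]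
  exact nc_add_bridge h

lemma nc_sub_le (F D : Multiset (Sym2 α)) : nc (F - D) ≤ nc F + Multiset.card D := by
  classical
  induction D using Multiset.induction generalizing F with
  | empty => simp
  | cons r D ih =>
    rw [Multiset.sub_cons]
    calc nc (F.erase r - D) ≤ nc (F.erase r) + Multiset.card D := ih _
      _ ≤ nc F + 1 + Multiset.card D := by have := nc_erase_le F r; omega
      _ = nc F + Multiset.card (r ::ₘ D) := by simp; omega

lemma cons_le_destruct {r : Sym2 α} {D Y : Multiset (Sym2 α)} (h : r ::ₘ D ≤ Y) :
    r ∈ Y ∧ D ≤ Y.erase r := by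
  classical
  constructor
  · exact Multiset.mem_of_le h (Multiset.mem_cons_self r D)
  · rw [Multiset.le_iff_count]
    intro x
    have hc := (Multiset.le_iff_count.1 h) x
    rw [Multiset.count_cons] at hc
    by_cases hx : x = r
    · subst hx
      rw [Multiset.count_erase_self]
      simp at hc
      omega
    · rw [Multiset.count_erase_of_ne hx]
      simp [hx] at hc
      omega

lemma nc_sub_bridges {Y D : Multiset (Sym2 α)} (hD : D ≤ Y)
    (hbr : ∀ a b : α, s(a,b) ∈ D → ¬ conn (Y.erase s(a,b)) a b) :
    nc (Y - D) = nc Y + Multiset.card D := by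
  classical
  induction D using Multiset.induction generalizing Y with
  | empty => simp
  | cons r D ih =>
    obtain ⟨hrY, hDY⟩ := cons_le_destruct hD
    rw [Multiset.sub_cons]
    induction r with
    | _ a b =>
      have hb : ¬ conn (Y.erase s(a,b)) a b := hbr a b (Multiset.mem_cons_self _ _)
      have h1 : nc (Y.erase s(a,b)) = nc Y + 1 := (nc_erase_bridge hrY hb).symm
      have h2 : nc (Y.erase s(a,b) - D) = nc (Y.erase s(a,b)) + Multiset.card D := by
        apply ih hDY
        intro a' b' hmem hconn
        apply hbr a' b' (Multiset.mem_cons_of_mem hmem)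
        apply conn_mono _ hconn
        rw [Multiset.erase_comm]
        exact Multiset.erase_le _ _
      rw [h2, h1]; simp; omega

lemma nc_eq_one_iff {F : Multiset (Sym2 α)} (hne : Nonempty α) :
    nc F = 1 ↔ ∀ x y : α, conn F x y := by
  rw [nc_def]
  constructor
  · intro h x y
    rw [Nat.card_eq_one_iff_unique] at h
    have := h.1
    have : Quot.mk (conn F) x = Quot.mk (conn F) y := Subsingleton.elim _ _
    rwa [quot_eq_iff] at this
  · intro h
    rw [Nat.card_eq_one_iff_unique]
    obtain ⟨x⟩ := hne
    refine ⟨⟨fun q q' => ?_⟩, ⟨Quot.mk _ x⟩⟩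
    obtain ⟨u, rfl⟩ := Quot.exists_rep q
    obtain ⟨v, rfl⟩ := Quot.exists_rep q'
    rw [quot_eq_iff]
    exact h u v

lemma conn_isolated {F : Multiset (Sym2 α)} {v y : α} (h : ∀ e ∈ F, v ∉ e)
    (hc : conn F v y) : y = v := by
  rcases (Relation.ReflTransGen.cases_head hc) with rfl | ⟨c, hadj, _⟩
  · rfl
  · exact absurd (Sym2.mem_mk_left v c) (h _ hadj)

end CC

namespace CC

open scoped Classical

variable {α : Type} [Finite α]

lemma nc_le_add_multiset (C D : Multiset (Sym2 α)) : nc C ≤ nc (C + D) + Multiset.card D := by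
  induction D using Multiset.induction generalizing C with
  | empty => simp
  | cons r D ih =>
    induction r with
    | _ a b =>
      have h1 : nc C ≤ nc (s(a,b) ::ₘ C) + 1 := nc_le_nc_add_one C a b
      have h2 : nc (s(a,b) ::ₘ C) ≤ nc ((s(a,b) ::ₘ C) + D) + Multiset.card D := ih _
      have he : (s(a,b) ::ₘ C) + D = C + (s(a,b) ::ₘ D) := by
        rw [Multiset.cons_add, Multiset.add_cons]
      rw [he] at h2
      simp only [Multiset.card_cons]
      omega

lemma nc_add_le (C D : Multiset (Sym2 α)) : nc (C + D) ≤ nc C :=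
  nc_le_of_le (Multiset.le_add_right C D)

/-- diminishing returns, single edge -/
lemma nc_exchange_single {C C' : Multiset (Sym2 α)} (h : C ≤ C') (a b : α) :
    nc (s(a,b) ::ₘ C) + nc C' ≤ nc (s(a,b) ::ₘ C') + nc C := by
  by_cases hc : conn C a b
  · rw [nc_add_eq hc, nc_add_eq (conn_mono h hc)]; omega
  · have h1 : nc (s(a,b) ::ₘ C) + 1 = nc C := nc_add_bridge hc
    have h2 : nc C' ≤ nc (s(a,b) ::ₘ C') + 1 := nc_le_nc_add_one C' a b
    omega

/-- diminishing returns / supermodularity of component count -/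
lemma nc_exchange {C C' : Multiset (Sym2 α)} (h : C ≤ C') (D : Multiset (Sym2 α)) :
    nc (C + D) + nc C' ≤ nc (C' + D) + nc C := by
  induction D using Multiset.induction generalizing C C' with
  | empty => simp [Nat.add_comm]
  | cons r D ih =>
    induction r with
    | _ a b =>
      have key : nc ((s(a,b) ::ₘ C) + D) + nc (s(a,b) ::ₘ C') ≤
          nc ((s(a,b) ::ₘ C') + D) + nc (s(a,b) ::ₘ C) :=
        ih (Multiset.cons_le_cons _ h)
      have k2 : nc (s(a,b) ::ₘ C) + nc C' ≤ nc (s(a,b) ::ₘ C') + nc C :=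
        nc_exchange_single h a b
      have e1 : C + (s(a,b) ::ₘ D) = (s(a,b) ::ₘ C) + D := by
        rw [Multiset.cons_add, Multiset.add_cons]
      have e2 : C' + (s(a,b) ::ₘ D) = (s(a,b) ::ₘ C') + D := by
        rw [Multiset.cons_add, Multiset.add_cons]
      rw [e1, e2]
      omega

section fP

/-- classical filter with a fixed instance, to keep terms syntactically stable -/
noncomputable def sel (p : Sym2 α → Prop) (E : Multiset (Sym2 α)) : Multiset (Sym2 α) :=
  @Multiset.filter _ p (Classical.decPred p) E

lemma count_sel (p : Sym2 α → Prop) (E : Multiset (Sym2 α)) (x : Sym2 α) :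
    Multiset.count x (sel p E) = if p x then Multiset.count x E else 0 := by
  unfold sel
  rw [Multiset.count_filter]

lemma mem_sel {p : Sym2 α → Prop} {E : Multiset (Sym2 α)} {x : Sym2 α} :
    x ∈ sel p E ↔ x ∈ E ∧ p x := by
  unfold sel
  rw [Multiset.mem_filter]

lemma sel_le (p : Sym2 α → Prop) (E : Multiset (Sym2 α)) : sel p E ≤ E :=
  Multiset.filter_le _ _

variable (E : Multiset (Sym2 α))

/-- the submodular function, at predicate level -/
noncomputable def fP (p : Sym2 α → Prop) : ℕ :=
  Multiset.card (sel p E) + 1 - nc (sel (fun e => ¬ p e) E)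

variable {E}

lemma sel_not_eq_sub (p : Sym2 α → Prop) :
    sel (fun e => ¬ p e) E = E - sel p E := by
  ext x
  rw [Multiset.count_sub, count_sel, count_sel]
  by_cases hp : p x <;> simp [hp]

lemma nc_sel_not_le (hE : nc E = 1) (p : Sym2 α → Prop) :
    nc (sel (fun e => ¬ p e) E) ≤ Multiset.card (sel p E) + 1 := by
  rw [sel_not_eq_sub]
  have := nc_sub_le E (sel p E)
  omega

lemma fP_eq (hE : nc E = 1) (p : Sym2 α → Prop) :
    fP E p + nc (sel (fun e => ¬ p e) E) = Multiset.card (sel p E) + 1 := by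
  have := nc_sel_not_le hE p
  unfold fP
  omega

lemma sel_eq_sel {p q : Sym2 α → Prop} (h : ∀ e ∈ E, p e ↔ q e) :
    sel p E = sel q E := by
  ext x
  rw [count_sel, count_sel]
  by_cases hx : x ∈ E
  · have := h x hx
    by_cases hp : p x <;> by_cases hq : q x <;> simp [hp, hq] <;> tauto
  · have : Multiset.count x E = 0 := by rwa [Multiset.count_eq_zero]
    simp [this]

lemma fP_congr {p q : Sym2 α → Prop} (h : ∀ e ∈ E, p e ↔ q e) : fP E p = fP E q := by
  unfold fP
  rw [sel_eq_sel h, sel_eq_sel (fun e he => not_congr (h e he))]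

lemma fP_mono (hE : nc E = 1) {p q : Sym2 α → Prop} (h : ∀ e, p e → q e) :
    fP E p ≤ fP E q := by
  set D := sel (fun e => q e ∧ ¬ p e) E with hD
  have hq : sel q E = sel p E + D := by
    ext x
    simp only [hD, Multiset.count_add, count_sel]
    by_cases hp : p x <;> by_cases hqx : q x <;> simp [hp, hqx]
    exact absurd (h x hp) hqx
  have hp : sel (fun e => ¬ p e) E = sel (fun e => ¬ q e) E + D := by
    ext x
    simp only [hD, Multiset.count_add, count_sel]
    by_cases hpx : p x <;> by_cases hqx : q x <;> simp [hpx, hqx]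
    exact absurd (h x hpx) hqx
  have e1 := fP_eq hE p
  have e2 := fP_eq hE q
  have hnc : nc (sel (fun e => ¬ q e) E) ≤
      nc (sel (fun e => ¬ p e) E) + Multiset.card D := by
    rw [hp]
    exact nc_le_add_multiset _ _
  have hcard : Multiset.card (sel q E) =
      Multiset.card (sel p E) + Multiset.card D := by
    rw [hq, Multiset.card_add]
  omega

lemma fP_submodular (hE : nc E = 1) (p q : Sym2 α → Prop) :
    fP E (fun e => p e ∨ q e) + fP E (fun e => p e ∧ q e) ≤ fP E p + fP E q := by
  set N := sel (fun e => ¬ p e ∧ ¬ q e) E with hN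
  set Dp := sel (fun e => p e ∧ ¬ q e) E with hDp
  set Dq := sel (fun e => q e ∧ ¬ p e) E with hDq
  set X := sel (fun e => p e ∧ q e) E with hX
  have c1 : sel (fun e => ¬ p e) E = N + Dq := by
    ext x
    simp only [hN, hDq, Multiset.count_add, count_sel]
    by_cases h1 : p x <;> by_cases h2 : q x <;> simp [h1, h2]
  have c2 : sel (fun e => ¬ q e) E = N + Dp := by
    ext x
    simp only [hN, hDp, Multiset.count_add, count_sel]
    by_cases h1 : p x <;> by_cases h2 : q x <;> simp [h1, h2]
  have c3 : sel (fun e => ¬ (p e ∨ q e)) E = N := by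
    ext x
    simp only [hN, count_sel]
    by_cases h1 : p x <;> by_cases h2 : q x <;> simp [h1, h2]
  have c4 : sel (fun e => ¬ (p e ∧ q e)) E = N + Dp + Dq := by
    ext x
    simp only [hN, hDp, hDq, Multiset.count_add, count_sel]
    by_cases h1 : p x <;> by_cases h2 : q x <;> simp [h1, h2]
  have c5 : sel (fun e => p e ∨ q e) E = X + Dp + Dq := by
    ext x
    simp only [hX, hDp, hDq, Multiset.count_add, count_sel]
    by_cases h1 : p x <;> by_cases h2 : q x <;> simp [h1, h2]
  have c6 : sel p E = X + Dp := by
    ext x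
    simp only [hX, hDp, Multiset.count_add, count_sel]
    by_cases h1 : p x <;> by_cases h2 : q x <;> simp [h1, h2]
  have c7 : sel q E = X + Dq := by
    ext x
    simp only [hX, hDq, Multiset.count_add, count_sel]
    by_cases h1 : p x <;> by_cases h2 : q x <;> simp [h1, h2]
  have key : nc (N + Dp) + nc (N + Dq) ≤ nc (N + Dq + Dp) + nc N :=
    nc_exchange (Multiset.le_add_right N Dq) Dp
  have e1 := fP_eq hE p
  have e2 := fP_eq hE q
  have e3 := fP_eq hE (fun e => p e ∨ q e)
  have e4 := fP_eq hE (fun e => p e ∧ q e)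
  rw [c1, c6] at e1
  rw [c2, c7] at e2
  rw [c3, c5] at e3
  rw [c4] at e4
  rw [← hX] at e4
  have hperm : nc (N + Dq + Dp) = nc (N + Dp + Dq) := by
    rw [add_assoc, add_assoc, add_comm Dq Dp]
  rw [hperm] at key
  simp only [Multiset.card_add] at e1 e2 e3 e4
  omega

end fP

end CC


namespace CC

open scoped Classical

variable {V : Type} [Finite V]

def touch (S : Set V) (e : Sym2 V) : Prop := ∃ x ∈ e, x ∈ S

lemma touch_mono {S S' : Set V} (h : S ⊆ S') {e : Sym2 V} (ht : touch S e) : touch S' e := by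
  obtain ⟨x, hx, hxS⟩ := ht
  exact ⟨x, hx, h hxS⟩

lemma touch_map {W : Type} (φ : W → V) (S : Set V) (e : Sym2 W) :
    touch S (Sym2.map φ e) ↔ touch (φ ⁻¹' S) e := by
  unfold touch
  constructor
  · rintro ⟨x, hx, hxS⟩
    rw [Sym2.mem_map] at hx
    obtain ⟨a, ha, rfl⟩ := hx
    exact ⟨a, ha, hxS⟩
  · rintro ⟨a, ha, haS⟩
    exact ⟨φ a, Sym2.mem_map.2 ⟨a, ha, rfl⟩, haS⟩

lemma sel_cons_pos {p : Sym2 V → Prop} {a : Sym2 V} (M : Multiset (Sym2 V)) (hp : p a) :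
    sel p (a ::ₘ M) = a ::ₘ sel p M := by
  ext x
  rw [count_sel, Multiset.count_cons, Multiset.count_cons, count_sel]
  by_cases hx : x = a
  · subst hx; simp [hp]
  · simp [hx]

lemma sel_cons_neg {p : Sym2 V → Prop} {a : Sym2 V} (M : Multiset (Sym2 V)) (hp : ¬ p a) :
    sel p (a ::ₘ M) = sel p M := by
  ext x
  rw [count_sel, Multiset.count_cons, count_sel]
  by_cases hx : x = a
  · subst hx; simp [hp]
  · simp [hx]

lemma sel_zero (p : Sym2 V → Prop) : sel p (0 : Multiset (Sym2 V)) = 0 := by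
  ext x
  rw [count_sel]
  simp

lemma sel_map {W : Type} [Finite W] (f : W → V) (p : Sym2 V → Prop) (M : Multiset (Sym2 W)) :
    (sel (fun e => p (Sym2.map f e)) M).map (Sym2.map f) = sel p (M.map (Sym2.map f)) := by
  induction M using Multiset.induction with
  | empty => rw [Multiset.map_zero, sel_zero, sel_zero, Multiset.map_zero]
  | cons a M ih =>
    rw [Multiset.map_cons]
    by_cases hp : p (Sym2.map f a)
    · rw [sel_cons_pos M hp, sel_cons_pos (M.map (Sym2.map f)) hp, Multiset.map_cons, ih]
    · rw [sel_cons_neg M hp, sel_cons_neg (M.map (Sym2.map f)) hp, ih]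

lemma homimage_map_eq {W : Type} {G : Multigraph V} {H : Multigraph W} {φ : W → V}
    (h : Multigraph.IsHomImage G H φ) : H.edges.map (Sym2.map φ) = G.edges := by
  ext z
  induction z with
  | _ u v => exact (h.2 u v).symm

theorem sum_le_fP_of_feasible {G : Multigraph V} (hconn : Multigraph.Connected G)
    {μ : V → ℕ} (hfeas : FeasibleSplit G μ) (S : Set V) :
    (∑ᶠ v ∈ S, μ v) ≤ fP G.edges (touch S) := by
  classical
  obtain ⟨W, hWfin, H, φ, hHconn, hHom, hpre⟩ := hfeas
  have hNW : Nonempty W := hHconn.1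
  have hNV : Nonempty V := hconn.1
  have hncE : nc G.edges = 1 := (nc_eq_one_iff hNV).2 hconn.2
  have hncH : nc H.edges = 1 := (nc_eq_one_iff hNW).2 hHconn.2
  have hmapeq : H.edges.map (Sym2.map φ) = G.edges := homimage_map_eq hHom
  set pW : Sym2 W → Prop := fun e => touch S (Sym2.map φ e) with hpW
  set restW := sel (fun e => ¬ pW e) H.edges with hrestW
  set restV := sel (fun e => ¬ touch S e) G.edges with hrestV
  -- image of restW is restV
  have himg : restW.map (Sym2.map φ) = restV := by
    rw [hrestW, hrestV, ← hmapeq]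
    exact sel_map φ (fun e => ¬ touch S e) H.edges
  have hcards : Multiset.card (sel pW H.edges) = Multiset.card (sel (touch S) G.edges) := by
    rw [← hmapeq, ← sel_map φ (touch S) H.edges, Multiset.card_map]
  -- the pushforward map on components
  have hadjmap : ∀ w w' : W, conn restW w w' → conn restV (φ w) (φ w') := by
    intro w w' hc
    apply Relation.ReflTransGen.lift φ _ w w' hc
    intro a b hab
    show s(φ a, φ b) ∈ restV
    rw [← himg]
    have : Sym2.map φ s(a, b) = s(φ a, φ b) := by simp
    rw [← this]
    exact Multiset.mem_map_of_mem _ hab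
  set QW := Quot (conn restW) with hQW
  set QV := Quot (conn restV) with hQV
  let ψ : QW → QV := Quot.map φ hadjmap
  have hψmk : ∀ w : W, ψ (Quot.mk _ w) = Quot.mk _ (φ w) := fun _ => rfl
  have hψsurj : Function.Surjective ψ := by
    intro q
    obtain ⟨v, rfl⟩ := Quot.exists_rep q
    obtain ⟨w, rfl⟩ := hHom.1 v
    exact ⟨Quot.mk _ w, rfl⟩
  -- isolated vertices
  have hisoW : ∀ w : W, φ w ∈ S → ∀ w' : W, conn restW w w' → w' = w := by
    intro w hw w' hc
    apply conn_isolated _ hc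
    intro e he hwe
    rw [hrestW, mem_sel] at he
    exact he.2 ⟨φ w, Sym2.mem_map.2 ⟨w, hwe, rfl⟩, hw⟩
  have hisoV : ∀ v : V, v ∈ S → ∀ v' : V, conn restV v v' → v' = v := by
    intro v hv v' hc
    apply conn_isolated _ hc
    intro e he hve
    rw [hrestV, mem_sel] at he
    exact he.2 ⟨v, hve, hv⟩
  have finQW : Fintype QW := Fintype.ofFinite _
  have finQV : Fintype QV := Fintype.ofFinite _
  have fintypeV : Fintype V := Fintype.ofFinite V
  have hfiber : Fintype.card QW =
      ∑ q ∈ (Finset.univ : Finset QV), (Finset.univ.filter (fun x : QW => ψ x = q)).card := by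
    exact Finset.card_eq_sum_card_fiberwise (fun x _ => Finset.mem_univ (ψ x))
  set ι : V → QV := fun v => Quot.mk _ v with hι
  have hιinj : Set.InjOn ι S := by
    intro v hv v' hv' he
    have : conn restV v v' := (quot_eq_iff _ _ _).1 he
    exact (hisoV v hv v' this).symm
  set SF : Finset V := Set.toFinset S with hSF
  have hSFmem : ∀ v, v ∈ SF ↔ v ∈ S := fun v => Set.mem_toFinset
  set T : Finset QV := SF.image ι with hT
  have hTcard : T.card = SF.card := by
    rw [hT]
    apply Finset.card_image_of_injOn
    intro a ha b hb
    exact hιinj ((hSFmem a).1 ha) ((hSFmem b).1 hb)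
  -- fiber over ι v (v ∈ S) has at least μ v + 1 elements
  have hbig : ∀ v ∈ SF, μ v + 1 ≤ (Finset.univ.filter (fun x : QW => ψ x = ι v)).card := by
    intro v hv
    have hvS : v ∈ S := (hSFmem v).1 hv
    have hcard_pre : Nat.card (φ ⁻¹' {v}) = μ v + 1 := hpre v
    set emb : (φ ⁻¹' {v}) → QW := fun w => Quot.mk _ (w : W) with hemb
    have hembinj : Function.Injective emb := by
      intro w w' he
      have : conn restW w w' := (quot_eq_iff _ _ _).1 he
      have := hisoW w (by rw [w.2]; exact hvS) w' this
      exact Subtype.ext this.symm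
    have hembrange : ∀ w : (φ ⁻¹' {v}), emb w ∈ Finset.univ.filter (fun x : QW => ψ x = ι v) := by
      intro w
      rw [Finset.mem_filter]
      refine ⟨Finset.mem_univ _, ?_⟩
      rw [hemb, hψmk, hι]
      have : φ (w : W) = v := w.2
      rw [this]
    -- injective map into the filtered set
    have : Nat.card (φ ⁻¹' {v}) ≤ (Finset.univ.filter (fun x : QW => ψ x = ι v)).card := by
      have hinj2 : Function.Injective
          (fun w : (φ ⁻¹' {v}) => (⟨emb w, hembrange w⟩ :
            {x : QW // x ∈ Finset.univ.filter (fun x : QW => ψ x = ι v)})) := by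
        intro a b hab
        exact hembinj (congrArg Subtype.val hab)
      calc Nat.card (φ ⁻¹' {v})
          ≤ Nat.card {x : QW // x ∈ Finset.univ.filter (fun x : QW => ψ x = ι v)} :=
            Nat.card_le_card_of_injective _ hinj2
        _ = (Finset.univ.filter (fun x : QW => ψ x = ι v)).card := by
            rw [Nat.card_eq_fintype_card, Fintype.card_coe]
    omega
  have hone : ∀ q : QV, 1 ≤ (Finset.univ.filter (fun x : QW => ψ x = q)).card := by
    intro q
    obtain ⟨x, hx⟩ := hψsurj q
    exact Finset.card_pos.2 ⟨x, by rw [Finset.mem_filter]; exact ⟨Finset.mem_univ _, hx⟩⟩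
  -- put together the lower bound on card QW
  have hlow : (∑ v ∈ SF, (μ v + 1)) + (Fintype.card QV - T.card) ≤ Fintype.card QW := by
    rw [hfiber]
    rw [← Finset.sum_filter_add_sum_filter_not Finset.univ (fun q => q ∈ T)]
    have h1 : (∑ v ∈ SF, (μ v + 1)) ≤
        ∑ q ∈ Finset.univ.filter (fun q : QV => q ∈ T),
          (Finset.univ.filter (fun x : QW => ψ x = q)).card := by
      have : Finset.univ.filter (fun q : QV => q ∈ T) = T := by
        ext q; simp
      rw [this, hT, Finset.sum_image (fun a ha b hb => hιinj ((hSFmem a).1 ha) ((hSFmem b).1 hb))]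
      exact Finset.sum_le_sum hbig
    have h2 : Fintype.card QV - T.card ≤
        ∑ q ∈ Finset.univ.filter (fun q : QV => q ∉ T),
          (Finset.univ.filter (fun x : QW => ψ x = q)).card := by
      calc Fintype.card QV - T.card
          = (Finset.univ.filter (fun q : QV => q ∉ T)).card := by
            have huf : (Finset.univ.filter (fun q : QV => q ∉ T)) = Finset.univ \ T := by
              ext q; simp
            rw [huf, Finset.card_sdiff_of_subset (Finset.subset_univ T), Finset.card_univ]
        _ = ∑ _q ∈ Finset.univ.filter (fun q : QV => q ∉ T), 1 := by
            rw [Finset.card_eq_sum_ones]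
        _ ≤ _ := Finset.sum_le_sum (fun q _ => hone q)
    omega
  -- upper bound on card QW
  have hQWcard : Fintype.card QW ≤ 1 + Multiset.card (sel pW H.edges) := by
    have h1 : restW = H.edges - sel pW H.edges := by
      rw [hrestW]
      exact sel_not_eq_sub pW
    have h2 : nc restW ≤ nc H.edges + Multiset.card (sel pW H.edges) := by
      rw [h1]
      exact nc_sub_le _ _
    have h3 : nc restW = Fintype.card QW := by
      rw [nc_def, ← Nat.card_eq_fintype_card]
    omega
  have hncrestV : nc restV = Fintype.card QV := by
    rw [nc_def, ← Nat.card_eq_fintype_card]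
  have hfp := fP_eq hncE (touch S)
  rw [← hrestV, hncrestV] at hfp
  have hsum : (∑ᶠ v ∈ S, μ v) = ∑ v ∈ SF, μ v := by
    rw [hSF, ← Set.coe_toFinset S, finsum_mem_coe_finset]
    simp
  have hsplit : (∑ v ∈ SF, (μ v + 1)) = (∑ v ∈ SF, μ v) + SF.card := by
    rw [Finset.sum_add_distrib, Finset.sum_const, smul_eq_mul, mul_one]
  have hTle : T.card ≤ Fintype.card QV := by
    calc T.card ≤ Finset.univ.card := Finset.card_le_card (Finset.subset_univ T)
      _ = Fintype.card QV := Finset.card_univ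
  rw [hsum]
  omega

end CC


namespace CC

open scoped Classical

variable {V : Type} [Finite V]

lemma sel_le_sel {p q : Sym2 V → Prop} (h : ∀ e, p e → q e) (E : Multiset (Sym2 V)) :
    sel p E ≤ sel q E := by
  rw [Multiset.le_iff_count]
  intro x
  rw [count_sel, count_sel]
  by_cases hp : p x
  · simp [hp, h x hp]
  · simp [hp]

lemma sel_erase_pos {p : Sym2 V → Prop} {r : Sym2 V} (hp : p r) (E : Multiset (Sym2 V)) :
    sel p (E.erase r) = (sel p E).erase r := by
  ext x
  by_cases hx : x = r
  · subst hx
    rw [Multiset.count_erase_self, count_sel, count_sel, Multiset.count_erase_self]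
    simp [hp]
  · rw [Multiset.count_erase_of_ne hx, count_sel, count_sel, Multiset.count_erase_of_ne hx]

lemma sel_erase_neg {p : Sym2 V → Prop} {r : Sym2 V} (hp : ¬ p r) (E : Multiset (Sym2 V)) :
    sel p (E.erase r) = sel p E := by
  ext x
  by_cases hx : x = r
  · subst hx
    rw [count_sel, count_sel]
    simp [hp]
  · rw [count_sel, Multiset.count_erase_of_ne hx, count_sel]

lemma mem_sel_of {p : Sym2 V → Prop} {r : Sym2 V} {E : Multiset (Sym2 V)} (hr : r ∈ E)
    (hp : p r) : r ∈ sel p E := mem_sel.2 ⟨hr, hp⟩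

/-- removing one edge decreases fP by at most one -/
lemma fP_erase_ge {E : Multiset (Sym2 V)} {r : Sym2 V} (hE : nc E = 1)
    (hE' : nc (E.erase r) = 1) (hr : r ∈ E) (p : Sym2 V → Prop) :
    fP E p ≤ fP (E.erase r) p + 1 := by
  have h1 := fP_eq hE p
  have h2 := fP_eq hE' p
  by_cases hp : p r
  · rw [sel_erase_pos hp, sel_erase_neg (fun h => h hp)] at h2
    have hcard : Multiset.card ((sel p E).erase r) = Multiset.card (sel p E) - 1 := by
      rw [Multiset.card_erase_of_mem (mem_sel_of hr hp)]
      exact Nat.pred_eq_sub_one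
    have hpos : 0 < Multiset.card (sel p E) :=
      Multiset.card_pos_iff_exists_mem.2 ⟨r, mem_sel_of hr hp⟩
    omega
  · rw [sel_erase_neg hp, sel_erase_pos (p := fun e => ¬ p e) hp] at h2
    have hnc : nc ((sel (fun e => ¬ p e) E).erase r) ≤ nc (sel (fun e => ¬ p e) E) + 1 :=
      nc_erase_le _ _
    omega

/-- removing an edge not affecting `p` nor connectivity of the rest keeps fP -/
lemma fP_erase_eq {E : Multiset (Sym2 V)} {a b : V} (hE : nc E = 1)
    (hE' : nc (E.erase s(a,b)) = 1) (hr : s(a,b) ∈ E) {p : Sym2 V → Prop}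
    (hp : ¬ p s(a,b)) (hconn : conn ((sel (fun e => ¬ p e) E).erase s(a,b)) a b) :
    fP (E.erase s(a,b)) p = fP E p := by
  have h1 := fP_eq hE p
  have h2 := fP_eq hE' p
  rw [sel_erase_neg hp, sel_erase_pos (p := fun e => ¬ p e) hp] at h2
  have hnc : nc ((sel (fun e => ¬ p e) E).erase s(a,b)) = nc (sel (fun e => ¬ p e) E) :=
    nc_erase_eq_of_conn (mem_sel_of hr hp) hconn
  omega

lemma touch_empty (e : Sym2 V) : ¬ touch (∅ : Set V) e := by
  rintro ⟨x, _, hx⟩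
  exact hx

lemma touch_union (A B : Set V) (e : Sym2 V) :
    touch (A ∪ B) e ↔ touch A e ∨ touch B e := by
  unfold touch
  constructor
  · rintro ⟨x, hx, hxAB⟩
    rcases hxAB with h | h
    · exact Or.inl ⟨x, hx, h⟩
    · exact Or.inr ⟨x, hx, h⟩
  · rintro (⟨x, hx, h⟩ | ⟨x, hx, h⟩)
    · exact ⟨x, hx, Or.inl h⟩
    · exact ⟨x, hx, Or.inr h⟩

lemma touch_inter (A B : Set V) (e : Sym2 V) (h : touch (A ∩ B) e) :
    touch A e ∧ touch B e := by
  obtain ⟨x, hx, hA, hB⟩ := h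
  exact ⟨⟨x, hx, hA⟩, ⟨x, hx, hB⟩⟩

lemma fP_touch_empty {E : Multiset (Sym2 V)} (hE : nc E = 1) :
    fP E (touch (∅ : Set V)) = 0 := by
  have h1 : sel (touch (∅ : Set V)) E = 0 := by
    ext x
    rw [count_sel]
    simp [touch_empty]
  have h2 : sel (fun e => ¬ touch (∅ : Set V) e) E = E := by
    ext x
    rw [count_sel]
    simp [touch_empty]
  unfold fP
  rw [h1, h2, hE]
  simp

lemma fP_touch_union_inter {E : Multiset (Sym2 V)} (hE : nc E = 1) (A B : Set V) :
    fP E (touch (A ∪ B)) + fP E (touch (A ∩ B)) ≤ fP E (touch A) + fP E (touch B) := by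
  have h1 : fP E (touch (A ∪ B)) = fP E (fun e => touch A e ∨ touch B e) :=
    fP_congr (fun e _ => touch_union A B e)
  have h2 : fP E (touch (A ∩ B)) ≤ fP E (fun e => touch A e ∧ touch B e) :=
    fP_mono hE (fun e => touch_inter A B e)
  have h3 := fP_submodular hE (touch A) (touch B)
  omega

lemma fP_touch_mono {E : Multiset (Sym2 V)} (hE : nc E = 1) {A B : Set V} (h : A ⊆ B) :
    fP E (touch A) ≤ fP E (touch B) :=
  fP_mono hE (fun e he => touch_mono h he)

-- finsum helpers
lemma msum_eq_finset (μ : V → ℕ) (S : Set V) [Fintype V] :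
    (∑ᶠ v ∈ S, μ v) = ∑ v ∈ S.toFinset, μ v := by
  rw [← Set.coe_toFinset S, finsum_mem_coe_finset]
  simp

lemma msum_union_inter (μ : V → ℕ) (A B : Set V) :
    (∑ᶠ v ∈ A ∪ B, μ v) + (∑ᶠ v ∈ A ∩ B, μ v) = (∑ᶠ v ∈ A, μ v) + (∑ᶠ v ∈ B, μ v) := by
  have : Fintype V := Fintype.ofFinite V
  rw [msum_eq_finset, msum_eq_finset, msum_eq_finset, msum_eq_finset,
    Set.toFinset_union, Set.toFinset_inter]
  exact Finset.sum_union_inter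

lemma msum_insert (μ : V → ℕ) {S : Set V} {v : V} (hv : v ∉ S) :
    (∑ᶠ x ∈ insert v S, μ x) = μ v + ∑ᶠ x ∈ S, μ x := by
  have h := msum_union_inter μ {v} S
  rw [Set.singleton_inter_eq_empty.2 hv, Set.singleton_union] at h
  rw [finsum_mem_singleton] at h
  simp only [finsum_mem_empty] at h
  omega

lemma msum_empty (μ : V → ℕ) : (∑ᶠ v ∈ (∅ : Set V), μ v) = 0 := by
  simp

end CC


namespace CC

open scoped Classical

variable {V : Type} [Finite V]

lemma adj_symm_mg {G : Multigraph V} {a b : V} (h : G.Adj a b) : G.Adj b a := by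
  unfold Multigraph.Adj at *
  rwa [Sym2.eq_swap]

lemma rtg_adj_symm {G : Multigraph V} {a b : V}
    (h : Relation.ReflTransGen G.Adj a b) : Relation.ReflTransGen G.Adj b a :=
  by haveI : Std.Symm G.Adj := ⟨fun _ _ hab => adj_symm_mg hab⟩
     exact Std.Symm.symm (r := Relation.ReflTransGen G.Adj) _ _ h

lemma connected_of_nc_one {G : Multigraph V} (hne : Nonempty V) (h : nc G.edges = 1) :
    G.Connected := by
  refine ⟨hne, fun u v => ?_⟩
  have := (nc_eq_one_iff hne).1 h u v
  exact this

lemma nc_one_of_connected {G : Multigraph V} (h : G.Connected) : nc G.edges = 1 :=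
  (nc_eq_one_iff h.1).2 h.2

/-- the zero split vector is always feasible -/
lemma feasibleSplit_zero (G : Multigraph V) (hconn : G.Connected) :
    FeasibleSplit G (fun _ => 0) := by
  refine ⟨V, inferInstance, G, id, hconn, ⟨Function.surjective_id, fun u v => ?_⟩, fun v => ?_⟩
  · rw [Sym2.map_id, Multiset.map_id]
  · have : (id ⁻¹' {v} : Set V) = {v} := by simp
    rw [this]
    simp

/-- extend a feasible split vector of G - r to G by splitting off a new copy of v along r -/
lemma feasibleSplit_extend {G : Multigraph V} {μ : V → ℕ} {v u : V}
    (hr : s(v,u) ∈ G.edges) (hμ : 1 ≤ μ v)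
    (h : FeasibleSplit (Multigraph.mk (G.edges.erase s(v,u)))
      (fun x => if x = v then μ v - 1 else μ x)) :
    FeasibleSplit G μ := by
  obtain ⟨W, hWfin, H, φ, hHconn, ⟨hsurj, hcnt⟩, hpre⟩ := h
  obtain ⟨w_u, hwu⟩ := hsurj u
  set W' := W ⊕ Unit with hW'
  set φ' : W' → V := Sum.elim φ (fun _ => v) with hφ'
  set newE : Sym2 W' := s(Sum.inl w_u, Sum.inr ()) with hnewE
  set H' : Multigraph W' := Multigraph.mk (newE ::ₘ H.edges.map (Sym2.map Sum.inl)) with hH'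
  have hmapH : H.edges.map (Sym2.map φ) = G.edges.erase s(v,u) :=
    homimage_map_eq (G := Multigraph.mk (G.edges.erase s(v,u))) ⟨hsurj, hcnt⟩
  have hcomp : Sym2.map φ' ∘ Sym2.map (Sum.inl : W → W') = Sym2.map φ := by
    funext e
    rw [Function.comp_apply, Sym2.map_map]
    rfl
  have hmap' : H'.edges.map (Sym2.map φ') = G.edges := by
    rw [hH']
    show (newE ::ₘ H.edges.map (Sym2.map Sum.inl)).map (Sym2.map φ') = G.edges
    rw [Multiset.map_cons, Multiset.map_map, hcomp, hmapH]
    have h1 : Sym2.map φ' newE = s(v,u) := by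
      rw [hnewE]
      show s(φ' (Sum.inl w_u), φ' (Sum.inr ())) = s(v,u)
      rw [hφ']
      simp [hwu]
    rw [h1]
    exact Multiset.cons_erase hr
  -- connectivity of H'
  have hadj_inl : ∀ a b : W, H.Adj a b → H'.Adj (Sum.inl a) (Sum.inl b) := by
    intro a b hab
    show s(Sum.inl a, Sum.inl b) ∈ H'.edges
    rw [hH']
    apply Multiset.mem_cons_of_mem
    have : Sym2.map (Sum.inl : W → W') s(a,b) = s(Sum.inl a, Sum.inl b) := by simp
    rw [← this]
    exact Multiset.mem_map_of_mem _ hab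
  have hconn_inl : ∀ a b : W, Relation.ReflTransGen H'.Adj (Sum.inl a) (Sum.inl b) := by
    intro a b
    exact Relation.ReflTransGen.lift Sum.inl (fun x y hxy => hadj_inl x y hxy) a b (hHconn.2 a b)
  have hadj_new : H'.Adj (Sum.inl w_u) (Sum.inr ()) := by
    show s(Sum.inl w_u, Sum.inr ()) ∈ H'.edges
    rw [hH']
    exact Multiset.mem_cons_self _ _
  have hconn' : H'.Connected := by
    refine ⟨⟨Sum.inr ()⟩, fun x y => ?_⟩
    have hx : ∀ z : W', Relation.ReflTransGen H'.Adj z (Sum.inr ()) := by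
      intro z
      match z with
      | Sum.inr () => exact Relation.ReflTransGen.refl
      | Sum.inl a =>
        exact Relation.ReflTransGen.tail (hconn_inl a w_u) hadj_new
    exact Relation.ReflTransGen.trans (hx x) (rtg_adj_symm (G := H') (hx y))
  -- preimage cardinalities
  have hWfin' : Finite W' := inferInstance
  have hpre' : ∀ x : V, Nat.card (φ' ⁻¹' {x}) = μ x + 1 := by
    intro x
    by_cases hx : x = v
    · rw [hx]
      have hset : φ' ⁻¹' {v} = (Sum.inl '' (φ ⁻¹' {v})) ∪ {Sum.inr ()} := by
        ext z
        match z with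
        | Sum.inl w =>
          simp only [Set.mem_preimage, Set.mem_singleton_iff, Set.mem_union, Set.mem_image]
          constructor
          · intro hz
            exact Or.inl ⟨w, hz, rfl⟩
          · rintro (⟨w', hw', hww'⟩ | habs)
            · cases hww'; exact hw'
            · exact absurd habs (by simp)
        | Sum.inr () => simp [hφ']
      rw [hset, Nat.card_coe_set_eq,
        Set.ncard_union_eq (by simp) (Set.toFinite _) (Set.toFinite _),
        Set.ncard_image_of_injective _ Sum.inl_injective, Set.ncard_singleton,
        ← Nat.card_coe_set_eq, hpre v]
      simp
      omega
    · have hset : φ' ⁻¹' {x} = Sum.inl '' (φ ⁻¹' {x}) := by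
        ext z
        match z with
        | Sum.inl w =>
          simp only [Set.mem_preimage, Set.mem_singleton_iff, Set.mem_image]
          constructor
          · intro hz; exact ⟨w, hz, rfl⟩
          · rintro ⟨w', hw', hww'⟩; cases hww'; exact hw'
        | Sum.inr () =>
          simp only [Set.mem_preimage, Set.mem_singleton_iff, Set.mem_image]
          constructor
          · intro hz; exact absurd hz.symm hx
          · rintro ⟨w', _, hww'⟩; exact absurd hww' (by simp)
      rw [hset, Nat.card_coe_set_eq, Set.ncard_image_of_injective _ Sum.inl_injective,
        ← Nat.card_coe_set_eq, hpre x]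
      simp [hx]
  exact ⟨W', hWfin', H', φ', hconn', ⟨fun x => ⟨Sum.inl (hsurj x).choose, by
      rw [hφ']; simp [(hsurj x).choose_spec]⟩, fun a b => by rw [hmap']⟩, hpre'⟩

end CC


namespace CC

open scoped Classical

variable {V : Type} [Finite V]

lemma touch_singleton (v : V) (e : Sym2 V) : touch ({v} : Set V) e ↔ v ∈ e := by
  unfold touch
  constructor
  · rintro ⟨x, hx, hxv⟩
    rw [Set.mem_singleton_iff] at hxv
    rwa [hxv] at hx
  · intro h
    exact ⟨v, h, rfl⟩

lemma msum_le_of_mem (μ : V → ℕ) {S : Set V} {v : V} (hv : v ∈ S) :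
    μ v ≤ ∑ᶠ x ∈ S, μ x := by
  have : Fintype V := Fintype.ofFinite V
  rw [msum_eq_finset]
  have hv' : v ∈ S.toFinset := Set.mem_toFinset.2 hv
  rw [← Finset.add_sum_erase _ μ hv']
  omega

lemma msum_if_mem (μ : V → ℕ) {S : Set V} {v : V} (hv : v ∈ S) (hμ : 1 ≤ μ v) :
    (∑ᶠ x ∈ S, (fun x => if x = v then μ v - 1 else μ x) x) + 1 = ∑ᶠ x ∈ S, μ x := by
  have : Fintype V := Fintype.ofFinite V
  rw [msum_eq_finset, msum_eq_finset]
  have hv' : v ∈ S.toFinset := Set.mem_toFinset.2 hv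
  rw [← Finset.add_sum_erase _ μ hv',
    ← Finset.add_sum_erase _ (fun x => if x = v then μ v - 1 else μ x) hv']
  have hrest : ∑ x ∈ S.toFinset.erase v, (fun x => if x = v then μ v - 1 else μ x) x =
      ∑ x ∈ S.toFinset.erase v, μ x := by
    apply Finset.sum_congr rfl
    intro x hx
    have hxv : x ≠ v := Finset.ne_of_mem_erase hx
    simp [hxv]
  rw [hrest]
  simp
  omega

lemma msum_if_not_mem (μ : V → ℕ) {S : Set V} {v : V} (hv : v ∉ S) :
    (∑ᶠ x ∈ S, (fun x => if x = v then μ v - 1 else μ x) x) = ∑ᶠ x ∈ S, μ x := by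
  apply finsum_mem_congr rfl
  intro x hx
  have : x ≠ v := fun h => hv (h ▸ hx)
  simp [this]

lemma total_if (μ : V → ℕ) {v : V} (hμ : 1 ≤ μ v) :
    (∑ᶠ x, (fun x => if x = v then μ v - 1 else μ x) x) + 1 = ∑ᶠ x, μ x := by
  have : Fintype V := Fintype.ofFinite V
  rw [finsum_eq_sum_of_fintype, finsum_eq_sum_of_fintype]
  have hv' : v ∈ (Finset.univ : Finset V) := Finset.mem_univ v
  rw [← Finset.add_sum_erase _ μ hv',
    ← Finset.add_sum_erase _ (fun x => if x = v then μ v - 1 else μ x) hv']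
  have hrest : ∑ x ∈ Finset.univ.erase v, (fun x => if x = v then μ v - 1 else μ x) x =
      ∑ x ∈ Finset.univ.erase v, μ x := by
    apply Finset.sum_congr rfl
    intro x hx
    have hxv : x ≠ v := Finset.ne_of_mem_erase hx
    simp [hxv]
  rw [hrest]
  simp
  omega

lemma total_zero {μ : V → ℕ} (h : (∑ᶠ x, μ x) = 0) : ∀ x, μ x = 0 := by
  have : Fintype V := Fintype.ofFinite V
  rw [finsum_eq_sum_of_fintype] at h
  intro x
  exact (Finset.sum_eq_zero_iff.1 h) x (Finset.mem_univ x)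

end CC


namespace CC

open scoped Classical

variable {V : Type} [Finite V]

theorem feasible_of_constraints (n : ℕ) :
    ∀ (G : Multigraph V), G.Connected → ∀ (μ : V → ℕ),
      (∑ᶠ x, μ x) ≤ n →
      (∀ S : Set V, (∑ᶠ v ∈ S, μ v) ≤ fP G.edges (touch S)) →
      FeasibleSplit G μ := by
  induction n with
  | zero =>
    intro G hconn μ hsum _
    have hz : ∀ x, μ x = 0 := total_zero (Nat.le_zero.1 hsum)
    have : μ = fun _ => 0 := funext hz
    rw [this]
    exact feasibleSplit_zero G hconn
  | succ n IH =>
    intro G hconn μ hsum hcon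
    by_cases hzero : (∑ᶠ x, μ x) = 0
    · have hz : ∀ x, μ x = 0 := total_zero hzero
      have : μ = fun _ => 0 := funext hz
      rw [this]
      exact feasibleSplit_zero G hconn
    -- pick v with μ v ≥ 1
    have hex : ∃ v, 1 ≤ μ v := by
      by_contra hne
      push_neg at hne
      exact hzero (by
        have : ∀ x, μ x = 0 := fun x => Nat.lt_one_iff.1 (hne x)
        have hfz : μ = fun _ => 0 := funext this
        rw [hfz]
        simp)
    obtain ⟨v, hv⟩ := hex
    have hNV : Nonempty V := hconn.1
    have hncE : nc G.edges = 1 := nc_one_of_connected hconn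
    -- tight sets avoiding v; maximal one
    set Tset : Set (Set V) := {S | (∑ᶠ x ∈ S, μ x) = fP G.edges (touch S) ∧ v ∉ S} with hTset
    have hTfin : Tset.Finite := Set.toFinite _
    have hTne : (∅ : Set V) ∈ Tset := by
      constructor
      · rw [msum_empty, fP_touch_empty hncE]
      · exact Set.notMem_empty v
    obtain ⟨S₀, hS₀mem, hS₀max⟩ := Finset.exists_max_image hTfin.toFinset
      (fun S => (Set.toFinite S).toFinset.card) ⟨∅, hTfin.mem_toFinset.2 hTne⟩
    rw [hTfin.mem_toFinset] at hS₀mem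
    obtain ⟨hS₀tight, hS₀v⟩ := hS₀mem
    -- union of tight sets avoiding v is contained in S₀
    have hsubS₀ : ∀ S : Set V, (∑ᶠ x ∈ S, μ x) = fP G.edges (touch S) → v ∉ S → S ⊆ S₀ := by
      intro S hStight hSv
      have hμeq := msum_union_inter μ S S₀
      have hc1 := hcon (S ∪ S₀)
      have hc2 := hcon (S ∩ S₀)
      have hfsub := fP_touch_union_inter hncE S S₀
      have htightU : (∑ᶠ x ∈ S ∪ S₀, μ x) = fP G.edges (touch (S ∪ S₀)) := by omega
      have hUv : v ∉ S ∪ S₀ := by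
        rintro (h | h)
        · exact hSv h
        · exact hS₀v h
      have hUmem : (S ∪ S₀) ∈ Tset := ⟨htightU, hUv⟩
      have hcard := hS₀max (S ∪ S₀) (hTfin.mem_toFinset.2 hUmem)
      have hsub : S₀ ⊆ S ∪ S₀ := Set.subset_union_right
      have hsubF : (Set.toFinite S₀).toFinset ⊆ (Set.toFinite (S ∪ S₀)).toFinset :=
        Set.Finite.toFinset_subset_toFinset.2 hsub
      have heqF : (Set.toFinite S₀).toFinset = (Set.toFinite (S ∪ S₀)).toFinset :=
        (Finset.eq_of_subset_of_card_le hsubF hcard)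
      have heq : S₀ = S ∪ S₀ := Set.Finite.toFinset_inj.1 heqF
      intro x hx
      rw [heq]
      exact Or.inl hx
    set Y := sel (fun e => ¬ touch S₀ e) G.edges with hY
    by_cases hgood : ∃ u : V, s(v,u) ∈ Y ∧ conn (Y.erase s(v,u)) v u
    · -- remove the good edge and recurse
      obtain ⟨u, hrY, hconnY⟩ := hgood
      have hrE : s(v,u) ∈ G.edges := Multiset.mem_of_le (sel_le _ _) hrY
      have hrnt : ¬ touch S₀ s(v,u) := (mem_sel.1 hrY).2
      have hconnE' : conn ((G.edges).erase s(v,u)) v u := by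
        apply conn_mono _ hconnY
        exact Multiset.erase_le_erase _ (sel_le _ _)
      have hnc1 : nc (G.edges.erase s(v,u)) = 1 := by
        rw [nc_erase_eq_of_conn hrE hconnE', hncE]
      set G' : Multigraph V := Multigraph.mk (G.edges.erase s(v,u)) with hG'
      have hconn' : G'.Connected := connected_of_nc_one hNV hnc1
      set μ' : V → ℕ := fun x => if x = v then μ v - 1 else μ x with hμ'
      have hsum' : (∑ᶠ x, μ' x) ≤ n := by
        have := total_if μ hv
        rw [hμ']
        omega
      have hcon' : ∀ S : Set V, (∑ᶠ x ∈ S, μ' x) ≤ fP G'.edges (touch S) := by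
        intro S
        have hfP_ge : fP G.edges (touch S) ≤ fP G'.edges (touch S) + 1 :=
          fP_erase_ge hncE hnc1 hrE (touch S)
        by_cases hvS : v ∈ S
        · have h1 := msum_if_mem μ hvS hv
          have h2 := hcon S
          rw [hμ']
          omega
        · have h1 := msum_if_not_mem μ hvS
          rw [hμ', h1]
          by_cases htight : (∑ᶠ x ∈ S, μ x) = fP G.edges (touch S)
          · -- S is tight, hence S ⊆ S₀ and the removed edge is harmless
            have hsub : S ⊆ S₀ := hsubS₀ S htight hvS
            have hnt : ¬ touch S s(v,u) := fun ht => hrnt (touch_mono hsub ht)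
            have hconn2 : conn ((sel (fun e => ¬ touch S e) G.edges).erase s(v,u)) v u := by
              apply conn_mono _ hconnY
              apply Multiset.erase_le_erase
              rw [hY]
              exact sel_le_sel (fun e he ht => he (touch_mono hsub ht)) _
            have := fP_erase_eq hncE hnc1 hrE hnt hconn2
            have hge : fP G'.edges (touch S) = fP (G.edges.erase s(v,u)) (touch S) := rfl
            omega
          · have := hcon S
            have hlt : (∑ᶠ x ∈ S, μ x) < fP G.edges (touch S) :=
              lt_of_le_of_ne (hcon S) htight
            omega
      have hfeas' := IH G' hconn' μ' hsum' hcon'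
      exact feasibleSplit_extend hrE hv hfeas'
    · -- contradiction: all edges at v leaving S₀ are bridges
      exfalso
      push_neg at hgood
      set D := sel (fun e => v ∈ e ∧ ¬ touch S₀ e) G.edges with hD
      have hDY : D ≤ Y := by
        rw [hD, hY]
        exact sel_le_sel (fun e he => he.2) _
      have hbr : ∀ a b : V, s(a,b) ∈ D → ¬ conn (Y.erase s(a,b)) a b := by
        intro a b hab hconn2
        have hmem := mem_sel.1 hab
        have hvab : v ∈ s(a,b) := hmem.2.1
        rw [Sym2.mem_iff] at hvab
        rcases hvab with rfl | rfl
        · exact hgood b (Multiset.mem_of_le hDY hab) hconn2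
        · apply hgood a
          · rw [Sym2.eq_swap]
            exact Multiset.mem_of_le hDY hab
          · rw [Sym2.eq_swap]
            exact conn_symm hconn2
      have hkey : nc (Y - D) = nc Y + Multiset.card D := nc_sub_bridges hDY hbr
      have hYD : sel (fun e => ¬ touch (insert v S₀) e) G.edges = Y - D := by
        ext x
        rw [Multiset.count_sub, count_sel, count_sel, count_sel]
        have htu : touch (insert v S₀) x ↔ touch S₀ x ∨ v ∈ x := by
          rw [← Set.union_singleton, touch_union, touch_singleton]
        by_cases h1 : touch S₀ x <;> by_cases h2 : v ∈ x <;>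
          simp [htu, h1, h2]
      have hcardD : Multiset.card (sel (touch (insert v S₀)) G.edges) =
          Multiset.card (sel (touch S₀) G.edges) + Multiset.card D := by
        have : sel (touch (insert v S₀)) G.edges = sel (touch S₀) G.edges + D := by
          ext x
          rw [Multiset.count_add, count_sel, count_sel, count_sel]
          have htu : touch (insert v S₀) x ↔ touch S₀ x ∨ v ∈ x := by
            rw [← Set.union_singleton, touch_union, touch_singleton]
          by_cases h1 : touch S₀ x <;> by_cases h2 : v ∈ x <;>
            simp [htu, h1, h2]
        rw [this, Multiset.card_add]
      have e1 := fP_eq hncE (touch S₀)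
      rw [← hY] at e1
      have e2 := fP_eq hncE (touch (insert v S₀))
      rw [hYD, hkey] at e2
      have hfPeq : fP G.edges (touch (insert v S₀)) = fP G.edges (touch S₀) := by omega
      have hmsum : (∑ᶠ x ∈ insert v S₀, μ x) = μ v + ∑ᶠ x ∈ S₀, μ x :=
        msum_insert μ hS₀v
      have hcontr := hcon (insert v S₀)
      rw [hfPeq, hmsum, ← hS₀tight] at hcontr
      omega

end CC


/-- The feasible split vectors of a connected multigraph `G` are exactly the integral points
of a polymatroid: there is a normalized, submodular, monotone `f : 2^V → ℤ_{≥0}` such that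
`μ` is a feasible split vector iff `Σ_{v ∈ S} μ(v) ≤ f(S)` for all `S ⊆ V`. -/
theorem feasibleSplit_polymatroid {V : Type} [Finite V]
    (hV : 2 ≤ Nat.card V)
    (G : Multigraph V) (hconn : Connected G) :
    ∃ f : Set V → ℕ, f ∅ = 0 ∧
      (∀ A B : Set V, f (A ∪ B) + f (A ∩ B) ≤ f A + f B) ∧
      (∀ A B : Set V, A ⊆ B → f A ≤ f B) ∧
      (∀ μ : V → ℕ, FeasibleSplit G μ ↔ ∀ S : Set V, (∑ᶠ v ∈ S, μ v) ≤ f S) := by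
  have hncE : CC.nc G.edges = 1 := CC.nc_one_of_connected hconn
  refine ⟨fun S => CC.fP G.edges (CC.touch S), CC.fP_touch_empty hncE,
    fun A B => CC.fP_touch_union_inter hncE A B,
    fun A B hAB => CC.fP_touch_mono hncE hAB,
    fun μ => ⟨fun hfeas S => CC.sum_le_fP_of_feasible hconn hfeas S,
      fun hcon => CC.feasible_of_constraints (∑ᶠ x, μ x) G hconn μ le_rfl hcon⟩⟩
end

section
/- Let G = (V, E) be a multigraph and k ∈ ℤ_{>0}. If G contains a k-trail, then G is a (k+1)-trail. -/
open Multigraph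



namespace KTrailAux

variable {V : Type}

/-- Edge multiset of the path through the listed vertices. -/
def pEdges : List V → Multiset (Sym2 V)
  | [] => 0
  | [_] => 0
  | a :: b :: l => s(a, b) ::ₘ pEdges (b :: l)

@[simp] lemma pEdges_nil : pEdges ([] : List V) = 0 := rfl
@[simp] lemma pEdges_single (a : V) : pEdges [a] = 0 := rfl
@[simp] lemma pEdges_cons_cons (a b : V) (l : List V) :
    pEdges (a :: b :: l) = s(a, b) ::ₘ pEdges (b :: l) := rfl

lemma pEdges_append_cons : ∀ (l₁ : List V) (a : V) (l₂ : List V),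
    pEdges (l₁ ++ a :: l₂) = pEdges (l₁ ++ [a]) + pEdges (a :: l₂)
  | [], a, l₂ => by simp
  | [x], a, l₂ => by simp
  | x :: y :: l₁, a, l₂ => by
      have ih := pEdges_append_cons (y :: l₁) a l₂
      simp only [List.cons_append, pEdges_cons_cons] at *
      rw [ih, Multiset.cons_add]

lemma pEdges_reverse_cons : ∀ (l : List V) (a : V),
    pEdges ((a :: l).reverse) = pEdges (a :: l)
  | [], a => by simp
  | b :: l, a => by
      have ih := pEdges_reverse_cons l b
      have h1 : (a :: b :: l).reverse = (b :: l).reverse ++ [a] := by simp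
      have h2 : (b :: l).reverse = l.reverse ++ [b] := by simp
      rw [h1, h2, List.append_assoc]
      show pEdges (l.reverse ++ b :: [a]) = _
      rw [pEdges_append_cons l.reverse b [a], ← h2, ih]
      simp only [pEdges_cons_cons, pEdges_single]
      rw [add_comm]
      simp [Sym2.eq_swap, Multiset.singleton_add]

/-- The walk `(a, l)` traverses vertices `a :: l`. -/
def wE (p : V × List V) : Multiset (Sym2 V) := pEdges (p.1 :: p.2)

/-- Merge two walks with the same start into one walk. -/
def mergeW (p q : V × List V) : V × List V :=
  match p.2.reverse with
  | [] => q
  | b :: r => (b, r ++ q.1 :: q.2)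

lemma wE_mergeW (p q : V × List V) (h : p.1 = q.1) :
    wE (mergeW p q) = wE p + wE q := by
  rcases hrev : p.2.reverse with _ | ⟨b, r⟩
  · have : p.2 = [] := by simpa using congrArg List.reverse hrev
    unfold mergeW
    rw [hrev]
    simp [wE, this]
  · unfold mergeW
    rw [hrev]
    show pEdges (b :: (r ++ q.1 :: q.2)) = _
    have h3 : b :: (r ++ q.1 :: q.2) = (b :: r) ++ q.1 :: q.2 := by simp
    rw [h3, pEdges_append_cons (b :: r) q.1 q.2, ← hrev]
    have h4 : p.2.reverse ++ [q.1] = (q.1 :: p.2).reverse := by simp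
    rw [h4, pEdges_reverse_cons]
    simp [wE, h]

lemma dedupe : ∀ (n : ℕ) (L : List (V × List V)), L.length ≤ n →
    ∃ L' : List (V × List V), (L'.map Prod.fst).Nodup ∧
      (L'.map wE).sum = (L.map wE).sum ∧ L'.length ≤ L.length := by
  intro n
  induction n with
  | zero =>
    intro L hL
    have : L = [] := List.length_eq_zero_iff.1 (Nat.le_zero.1 hL)
    subst this
    exact ⟨[], by simp, by simp, by simp⟩
  | succ n ih =>
    intro L hL
    match L with
    | [] => exact ⟨[], by simp, by simp, by simp⟩
    | p :: T =>
      have hTn : T.length ≤ n := by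
        simp only [List.length_cons] at hL; omega
      obtain ⟨T', hnd, hsum, hlen⟩ := ih T hTn
      by_cases hp : p.1 ∈ T'.map Prod.fst
      · obtain ⟨q, hqmem, hq⟩ := List.mem_map.1 hp
        obtain ⟨s, t, rfl⟩ := List.append_of_mem hqmem
        have hlen2 : (mergeW p q :: (s ++ t)).length ≤ n := by
          simp only [List.length_cons, List.length_append] at hlen ⊢
          omega
        obtain ⟨L'', h1, h2, h3⟩ := ih (mergeW p q :: (s ++ t)) hlen2
        refine ⟨L'', h1, ?_, ?_⟩
        · rw [h2]
          simp only [List.map_cons, List.map_append, List.sum_cons, List.sum_append] at *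
          rw [wE_mergeW p q hq.symm]
          rw [← hsum]
          abel
        · simp only [List.length_cons, List.length_append] at h3 hlen ⊢
          omega
      · refine ⟨p :: T', ?_, by simp [hsum], by simpa using hlen⟩
        simp only [List.map_cons, List.nodup_cons]
        exact ⟨hp, hnd⟩

lemma exists_decomp (D : Multiset (Sym2 V)) :
    ∃ L : List (V × List V), (L.map Prod.fst).Nodup ∧ (L.map wE).sum = D := by
  induction D using Multiset.induction with
  | empty => exact ⟨[], by simp, by simp⟩
  | cons e D ih =>
    obtain ⟨L, hnd, hsum⟩ := ih
    induction e using Sym2.ind with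
    | _ u v =>
      obtain ⟨L', h1, h2, _⟩ := dedupe ((u, [v]) :: L).length ((u, [v]) :: L) le_rfl
      refine ⟨L', h1, ?_⟩
      rw [h2]
      simp [wE, hsum]


open Classical in
/-- Weight of vertex `v` in edge `e` (same as used in `deg`). -/
noncomputable def wt {V : Type} (v : V) (e : Sym2 V) : ℕ :=
  if e = Sym2.diag v then 2 else if v ∈ e then 1 else 0

lemma deg_eq_sum {V : Type} (G : Multigraph V) (v : V) :
    G.deg v = (G.edges.map (wt v)).sum := by
  classical
  unfold Multigraph.deg
  refine congrArg Multiset.sum (Multiset.map_congr rfl ?_)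
  intro e _
  by_cases h1 : e = Sym2.diag v
  · simp [wt, h1]
  · by_cases h2 : v ∈ e <;> simp [wt, h1, h2]

lemma wt_map_some {W : Type} (w : W) (e : Sym2 W) :
    wt (some w) (Sym2.map some e) = wt w e := by
  induction e using Sym2.ind with
  | _ x y =>
    rw [Sym2.map_pair_eq]
    have h1 : (s(some x, some y) = Sym2.diag (some w)) ↔ (s(x, y) = Sym2.diag w) := by
      simp [Sym2.diag, Sym2.eq_iff]
    have h2 : ((some w : Option W) ∈ s(some x, some y)) ↔ w ∈ s(x, y) := by
      simp [Sym2.mem_iff]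
    unfold wt
    by_cases hd : s(x, y) = Sym2.diag w
    · rw [if_pos (h1.2 hd), if_pos hd]
    · rw [if_neg (fun hc => hd (h1.1 hc)), if_neg hd]
      by_cases hm2 : w ∈ s(x, y)
      · rw [if_pos (h2.2 hm2), if_pos hm2]
      · rw [if_neg (fun hc => hm2 (h2.1 hc)), if_neg hm2]

lemma wt_none_map_some {W : Type} (e : Sym2 W) :
    wt (none : Option W) (Sym2.map some e) = 0 := by
  induction e using Sym2.ind with
  | _ x y =>
    rw [Sym2.map_pair_eq]
    have h1 : ¬ (s(some x, some y) = Sym2.diag (none : Option W)) := by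
      simp [Sym2.diag, Sym2.eq_iff]
    have h2 : ¬ ((none : Option W) ∈ s(some x, some y)) := by
      simp [Sym2.mem_iff]
    unfold wt
    rw [if_neg h1, if_neg h2]

open Classical in
lemma wt_some_new {W : Type} (w w₀ : W) :
    wt (some w) s(some w₀, (none : Option W)) = if w = w₀ then 1 else 0 := by
  have h1 : ¬ (s(some w₀, (none : Option W)) = Sym2.diag (some w)) := by
    simp [Sym2.diag, Sym2.eq_iff]
  unfold wt
  rw [if_neg h1]
  by_cases hw : w = w₀
  · subst hw; simp [Sym2.mem_iff]
  · simp [Sym2.mem_iff, hw]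

lemma wt_none_new {W : Type} (w₀ : W) :
    wt (none : Option W) s(some w₀, (none : Option W)) = 1 := by
  have h1 : ¬ (s(some w₀, (none : Option W)) = Sym2.diag (none : Option W)) := by
    simp [Sym2.diag, Sym2.eq_iff]
  unfold wt
  rw [if_neg h1, if_pos]
  simp [Sym2.mem_iff]

open Classical in
def Matches {V W : Type} (U : Multiset (Sym2 V)) (H : Multigraph W) (φ : W → V) : Prop :=
  ∀ u v : V, ((H.edges.map (Sym2.map φ)).count s(u, v)) = U.count s(u, v)

open Classical in
lemma attach_edge {V W : Type} (U : Multiset (Sym2 V))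
    (H : Multigraph W) (φ : W → V) (w₀ : W) (v : V)
    (hc : Connected H) (hm : Matches U H φ) :
    ∃ (H' : Multigraph (Option W)) (φ' : Option W → V),
      Connected H' ∧ Matches (s(φ w₀, v) ::ₘ U) H' φ' ∧
      (∀ w, φ' (some w) = φ w) ∧ φ' none = v ∧
      (∀ w, H'.deg (some w) = H.deg w + (if w = w₀ then 1 else 0)) ∧
      H'.deg none = 1 := by
  classical
  set H' : Multigraph (Option W) :=
    ⟨H.edges.map (Sym2.map some) + {s(some w₀, none)}⟩ with hH'
  set φ' : Option W → V := fun o => o.elim v φ with hφ'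
  have hnew : s(some w₀, none) ∈ H'.edges := by
    simp [hH']
  have hlift : ∀ a b : W, H.Adj a b → H'.Adj (some a) (some b) := by
    intro a b hab
    show s(some a, some b) ∈ H'.edges
    rw [← Sym2.map_pair_eq some a b]
    exact Multiset.mem_add.2 (Or.inl (Multiset.mem_map_of_mem _ hab))
  have hsymm : Symmetric H'.Adj := by
    intro a b hab
    show s(b, a) ∈ H'.edges
    rwa [Sym2.eq_swap]
  have hreach : ∀ o : Option W, Relation.ReflTransGen H'.Adj o (some w₀) := by
    intro o
    match o with
    | none => exact Relation.ReflTransGen.single (hsymm hnew)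
    | some w =>
      exact Relation.ReflTransGen.lift some (fun a b h => hlift a b h) _ _ (hc.2 w w₀)
  have hedges : H'.edges = H.edges.map (Sym2.map some) + {s(some w₀, none)} := rfl
  refine ⟨H', φ', ⟨⟨none⟩, ?_⟩, ?_, fun w => rfl, rfl, ?_, ?_⟩
  · intro a b
    exact (hreach a).trans (by haveI : Std.Symm H'.Adj := ⟨hsymm⟩; exact Std.Symm.symm _ _ (hreach b))
  · unfold Matches
    intro u u'
    have hcomp : (Sym2.map φ') ∘ (Sym2.map some) = Sym2.map φ := by
      funext e
      simp only [Function.comp_apply, Sym2.map_map]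
      simp [hφ']
    rw [hedges, Multiset.map_add, Multiset.map_map, hcomp, Multiset.map_singleton,
      Multiset.count_add, hm u u']
    have hmapped : Sym2.map φ' s(some w₀, none) = s(φ w₀, v) := by
      rw [Sym2.map_pair_eq]
      simp [hφ']
    rw [hmapped, Multiset.count_singleton, Multiset.count_cons]
  · intro w
    rw [deg_eq_sum, deg_eq_sum, hedges, Multiset.map_add, Multiset.sum_add,
      Multiset.map_map, Multiset.map_singleton, Multiset.sum_singleton]
    simp only [Function.comp]
    rw [Multiset.map_congr rfl (fun e _ => wt_map_some w e), wt_some_new]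
  · rw [deg_eq_sum, hedges, Multiset.map_add, Multiset.sum_add,
      Multiset.map_map, Multiset.map_singleton, Multiset.sum_singleton]
    simp only [Function.comp]
    rw [Multiset.map_congr rfl (fun e _ => wt_none_map_some e), wt_none_new]
    simp

open Classical in
lemma attach_walk {V : Type} :
    ∀ (l : List V) (U : Multiset (Sym2 V)) (W : Type) (_ : Finite W)
      (H : Multigraph W) (φ : W → V) (w₀ : W),
      Connected H → Matches U H φ →
      ∃ (W₂ : Type) (_ : Finite W₂) (H₂ : Multigraph W₂) (φ₂ : W₂ → V) (ι : W → W₂),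
        Connected H₂ ∧ Matches (U + pEdges (φ w₀ :: l)) H₂ φ₂ ∧
        (∀ w, φ₂ (ι w) = φ w) ∧
        (∀ w, H₂.deg (ι w) ≤ H.deg w + (if w = w₀ then 1 else 0)) ∧
        (∀ x, (∀ w, ι w ≠ x) → H₂.deg x ≤ 2) := by
  intro l
  induction l with
  | nil =>
    intro U W fin H φ w₀ hc hm
    refine ⟨W, fin, H, φ, id, hc, by simpa using hm, fun w => rfl, fun w => le_self_add, ?_⟩
    intro x hx
    exact absurd rfl (hx x)
  | cons v l ih =>
    intro U W fin H φ w₀ hc hm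
    obtain ⟨H', φ', hc', hm', hsome, hnone, hdegsome, hdegnone⟩ :=
      attach_edge U H φ w₀ v hc hm
    haveI := fin
    haveI : Finite (Option W) := by
      haveI := Fintype.ofFinite W
      infer_instance
    obtain ⟨W₂, fin₂, H₂, φ₂, ι', hc₂, hm₂, hφ₂, hdeg₂, hnew₂⟩ :=
      ih (s(φ w₀, v) ::ₘ U) (Option W) inferInstance H' φ' none hc' hm'
    refine ⟨W₂, fin₂, H₂, φ₂, ι' ∘ some, hc₂, ?_, ?_, ?_, ?_⟩
    · rw [hnone] at hm₂
      have : (s(φ w₀, v) ::ₘ U) + pEdges (v :: l) = U + pEdges (φ w₀ :: v :: l) := by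
        rw [pEdges_cons_cons, Multiset.cons_add, ← Multiset.add_cons]
      rwa [this] at hm₂
    · intro w
      have h1 := hφ₂ (some w)
      rw [hsome w] at h1
      exact h1
    · intro w
      have h1 := hdeg₂ (some w)
      rw [if_neg (Option.some_ne_none w), add_zero, hdegsome w] at h1
      exact h1
    · intro x hx
      by_cases hex : ∃ o : Option W, ι' o = x
      · obtain ⟨o, rfl⟩ := hex
        match o with
        | some w => exact absurd rfl (hx w)
        | none =>
          have h1 := hdeg₂ none
          rw [if_pos rfl, hdegnone] at h1
          exact h1
      · exact hnew₂ x (fun o => fun h => hex ⟨o, h⟩)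

open Classical in
lemma attach_walks {V : Type} (k : ℕ) (hk : 1 ≤ k) :
    ∀ (L : List (V × List V)) (U : Multiset (Sym2 V)) (W : Type) (_ : Finite W)
      (H : Multigraph W) (φ : W → V),
      (L.map Prod.fst).Nodup →
      Connected H → Matches U H φ → Function.Surjective φ →
      (∀ w, H.deg w ≤ k + 1) →
      (∀ p ∈ L, ∃ w, φ w = p.1 ∧ H.deg w ≤ k) →
      ∃ (W₂ : Type) (_ : Finite W₂) (H₂ : Multigraph W₂) (φ₂ : W₂ → V),
        Connected H₂ ∧ Matches (U + (L.map wE).sum) H₂ φ₂ ∧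
        Function.Surjective φ₂ ∧ (∀ w, H₂.deg w ≤ k + 1) := by
  intro L
  induction L with
  | nil =>
    intro U W fin H φ _ hc hm hsurj hbound _
    exact ⟨W, fin, H, φ, hc, by simpa using hm, hsurj, hbound⟩
  | cons p T ih =>
    intro U W fin H φ hnd hc hm hsurj hbound havail
    obtain ⟨w₀, hw₀, hdegw₀⟩ := havail p List.mem_cons_self
    obtain ⟨W₂, fin₂, H₂, φ₂, ι, hc₂, hm₂, hφι, hdegι, hnew⟩ :=
      attach_walk p.2 U W fin H φ w₀ hc hm
    rw [hw₀] at hm₂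
    have hbound₂ : ∀ x, H₂.deg x ≤ k + 1 := by
      intro x
      by_cases hex : ∃ w, ι w = x
      · obtain ⟨w, rfl⟩ := hex
        have := hdegι w
        by_cases hww : w = w₀
        · subst hww
          rw [if_pos rfl] at this
          omega
        · rw [if_neg hww] at this
          have := hbound w
          omega
      · have := hnew x (fun w h => hex ⟨w, h⟩)
        omega
    have hsurj₂ : Function.Surjective φ₂ := by
      intro v
      obtain ⟨w, hw⟩ := hsurj v
      exact ⟨ι w, by rw [hφι w, hw]⟩
    have havail₂ : ∀ q ∈ T, ∃ w, φ₂ w = q.1 ∧ H₂.deg w ≤ k := by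
      intro q hq
      obtain ⟨w, hw, hdw⟩ := havail q (List.mem_cons_of_mem p hq)
      refine ⟨ι w, by rw [hφι w, hw], ?_⟩
      have hwne : w ≠ w₀ := by
        intro h
        subst h
        have hne : p.1 ∉ T.map Prod.fst := (List.nodup_cons.1 hnd).1
        exact hne (by rw [← hw₀, hw] at *; exact List.mem_map.2 ⟨q, hq, hw⟩)
      have := hdegι w
      rw [if_neg hwne] at this
      omega
    obtain ⟨W₃, fin₃, H₃, φ₃, hc₃, hm₃, hsurj₃, hbound₃⟩ :=
      ih (U + wE p) W₂ fin₂ H₂ φ₂ (List.nodup_cons.1 hnd).2 hc₂ hm₂ hsurj₂ hbound₂ havail₂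
    refine ⟨W₃, fin₃, H₃, φ₃, hc₃, ?_, hsurj₃, hbound₃⟩
    have : U + wE p + (T.map wE).sum = U + ((p :: T).map wE).sum := by
      simp [add_assoc]
    rwa [this] at hm₃

end KTrailAux

open KTrailAux in
/-- If `G` contains a `k`-trail then `G` is a `(k+1)`-trail. -/
theorem containsKTrail_isSuccTrail {V : Type} [Finite V]
    (hV : 2 ≤ Nat.card V)
    (G : Multigraph V) (k : ℕ) (hk : 1 ≤ k)
    (h : ContainsKTrail G k) :
    IsKTrail G (k + 1) := by
  classical
  obtain ⟨U, hU, W, fin, H, φ, hc, hdeg, hsurj, hcount⟩ := h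
  have hm : Matches U H φ := fun u v => (hcount u v).symm
  obtain ⟨L, hnd, hsum⟩ := exists_decomp (G.edges - U)
  have hbound : ∀ w, H.deg w ≤ k + 1 := fun w => le_trans (hdeg w) (Nat.le_succ k)
  have havail : ∀ p ∈ L, ∃ w, φ w = p.1 ∧ H.deg w ≤ k := by
    intro p _
    obtain ⟨w, hw⟩ := hsurj p.1
    exact ⟨w, hw, hdeg w⟩
  obtain ⟨W₂, fin₂, H₂, φ₂, hc₂, hm₂, hsurj₂, hbound₂⟩ :=
    attach_walks k hk L U W fin H φ hnd hc hm hsurj hbound havail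
  rw [hsum] at hm₂
  have hUE : U + (G.edges - U) = G.edges := by
    rw [add_comm]
    exact tsub_add_cancel_of_le hU
  rw [hUE] at hm₂
  exact ⟨W₂, fin₂, H₂, φ₂, hc₂, hbound₂, hsurj₂, fun u v => (hm₂ u v).symm⟩
end
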